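/- arXiv:2207.13216 — 9 statements merged into one kernel-verified Lean document; each statement's English description precedes it below -/
import Mathlib

section
/- (Continuous analogue of Lemma 3.2 of 'Stability of concordance embeddings'.) If P is compact Hausdorff, then the space CF(P,M) of continuous concordance maps of P in M is contractible; in fact CF(P,M) deformation retracts onto the one-point subspace consisting of the inclusion P×I ⊆ M×I. -/
/-!
STATEMENT 0 (continuous analogue of Lemma 3.2): if `P ⊆ M` is compact Hausdorff, the space
`CF(P,M)` of continuous concordance maps of `P` in `M` (relative to `A ⊆ P`), with the
compact-open topology, is contractible; in fact it deformation retracts onto the one-point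
subspace consisting of the inclusion `P × I ⊆ M × I`.
-/

open Set unitInterval Topology

noncomputable section

/-- `φ : P × I → M × I` is a continuous concordance map of `P` in `M` relative to `A`. -/
def IsConcMap {M : Type} [TopologicalSpace M] (P A : Set M) (φ : ↥P × ↥I → M × ↥I) : Prop :=
  Continuous φ ∧
  (∀ x : ↥P × ↥I, ((φ x).2 = 0 ↔ x.2 = 0) ∧ ((φ x).2 = 1 ↔ x.2 = 1)) ∧
  ∃ U : Set (↥P × ↥I), IsOpen U ∧
    ({x : ↥P × ↥I | x.2 = 0} ∪ {x : ↥P × ↥I | (x.1 : M) ∈ A}) ⊆ U ∧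
    ∀ x ∈ U, φ x = ((x.1 : M), x.2)

namespace Stmt0Aux

lemma I_eq0 {t : ↥I} : t = 0 ↔ (t : ℝ) = 0 :=
  ⟨fun h => by rw [h]; rfl, fun h => Subtype.ext h⟩

lemma I_eq1 {t : ↥I} : t = 1 ↔ (t : ℝ) = 1 :=
  ⟨fun h => by rw [h]; rfl, fun h => Subtype.ext h⟩

/-- Speed of the "straighten the level" part of the homotopy. -/
def sig (s : ℝ) : ℝ := min (2 * s) 1

/-- Speed of the "pull down" part of the homotopy. -/
def lam (s : ℝ) : ℝ := min (2 - 2 * s) 1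

lemma sig_mem {s : ℝ} (hs : s ∈ I) : sig s ∈ I :=
  ⟨le_min (by linarith [hs.1]) zero_le_one, min_le_right _ _⟩

lemma lam_mem {s : ℝ} (hs : s ∈ I) : lam s ∈ I :=
  ⟨le_min (by linarith [hs.2]) zero_le_one, min_le_right _ _⟩

lemma sig_cont : Continuous sig :=
  ((continuous_const.mul continuous_id).min continuous_const)

lemma lam_cont : Continuous lam :=
  ((continuous_const.sub (continuous_const.mul continuous_id)).min continuous_const)

lemma lam_eq_one {s : ℝ} (h : 2 * s ≤ 1) : lam s = 1 := by
  unfold lam; exact min_eq_right (by linarith)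

lemma sig_eq_one {s : ℝ} (h : 1 ≤ 2 * s) : sig s = 1 := by
  unfold sig; exact min_eq_right h

lemma key {s : ℝ} (hs : s ∈ I) : (1 - sig s) * lam s + sig s = 1 := by
  rcases le_total (2 * s) 1 with h | h
  · rw [lam_eq_one h]; ring
  · rw [sig_eq_one h]; ring

lemma sig_zero : sig 0 = 0 := by norm_num [sig]
lemma sig_one : sig 1 = 1 := by norm_num [sig]
lemma lam_zero : lam 0 = 1 := by norm_num [lam]
lemma lam_one : lam 1 = 0 := by norm_num [lam]

/-- The reparametrization of the interval coordinate. -/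
def rp (s t : ↥I) : ↥I :=
  ⟨lam s * t, mul_nonneg (lam_mem s.2).1 t.2.1,
    le_trans (mul_le_mul (lam_mem s.2).2 t.2.2 t.2.1 zero_le_one) (by norm_num)⟩

lemma rp_coe (s t : ↥I) : (rp s t : ℝ) = lam s * t := rfl

lemma rp_zero (s : ↥I) : rp s 0 = 0 := by
  apply Subtype.ext
  show lam (s : ℝ) * ((0 : ↥I) : ℝ) = ((0 : ↥I) : ℝ)
  norm_num

lemma rp_cont : Continuous fun z : ↥I × ↥I => rp z.1 z.2 := by
  apply Continuous.subtype_mk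
  exact (lam_cont.comp (continuous_subtype_val.comp continuous_fst)).mul
    (continuous_subtype_val.comp continuous_snd)

lemma combo_mem {c a b : ℝ} (hc : c ∈ I) (ha : a ∈ I) (hb : b ∈ I) :
    (1 - c) * a + c * b ∈ I := by
  obtain ⟨h1, h2⟩ := hc; obtain ⟨h3, h4⟩ := ha; obtain ⟨h5, h6⟩ := hb
  constructor
  · nlinarith
  · nlinarith

variable {M : Type} [TopologicalSpace M] (P A : Set M)

/-- The homotopy, at stage `s`, applied to `φ`. -/
def Haux (φ : C(↥P × ↥I, M × ↥I)) (s : ↥I) : C(↥P × ↥I, M × ↥I) :=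
  ⟨fun x => ((φ (x.1, rp s x.2)).1,
      ⟨(1 - sig s) * ((φ (x.1, rp s x.2)).2 : ℝ) + sig s * (x.2 : ℝ),
        combo_mem (sig_mem s.2) (φ (x.1, rp s x.2)).2.2 x.2.2⟩), by
    have h1 : Continuous fun x : ↥P × ↥I => φ (x.1, rp s x.2) :=
      φ.continuous.comp (continuous_fst.prodMk
        (rp_cont.comp (continuous_const.prodMk continuous_snd)))
    exact (continuous_fst.comp h1).prodMk (Continuous.subtype_mk
      ((continuous_const.mul (continuous_subtype_val.comp (continuous_snd.comp h1))).add
        (continuous_const.mul (continuous_subtype_val.comp continuous_snd))) _)⟩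

lemma Haux_isConc (φ : C(↥P × ↥I, M × ↥I)) (hφ : IsConcMap P A ⇑φ) (s : ↥I) :
    IsConcMap P A ⇑(Haux P φ s) := by
  obtain ⟨-, hend, U, hUo, hUs, hUe⟩ := hφ
  refine ⟨(Haux P φ s).continuous, ?_, ?_⟩
  · rintro ⟨p, t⟩
    have hσ0 : 0 ≤ sig (s : ℝ) := (sig_mem s.2).1
    have hσ1 : sig (s : ℝ) ≤ 1 := (sig_mem s.2).2
    have hg0 : 0 ≤ ((φ (p, rp s t)).2 : ℝ) := (φ (p, rp s t)).2.2.1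
    have hg1 : ((φ (p, rp s t)).2 : ℝ) ≤ 1 := (φ (p, rp s t)).2.2.2
    have ht0 : 0 ≤ (t : ℝ) := t.2.1
    have ht1 : (t : ℝ) ≤ 1 := t.2.2
    have hgz : ((φ (p, rp s t)).2 : ℝ) = 0 ↔ ((rp s t : ↥I) : ℝ) = 0 :=
      I_eq0.symm.trans ((hend (p, rp s t)).1.trans I_eq0)
    have hgo : ((φ (p, rp s t)).2 : ℝ) = 1 ↔ ((rp s t : ↥I) : ℝ) = 1 :=
      I_eq1.symm.trans ((hend (p, rp s t)).2.trans I_eq1)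
    have hs0 : 0 ≤ (s : ℝ) := s.2.1
    have hs1 : (s : ℝ) ≤ 1 := s.2.2
    constructor
    · constructor
      · intro h
        have h' : (1 - sig (s : ℝ)) * ((φ (p, rp s t)).2 : ℝ) + sig (s : ℝ) * (t : ℝ)
            = (0 : ℝ) := congrArg Subtype.val h
        apply Subtype.ext
        show (t : ℝ) = 0
        rcases eq_or_lt_of_le hs0 with hs | hs
        · have hσ : sig (s : ℝ) = 0 := by rw [← hs]; exact sig_zero
          have hl : lam (s : ℝ) = 1 := by rw [← hs]; exact lam_zero
          rw [hσ] at h'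
          have hg : ((φ (p, rp s t)).2 : ℝ) = 0 := by linarith
          have := hgz.mp hg
          rw [rp_coe, hl, one_mul] at this
          exact this
        · have hσpos : 0 < sig (s : ℝ) := lt_min (by linarith) one_pos
          have h2 : sig (s : ℝ) * (t : ℝ) = 0 := by
            nlinarith [mul_nonneg (sub_nonneg.mpr hσ1) hg0, mul_nonneg hσ0 ht0]
          exact (mul_eq_zero.mp h2).resolve_left (ne_of_gt hσpos)
      · intro h
        have ht' : (t : ℝ) = 0 := congrArg Subtype.val h
        apply Subtype.ext
        show (1 - sig (s : ℝ)) * ((φ (p, rp s t)).2 : ℝ) + sig (s : ℝ) * (t : ℝ) = (0 : ℝ)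
        have hg : ((φ (p, rp s t)).2 : ℝ) = 0 := by
          apply hgz.mpr
          rw [rp_coe, ht', mul_zero]
        rw [hg, ht']; ring
    · constructor
      · intro h
        have h' : (1 - sig (s : ℝ)) * ((φ (p, rp s t)).2 : ℝ) + sig (s : ℝ) * (t : ℝ)
            = (1 : ℝ) := congrArg Subtype.val h
        apply Subtype.ext
        show (t : ℝ) = 1
        rcases eq_or_lt_of_le hs0 with hs | hs
        · have hσ : sig (s : ℝ) = 0 := by rw [← hs]; exact sig_zero
          have hl : lam (s : ℝ) = 1 := by rw [← hs]; exact lam_zero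
          rw [hσ] at h'
          have hg : ((φ (p, rp s t)).2 : ℝ) = 1 := by linarith
          have := hgo.mp hg
          rw [rp_coe, hl, one_mul] at this
          exact this
        · have hσpos : 0 < sig (s : ℝ) := lt_min (by linarith) one_pos
          have h2 : sig (s : ℝ) * (1 - (t : ℝ)) = 0 := by
            nlinarith [mul_nonneg (sub_nonneg.mpr hσ1) (sub_nonneg.mpr hg1),
              mul_nonneg hσ0 (sub_nonneg.mpr ht1)]
          have := (mul_eq_zero.mp h2).resolve_left (ne_of_gt hσpos)
          linarith
      · intro h
        have ht' : (t : ℝ) = 1 := congrArg Subtype.val h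
        apply Subtype.ext
        show (1 - sig (s : ℝ)) * ((φ (p, rp s t)).2 : ℝ) + sig (s : ℝ) * (t : ℝ) = (1 : ℝ)
        rcases eq_or_lt_of_le hσ1 with hσ | hσ
        · rw [← hσ, ht']; ring
        · have h2s : 2 * (s : ℝ) < 1 := by
            by_contra hc
            push_neg at hc
            have := sig_eq_one hc
            linarith
          have hl : lam (s : ℝ) = 1 := lam_eq_one (by linarith)
          have hg : ((φ (p, rp s t)).2 : ℝ) = 1 := by
            apply hgo.mpr
            rw [rp_coe, hl, one_mul, ht']
          rw [hg, ht']; ring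
  · refine ⟨(fun x : ↥P × ↥I => (x.1, rp s x.2)) ⁻¹' U, ?_, ?_, ?_⟩
    · exact hUo.preimage (continuous_fst.prodMk
        (rp_cont.comp (continuous_const.prodMk continuous_snd)))
    · rintro ⟨p, t⟩ (hx | hx)
      · apply hUs
        exact Or.inl (show rp s t = 0 by rw [show t = 0 from hx]; exact rp_zero s)
      · exact hUs (Or.inr hx)
    · intro x hx
      have heq : φ (x.1, rp s x.2) = ((x.1 : M), rp s x.2) := hUe _ hx
      refine Prod.ext ?_ ?_
      · show (φ (x.1, rp s x.2)).1 = (x.1 : M)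
        rw [heq]
      · apply Subtype.ext
        show (1 - sig (s : ℝ)) * ((φ (x.1, rp s x.2)).2 : ℝ) + sig (s : ℝ) * (x.2 : ℝ)
            = (x.2 : ℝ)
        rw [heq]
        show (1 - sig (s : ℝ)) * ((rp s x.2 : ↥I) : ℝ) + sig (s : ℝ) * (x.2 : ℝ) = (x.2 : ℝ)
        rw [rp_coe]
        linear_combination (x.2 : ℝ) * key s.2

lemma Haux_zero (φ : C(↥P × ↥I, M × ↥I)) : Haux P φ 0 = φ := by
  apply ContinuousMap.ext
  intro x
  have h : rp 0 x.2 = x.2 := by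
    apply Subtype.ext
    show lam ((0 : ↥I) : ℝ) * (x.2 : ℝ) = (x.2 : ℝ)
    rw [show ((0 : ↥I) : ℝ) = 0 from rfl, lam_zero, one_mul]
  refine Prod.ext ?_ ?_
  · show (φ (x.1, rp 0 x.2)).1 = (φ x).1
    rw [h]
  · apply Subtype.ext
    show (1 - sig ((0 : ↥I) : ℝ)) * ((φ (x.1, rp 0 x.2)).2 : ℝ)
        + sig ((0 : ↥I) : ℝ) * (x.2 : ℝ) = ((φ x).2 : ℝ)
    rw [h, show ((0 : ↥I) : ℝ) = 0 from rfl, sig_zero]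
    show (1 - 0) * ((φ x).2 : ℝ) + 0 * (x.2 : ℝ) = ((φ x).2 : ℝ)
    ring

lemma Haux_one (φ : C(↥P × ↥I, M × ↥I)) (hφ : IsConcMap P A ⇑φ) (x : ↥P × ↥I) :
    Haux P φ 1 x = ((x.1 : M), x.2) := by
  obtain ⟨-, -, U, hUo, hUs, hUe⟩ := hφ
  have hr : rp 1 x.2 = 0 := by
    apply Subtype.ext
    show lam ((1 : ↥I) : ℝ) * (x.2 : ℝ) = ((0 : ↥I) : ℝ)
    rw [show ((1 : ↥I) : ℝ) = 1 from rfl, lam_one, zero_mul]; rfl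
  have hx0 : φ (x.1, (0 : ↥I)) = ((x.1 : M), (0 : ↥I)) :=
    hUe _ (hUs (Or.inl rfl))
  refine Prod.ext ?_ ?_
  · show (φ (x.1, rp 1 x.2)).1 = (x.1 : M)
    rw [hr, hx0]
  · apply Subtype.ext
    show (1 - sig ((1 : ↥I) : ℝ)) * ((φ (x.1, rp 1 x.2)).2 : ℝ)
        + sig ((1 : ↥I) : ℝ) * (x.2 : ℝ) = (x.2 : ℝ)
    rw [show ((1 : ↥I) : ℝ) = 1 from rfl, sig_one]
    ring

end Stmt0Aux

open Stmt0Aux in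
theorem statement0 {M : Type} [TopologicalSpace M] (P A : Set M) (hAP : A ⊆ P)
    (hPcompact : IsCompact P) (hPt2 : T2Space ↥P) :
    ContractibleSpace {φ : C(↥P × ↥I, M × ↥I) // IsConcMap P A ⇑φ} ∧
    ∃ (inc : {φ : C(↥P × ↥I, M × ↥I) // IsConcMap P A ⇑φ})
      (H : C({φ : C(↥P × ↥I, M × ↥I) // IsConcMap P A ⇑φ} × ↥I,
             {φ : C(↥P × ↥I, M × ↥I) // IsConcMap P A ⇑φ})),
      (∀ x : ↥P × ↥I, inc.1 x = ((x.1 : M), x.2)) ∧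
      (∀ φ, H (φ, 0) = φ) ∧
      (∀ φ, H (φ, 1) = inc) := by
  haveI : CompactSpace ↥P := isCompact_iff_compactSpace.mp hPcompact
  haveI : LocallyCompactSpace (↥P × ↥I) := inferInstance
  set CFt := {φ : C(↥P × ↥I, M × ↥I) // IsConcMap P A ⇑φ} with hCFt
  have hincConc : IsConcMap P A (fun x : ↥P × ↥I => ((x.1 : M), x.2)) :=
    ⟨by continuity, fun x => ⟨Iff.rfl, Iff.rfl⟩, univ, isOpen_univ, subset_univ _,
      fun x _ => rfl⟩
  set inc : CFt := ⟨⟨fun x => ((x.1 : M), x.2), by continuity⟩, hincConc⟩ with hinc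
  have hHcont : Continuous (fun z : CFt × ↥I =>
      (⟨Haux P z.1.1 z.2, Haux_isConc P A z.1.1 z.1.2 z.2⟩ : CFt)) := by
    apply Continuous.subtype_mk
    apply ContinuousMap.continuous_of_continuous_uncurry
    have hev : Continuous fun w : (CFt × ↥I) × (↥P × ↥I) =>
        (w.1.1.1 : C(↥P × ↥I, M × ↥I)) (w.2.1, rp w.1.2 w.2.2) := by
      have hpair : Continuous fun w : (CFt × ↥I) × (↥P × ↥I) =>
          ((w.1.1.1 : C(↥P × ↥I, M × ↥I)), (w.2.1, rp w.1.2 w.2.2)) := by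
        refine Continuous.prodMk ?_ (Continuous.prodMk ?_ ?_)
        · exact continuous_subtype_val.comp (continuous_fst.comp continuous_fst)
        · exact continuous_fst.comp continuous_snd
        · exact rp_cont.comp ((continuous_snd.comp continuous_fst).prodMk
            (continuous_snd.comp continuous_snd))
      exact ContinuousEval.continuous_eval.comp hpair
    refine Continuous.prodMk (continuous_fst.comp hev) (Continuous.subtype_mk ?_ _)
    refine Continuous.add ?_ ?_
    · exact ((continuous_const.sub (sig_cont.comp (continuous_subtype_val.comp
        (continuous_snd.comp continuous_fst)))).mul
        (continuous_subtype_val.comp (continuous_snd.comp hev)))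
    · exact ((sig_cont.comp (continuous_subtype_val.comp
        (continuous_snd.comp continuous_fst))).mul
        (continuous_subtype_val.comp (continuous_snd.comp continuous_snd)))
  set H : C(CFt × ↥I, CFt) :=
    ⟨fun z => ⟨Haux P z.1.1 z.2, Haux_isConc P A z.1.1 z.1.2 z.2⟩, hHcont⟩ with hH
  have hH0 : ∀ φ : CFt, H (φ, 0) = φ := by
    intro φ
    apply Subtype.ext
    exact Haux_zero P φ.1
  have hH1 : ∀ φ : CFt, H (φ, 1) = inc := by
    intro φ
    apply Subtype.ext
    apply ContinuousMap.ext
    intro x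
    exact Haux_one P A φ.1 φ.2 x
  constructor
  · rw [contractible_iff_id_nullhomotopic]
    refine ⟨inc, ⟨⟨⟨fun z => H (z.2, z.1), hHcont.comp (continuous_snd.prodMk continuous_fst)⟩,
      ?_, ?_⟩⟩⟩
    · intro φ; exact hH0 φ
    · intro φ; exact hH1 φ
  · exact ⟨inc, H, fun x => rfl, hH0, hH1⟩
end
end

section
/- (Well-definedness of the stabilisation map, Section 2.2 of 'Stability of concordance embeddings'.) For every continuous concordance map e of P in M the two clauses defining σ(e) are consistent: for (s,t) ∈ D₁ the value (e_M(p,r), Λ(e_I(p,r),θ)) is independent of the choice of (r,θ) ∈ [0,1]×[0,π] with Λ(r,θ) = (s,t), and the two clauses agree for (s,t) ∈ D₁ ∩ D₂. The resulting map σ(e) : P×J×I → M×J×I is continuous, maps P×D₁ into M×D₁ and P×D₂ into M×D₂, preserves radial segments in the sense that pr_{J×I}(σ(e)(p, Λ(r,θ))) ∈ Λ([0,1]×{θ}) for all p ∈ P and (r,θ) ∈ [0,1]×[0,π], and σ(e) is itself a continuous concordance map of P×J in M×J relative to the subset (A×J) ∪ (P×{−1,1}) of P×J. -/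
/-!
STATEMENT 3: well-definedness of the stabilisation map `σ`.
-/

open Set unitInterval Topology

noncomputable section

abbrev JJ : Set ℝ := Set.Icc (-1 : ℝ) 1

/-- The polar parametrisation `Λ(r,θ) = ((1−r)cos(θ+π), (1−r)sin(θ+π) + 1)`. -/
def Lam : ℝ × ℝ → ℝ × ℝ :=
  fun p => ((1 - p.1) * Real.cos (p.2 + Real.pi), (1 - p.1) * Real.sin (p.2 + Real.pi) + 1)

def D1 : Set (ℝ × ℝ) := {z | z.1 ∈ JJ ∧ z.2 ∈ Set.Icc (0:ℝ) 1 ∧ z.1 ^ 2 + (z.2 - 1) ^ 2 ≤ 1}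
def D2 : Set (ℝ × ℝ) := {z | z.1 ∈ JJ ∧ z.2 ∈ Set.Icc (0:ℝ) 1 ∧ 1 ≤ z.1 ^ 2 + (z.2 - 1) ^ 2}

/-- `F : P × J × I → M × J × I` satisfies the two clauses defining the stabilisation `σ(e)`:
on `P × D₁` it is given (in the polar coordinates `Λ`) by
`σ(e)(p, Λ(r,θ)) = (e_M(p,r), Λ(e_I(p,r), θ))`, and on `P × D₂` it is the inclusion. -/
def IsSigmaOf {M : Type} [TopologicalSpace M] (P : Set M)
    (e : ↥P × ↥I → M × ↥I) (F : ↥P × ↥JJ × ↥I → M × ↥JJ × ↥I) : Prop :=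
  (∀ (p : ↥P) (s : ↥JJ) (t : ↥I) (r : ↥I) (θ : ℝ), θ ∈ Set.Icc 0 Real.pi →
    ((s : ℝ), (t : ℝ)) = Lam ((r : ℝ), θ) →
    (F (p, s, t)).1 = (e (p, r)).1 ∧
    (((F (p, s, t)).2.1 : ℝ), ((F (p, s, t)).2.2 : ℝ)) = Lam (((e (p, r)).2 : ℝ), θ)) ∧
  (∀ (p : ↥P) (s : ↥JJ) (t : ↥I), ((s : ℝ), (t : ℝ)) ∈ D2 → F (p, s, t) = ((p : M), s, t))

/-- `F : P × J × I → M × J × I` is a continuous concordance map of `P × J` in `M × J`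
relative to `(A × J) ∪ (P × {−1,1})`. -/
def IsConcMapJ {M : Type} [TopologicalSpace M] (P A : Set M)
    (F : ↥P × ↥JJ × ↥I → M × ↥JJ × ↥I) : Prop :=
  Continuous F ∧
  (∀ x : ↥P × ↥JJ × ↥I, ((F x).2.2 = 0 ↔ x.2.2 = 0) ∧ ((F x).2.2 = 1 ↔ x.2.2 = 1)) ∧
  ∃ U : Set (↥P × ↥JJ × ↥I), IsOpen U ∧
    ({x : ↥P × ↥JJ × ↥I | x.2.2 = 0} ∪
     {x : ↥P × ↥JJ × ↥I | (x.1 : M) ∈ A ∨ (x.2.1 : ℝ) = -1 ∨ (x.2.1 : ℝ) = 1}) ⊆ U ∧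
    ∀ x ∈ U, F x = ((x.1 : M), x.2.1, x.2.2)

namespace Stmt3Aux

set_option linter.unusedSectionVars false

/-! ### The radius and radial coordinate -/

/-- radius from centre `(0,1)` -/
noncomputable def rho (s t : ℝ) : ℝ := Real.sqrt (s ^ 2 + (t - 1) ^ 2)

lemma rho_nonneg (s t : ℝ) : 0 ≤ rho s t := Real.sqrt_nonneg _

lemma rho_sq (s t : ℝ) : rho s t ^ 2 = s ^ 2 + (t - 1) ^ 2 :=
  Real.sq_sqrt (by positivity)

lemma abs_fst_le_rho (s t : ℝ) : |s| ≤ rho s t := by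
  rw [rho, ← Real.sqrt_sq_eq_abs]
  exact Real.sqrt_le_sqrt (by nlinarith [sq_nonneg (t - 1)])

lemma abs_snd_le_rho (s t : ℝ) : |t - 1| ≤ rho s t := by
  rw [rho, ← Real.sqrt_sq_eq_abs]
  exact Real.sqrt_le_sqrt (by nlinarith [sq_nonneg s])

lemma rho_eq_zero {s t : ℝ} (h : rho s t = 0) : s = 0 ∧ t = 1 := by
  have h1 := abs_fst_le_rho s t
  have h2 := abs_snd_le_rho s t
  rw [h] at h1 h2
  refine ⟨abs_nonpos_iff.mp h1, ?_⟩
  have := abs_nonpos_iff.mp h2; linarith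

lemma continuous_rho : Continuous (fun z : ℝ × ℝ => rho z.1 z.2) := by
  apply Real.continuous_sqrt.comp; fun_prop

noncomputable def rhat (s t : ℝ) : ↥I := Set.projIcc 0 1 zero_le_one (1 - rho s t)

lemma continuous_rhat : Continuous (fun z : ℝ × ℝ => rhat z.1 z.2) :=
  continuous_projIcc.comp (continuous_const.sub continuous_rho)

lemma rhat_of_one_le {s t : ℝ} (h : 1 ≤ rho s t) : rhat s t = 0 := by
  rw [rhat, Set.projIcc_of_le_left _ (by linarith)]; rfl

lemma rhat_coe_of_le_one {s t : ℝ} (h : rho s t ≤ 1) : ((rhat s t : ℝ)) = 1 - rho s t := by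
  rw [rhat, Set.projIcc_of_mem _ ⟨by linarith, by linarith [rho_nonneg s t]⟩]

lemma rho_lam {r θ : ℝ} (hr : r ≤ 1) :
    rho ((1 - r) * Real.cos (θ + Real.pi)) ((1 - r) * Real.sin (θ + Real.pi) + 1) = 1 - r := by
  rw [rho]
  have : ((1 - r) * Real.cos (θ + Real.pi)) ^ 2 +
      ((1 - r) * Real.sin (θ + Real.pi) + 1 - 1) ^ 2 = (1 - r) ^ 2 := by
    have hs := Real.sin_sq_add_cos_sq (θ + Real.pi)
    nlinarith [hs]
  rw [this, Real.sqrt_sq (by linarith)]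

/-! ### The scaling factor -/

variable {M : Type} [TopologicalSpace M] {P : Set M}

/-- `μ = 1 - e_I(p, r̂(s,t))`. -/
noncomputable def mu (e : ↥P × ↥I → M × ↥I) (p : ↥P) (s t : ℝ) : ℝ :=
  1 - ((e (p, rhat s t)).2 : ℝ)

lemma mu_nonneg (e : ↥P × ↥I → M × ↥I) (p : ↥P) (s t : ℝ) : 0 ≤ mu e p s t := by
  have := (e (p, rhat s t)).2.2.2; simp only [mu]; linarith

lemma mu_le_one (e : ↥P × ↥I → M × ↥I) (p : ↥P) (s t : ℝ) : mu e p s t ≤ 1 := by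
  have := (e (p, rhat s t)).2.2.1; simp only [mu]; linarith

/-- the scaling factor `k = μ / min ρ 1`. -/
noncomputable def kk (e : ↥P × ↥I → M × ↥I) (p : ↥P) (s t : ℝ) : ℝ :=
  mu e p s t / min (rho s t) 1

lemma kk_nonneg (e : ↥P × ↥I → M × ↥I) (p : ↥P) (s t : ℝ) : 0 ≤ kk e p s t :=
  div_nonneg (mu_nonneg e p s t) (le_min (rho_nonneg s t) zero_le_one)

lemma abs_kk_mul_le (e : ↥P × ↥I → M × ↥I) (p : ↥P) {s t c : ℝ}
    (hc : |c| ≤ rho s t) (hc1 : |c| ≤ 1) : |kk e p s t * c| ≤ mu e p s t := by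
  have hm0 : 0 ≤ min (rho s t) 1 := le_min (rho_nonneg s t) zero_le_one
  rcases eq_or_lt_of_le hm0 with h | h
  · have hρ : rho s t = 0 := by
      rcases min_eq_iff.mp h.symm with ⟨h1, _⟩ | ⟨h1, _⟩
      · exact h1
      · norm_num at h1
    have hc0 : c = 0 := abs_nonpos_iff.mp (hρ ▸ hc)
    simpa [hc0] using mu_nonneg e p s t
  · have hkc : kk e p s t * c = mu e p s t * (c / min (rho s t) 1) := by
      rw [kk]; ring
    rw [hkc, abs_mul, abs_of_nonneg (mu_nonneg e p s t)]
    have hd : |c / min (rho s t) 1| ≤ 1 := by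
      rw [abs_div, abs_of_pos h]
      exact (div_le_one h).mpr (le_min hc hc1)
    exact mul_le_of_le_one_right (mu_nonneg e p s t) hd

lemma abs_kk_mul_le_one (e : ↥P × ↥I → M × ↥I) (p : ↥P) {s t c : ℝ}
    (hc : |c| ≤ rho s t) (hc1 : |c| ≤ 1) : |kk e p s t * c| ≤ 1 :=
  (abs_kk_mul_le e p hc hc1).trans (mu_le_one e p s t)

/-! ### Consequences of the endpoint conditions -/

variable (e : ↥P × ↥I → M × ↥I)
  (heend : ∀ x : ↥P × ↥I, ((e x).2 = 0 ↔ x.2 = 0) ∧ ((e x).2 = 1 ↔ x.2 = 1))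

section heend
include heend

lemma eI_zero (p : ↥P) : ((e (p, 0)).2 : ℝ) = 0 := by
  have := (heend (p, 0)).1.mpr rfl
  rw [this]; rfl

lemma eI_one (p : ↥P) : ((e (p, 1)).2 : ℝ) = 1 := by
  have := (heend (p, 1)).2.mpr rfl
  rw [this]; rfl

lemma kk_of_one_le (p : ↥P) {s t : ℝ} (h : 1 ≤ rho s t) : kk e p s t = 1 := by
  rw [kk, mu, rhat_of_one_le h, eI_zero e heend p, min_eq_right h]
  norm_num

end heend

/-! ### Coercion bounds -/

lemma abs_coe_JJ (s : ↥JJ) : |(s : ℝ)| ≤ 1 := abs_le.mpr ⟨s.2.1, s.2.2⟩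

lemma abs_coe_I_sub_one (t : ↥I) : |(t : ℝ) - 1| ≤ 1 :=
  abs_le.mpr ⟨by linarith [t.2.1], by linarith [t.2.2]⟩

/-! ### The map itself -/

/-- The stabilisation map. -/
noncomputable def Fmap (e : ↥P × ↥I → M × ↥I) (x : ↥P × ↥JJ × ↥I) : M × ↥JJ × ↥I :=
  ((e (x.1, rhat (x.2.1 : ℝ) (x.2.2 : ℝ))).1,
   Set.projIcc (-1 : ℝ) 1 (by norm_num)
     (kk e x.1 (x.2.1 : ℝ) (x.2.2 : ℝ) * (x.2.1 : ℝ)),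
   Set.projIcc (0 : ℝ) 1 zero_le_one
     (kk e x.1 (x.2.1 : ℝ) (x.2.2 : ℝ) * ((x.2.2 : ℝ) - 1) + 1))

lemma coe_F21 (x : ↥P × ↥JJ × ↥I) :
    (((Fmap e x).2.1 : ℝ)) = kk e x.1 (x.2.1 : ℝ) (x.2.2 : ℝ) * (x.2.1 : ℝ) := by
  have hb := abs_kk_mul_le_one e x.1 (abs_fst_le_rho (x.2.1 : ℝ) (x.2.2 : ℝ)) (abs_coe_JJ x.2.1)
  rw [Fmap, Set.projIcc_of_mem _ (Set.mem_Icc.mpr (abs_le.mp hb))]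

lemma coe_F22 (x : ↥P × ↥JJ × ↥I) :
    (((Fmap e x).2.2 : ℝ)) = kk e x.1 (x.2.1 : ℝ) (x.2.2 : ℝ) * ((x.2.2 : ℝ) - 1) + 1 := by
  have hb := abs_kk_mul_le_one e x.1 (abs_snd_le_rho (x.2.1 : ℝ) (x.2.2 : ℝ))
    (abs_coe_I_sub_one x.2.2)
  have hsign : kk e x.1 (x.2.1 : ℝ) (x.2.2 : ℝ) * ((x.2.2 : ℝ) - 1) ≤ 0 :=
    mul_nonpos_of_nonneg_of_nonpos (kk_nonneg e x.1 _ _) (by linarith [(x.2.2).2.2])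
  have hlb := (abs_le.mp hb).1
  have hmem : kk e x.1 (x.2.1 : ℝ) (x.2.2 : ℝ) * ((x.2.2 : ℝ) - 1) + 1 ∈ Set.Icc (0:ℝ) 1 :=
    Set.mem_Icc.mpr ⟨by linarith, by linarith⟩
  rw [Fmap, Set.projIcc_of_mem _ hmem]

lemma F1 (x : ↥P × ↥JJ × ↥I) :
    (Fmap e x).1 = (e (x.1, rhat (x.2.1 : ℝ) (x.2.2 : ℝ))).1 := rfl

/-! ### polar computation -/

section heend
include heend

lemma polar (p : ↥P) (r : ↥I) (θ : ℝ) {s t : ℝ}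
    (hs : s = (1 - (r : ℝ)) * Real.cos (θ + Real.pi))
    (ht : t = (1 - (r : ℝ)) * Real.sin (θ + Real.pi) + 1) :
    rhat s t = r ∧
    kk e p s t * s = (1 - ((e (p, r)).2 : ℝ)) * Real.cos (θ + Real.pi) ∧
    kk e p s t * (t - 1) = (1 - ((e (p, r)).2 : ℝ)) * Real.sin (θ + Real.pi) := by
  have hρ : rho s t = 1 - (r : ℝ) := by rw [hs, ht]; exact rho_lam r.2.2
  have hrh : rhat s t = r := by
    rw [rhat, hρ, sub_sub_cancel, Set.projIcc_val]
  have hmu : mu e p s t = 1 - ((e (p, r)).2 : ℝ) := by rw [mu, hrh]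
  refine ⟨hrh, ?_, ?_⟩
  all_goals by_cases h1 : (r : ℝ) = 1
  case pos =>
    have hr1 : r = 1 := Subtype.ext (by rw [h1]; rfl)
    have heI : ((e (p, r)).2 : ℝ) = 1 := by rw [hr1]; exact eI_one e heend p
    rw [hs, h1, heI]; ring
  case neg =>
    have hlt : (r : ℝ) < 1 := lt_of_le_of_ne r.2.2 h1
    have hne : 1 - (r : ℝ) ≠ 0 := by intro hcon; apply h1; linarith
    have hmin : min (rho s t) 1 = rho s t :=
      min_eq_left (by rw [hρ]; linarith [r.2.1])
    rw [kk, hmin, hρ, hmu, hs]; field_simp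
  case pos =>
    have hr1 : r = 1 := Subtype.ext (by rw [h1]; rfl)
    have heI : ((e (p, r)).2 : ℝ) = 1 := by rw [hr1]; exact eI_one e heend p
    rw [ht, h1, heI]; ring
  case neg =>
    have hlt : (r : ℝ) < 1 := lt_of_le_of_ne r.2.2 h1
    have hne : 1 - (r : ℝ) ≠ 0 := by intro hcon; apply h1; linarith
    have hmin : min (rho s t) 1 = rho s t :=
      min_eq_left (by rw [hρ]; linarith [r.2.1])
    rw [kk, hmin, hρ, hmu, ht]; field_simp; ring

/-! ### identity behaviour -/

lemma F_id (x : ↥P × ↥JJ × ↥I)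
    (hid : e (x.1, rhat (x.2.1 : ℝ) (x.2.2 : ℝ)) = ((x.1 : M), rhat (x.2.1 : ℝ) (x.2.2 : ℝ))) :
    Fmap e x = ((x.1 : M), x.2.1, x.2.2) := by
  obtain ⟨p, s, t⟩ := x
  by_cases hρ : rho (s : ℝ) (t : ℝ) = 0
  · obtain ⟨hs, ht⟩ := rho_eq_zero hρ
    refine Prod.ext ?_ (Prod.ext ?_ ?_)
    · rw [F1, hid]
    · apply Subtype.ext; rw [coe_F21]; simp [hs]
    · apply Subtype.ext; rw [coe_F22]; simp [ht]
  · have hk : kk e p (s : ℝ) (t : ℝ) = 1 := by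
      rcases le_or_gt (rho (s : ℝ) (t : ℝ)) 1 with h1 | h1
      · have hco := rhat_coe_of_le_one h1
        have heI : ((e (p, rhat (s : ℝ) (t : ℝ))).2 : ℝ) = ((rhat (s : ℝ) (t : ℝ) : ℝ)) := by
          rw [hid]
        rw [kk, mu, heI, hco, min_eq_left h1]
        field_simp
        ring
      · exact kk_of_one_le e heend p h1.le
    refine Prod.ext ?_ (Prod.ext ?_ ?_)
    · rw [F1, hid]
    · apply Subtype.ext; rw [coe_F21]; simp [hk]
    · apply Subtype.ext; rw [coe_F22]; simp [hk]

/-! ### endpoint conditions -/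

lemma F22_eq_zero_iff (x : ↥P × ↥JJ × ↥I) : (Fmap e x).2.2 = 0 ↔ x.2.2 = 0 := by
  obtain ⟨p, s, t⟩ := x
  have hco : ((Fmap e (p, s, t)).2.2 : ℝ) = kk e p (s : ℝ) (t : ℝ) * ((t : ℝ) - 1) + 1 :=
    coe_F22 e (p, s, t)
  constructor
  · intro h
    rw [h] at hco
    have h0 : (0 : ℝ) = kk e p (s : ℝ) (t : ℝ) * ((t : ℝ) - 1) + 1 := hco
    have hk1 : kk e p (s : ℝ) (t : ℝ) * ((t : ℝ) - 1) = -1 := by linarith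
    have habs := abs_kk_mul_le e p (abs_snd_le_rho (s : ℝ) (t : ℝ)) (abs_coe_I_sub_one t)
    rw [hk1] at habs
    norm_num at habs
    have hmu1 : mu e p (s : ℝ) (t : ℝ) = 1 := le_antisymm (mu_le_one e p _ _) habs
    have heI0 : (e (p, rhat (s : ℝ) (t : ℝ))).2 = 0 := by
      apply Subtype.ext
      show ((e (p, rhat (s : ℝ) (t : ℝ))).2 : ℝ) = 0
      simp only [mu] at hmu1
      linarith
    have hrhat0 : rhat (s : ℝ) (t : ℝ) = 0 := (heend _).1.mp heI0
    have hρ1 : 1 ≤ rho (s : ℝ) (t : ℝ) := by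
      by_contra hcon
      push_neg at hcon
      have hco2 := rhat_coe_of_le_one hcon.le
      rw [hrhat0] at hco2
      have hco3 : (0 : ℝ) = 1 - rho (s : ℝ) (t : ℝ) := hco2
      linarith
    have hkk := kk_of_one_le e heend p hρ1
    rw [hkk, one_mul] at hk1
    apply Subtype.ext
    show ((t : ℝ)) = 0
    linarith
  · intro h
    have ht' : t = 0 := h
    have ht0 : (t : ℝ) = 0 := by rw [ht']; rfl
    have hρ1 : 1 ≤ rho (s : ℝ) (t : ℝ) :=
      le_trans (by rw [ht0]; norm_num) (abs_snd_le_rho (s : ℝ) (t : ℝ))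
    have hkk := kk_of_one_le e heend p hρ1
    apply Subtype.ext
    rw [hco]
    show kk e p (s : ℝ) (t : ℝ) * ((t : ℝ) - 1) + 1 = (0 : ℝ)
    rw [hkk, ht0]; ring

lemma F22_eq_one_iff (x : ↥P × ↥JJ × ↥I) : (Fmap e x).2.2 = 1 ↔ x.2.2 = 1 := by
  obtain ⟨p, s, t⟩ := x
  have hco : ((Fmap e (p, s, t)).2.2 : ℝ) = kk e p (s : ℝ) (t : ℝ) * ((t : ℝ) - 1) + 1 :=
    coe_F22 e (p, s, t)
  constructor
  · intro h
    rw [h] at hco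
    have h1' : (1 : ℝ) = kk e p (s : ℝ) (t : ℝ) * ((t : ℝ) - 1) + 1 := hco
    have hk0 : kk e p (s : ℝ) (t : ℝ) * ((t : ℝ) - 1) = 0 := by linarith
    rcases mul_eq_zero.mp hk0 with hk | ht1
    · rcases div_eq_zero_iff.mp hk with hmu | hmin
      · have heI1 : (e (p, rhat (s : ℝ) (t : ℝ))).2 = 1 := by
          apply Subtype.ext
          show ((e (p, rhat (s : ℝ) (t : ℝ))).2 : ℝ) = 1
          simp only [mu] at hmu
          linarith
        have hrhat1 : rhat (s : ℝ) (t : ℝ) = 1 := (heend _).2.mp heI1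
        rcases le_or_gt (rho (s : ℝ) (t : ℝ)) 1 with h1 | h1
        · have hco2 := rhat_coe_of_le_one h1
          rw [hrhat1] at hco2
          have hco3 : (1 : ℝ) = 1 - rho (s : ℝ) (t : ℝ) := hco2
          have hρ0 : rho (s : ℝ) (t : ℝ) = 0 := by linarith
          apply Subtype.ext
          show ((t : ℝ)) = 1
          exact (rho_eq_zero hρ0).2
        · rw [rhat_of_one_le h1.le] at hrhat1
          have hcon : (0 : ℝ) = 1 := congrArg Subtype.val hrhat1
          norm_num at hcon
      · have hρ0 : rho (s : ℝ) (t : ℝ) = 0 := by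
          rcases min_eq_iff.mp hmin with ⟨h1, _⟩ | ⟨h1, _⟩
          · exact h1
          · norm_num at h1
        apply Subtype.ext
        show ((t : ℝ)) = 1
        exact (rho_eq_zero hρ0).2
    · apply Subtype.ext
      show ((t : ℝ)) = 1
      linarith
  · intro h
    have ht' : t = 1 := h
    have ht1 : (t : ℝ) = 1 := by rw [ht']; rfl
    apply Subtype.ext
    rw [hco]
    show kk e p (s : ℝ) (t : ℝ) * ((t : ℝ) - 1) + 1 = (1 : ℝ)
    rw [ht1]; ring

/-! ### continuity -/

lemma continuous_kk_mul (hec : Continuous e)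
    (g : ↥P × ↥JJ × ↥I → ℝ) (hg : Continuous g)
    (hb : ∀ x : ↥P × ↥JJ × ↥I, |g x| ≤ rho (x.2.1 : ℝ) (x.2.2 : ℝ)) (hb1 : ∀ x, |g x| ≤ 1) :
    Continuous (fun x : ↥P × ↥JJ × ↥I => kk e x.1 (x.2.1 : ℝ) (x.2.2 : ℝ) * g x) := by
  have hcoe : Continuous (fun x : ↥P × ↥JJ × ↥I => ((x.2.1 : ℝ), (x.2.2 : ℝ))) := by fun_prop
  have hρc : Continuous (fun x : ↥P × ↥JJ × ↥I => rho (x.2.1 : ℝ) (x.2.2 : ℝ)) := by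
    unfold rho; fun_prop
  have h1 : Continuous (fun x : ↥P × ↥JJ × ↥I => (x.1, rhat (x.2.1 : ℝ) (x.2.2 : ℝ))) := by
    apply continuous_fst.prodMk
    unfold rhat
    exact continuous_projIcc.comp (continuous_const.sub hρc)
  have hmuc : Continuous (fun x : ↥P × ↥JJ × ↥I => mu e x.1 (x.2.1 : ℝ) (x.2.2 : ℝ)) := by
    simp only [mu]
    exact continuous_const.sub (continuous_subtype_val.comp (continuous_snd.comp (hec.comp h1)))
  rw [continuous_iff_continuousAt]
  intro x₀
  by_cases h0 : rho (x₀.2.1 : ℝ) (x₀.2.2 : ℝ) = 0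
  · have hg0 : g x₀ = 0 := abs_nonpos_iff.mp (h0 ▸ hb x₀)
    have hval : kk e x₀.1 (x₀.2.1 : ℝ) (x₀.2.2 : ℝ) * g x₀ = 0 := by rw [hg0, mul_zero]
    rw [ContinuousAt, hval]
    have hmu0 : mu e x₀.1 (x₀.2.1 : ℝ) (x₀.2.2 : ℝ) = 0 := by
      have hr1 : rhat (x₀.2.1 : ℝ) (x₀.2.2 : ℝ) = 1 := by
        apply Subtype.ext
        rw [rhat, h0, Set.coe_projIcc]
        norm_num
      rw [mu, hr1, eI_one e heend x₀.1]; ring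
    have htend := hmuc.continuousAt (x := x₀)
    rw [ContinuousAt, hmu0] at htend
    exact squeeze_zero_norm
      (fun x => by rw [Real.norm_eq_abs]; exact abs_kk_mul_le e x.1 (hb x) (hb1 x)) htend
  · have hminc : ContinuousAt
        (fun x : ↥P × ↥JJ × ↥I => min (rho (x.2.1 : ℝ) (x.2.2 : ℝ)) 1) x₀ :=
      (hρc.min continuous_const).continuousAt
    have hne : min (rho (x₀.2.1 : ℝ) (x₀.2.2 : ℝ)) 1 ≠ 0 :=
      ne_of_gt (lt_min (lt_of_le_of_ne (rho_nonneg _ _) (Ne.symm h0)) one_pos)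
    exact ((hmuc.continuousAt.div hminc hne).mul hg.continuousAt)

set_option maxHeartbeats 1000000 in
lemma continuous_Fmap (hec : Continuous e) : Continuous (Fmap e) := by
  have hρc : Continuous (fun x : ↥P × ↥JJ × ↥I => rho (x.2.1 : ℝ) (x.2.2 : ℝ)) := by
    unfold rho; fun_prop
  have h1 : Continuous (fun x : ↥P × ↥JJ × ↥I => (x.1, rhat (x.2.1 : ℝ) (x.2.2 : ℝ))) := by
    apply continuous_fst.prodMk
    unfold rhat
    exact continuous_projIcc.comp (continuous_const.sub hρc)
  unfold Fmap
  refine Continuous.prodMk ?_ (Continuous.prodMk ?_ ?_)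
  · exact (hec.comp h1).fst
  · exact continuous_projIcc.comp (continuous_kk_mul e heend hec _ (by fun_prop)
      (fun x => abs_fst_le_rho _ _) (fun x => abs_coe_JJ x.2.1))
  · exact continuous_projIcc.comp ((continuous_kk_mul e heend hec _ (by fun_prop)
      (fun x => abs_snd_le_rho _ _) (fun x => abs_coe_I_sub_one x.2.2)).add continuous_const)

end heend

/-! ### the disc bound -/

lemma kk_sq (p : ↥P) {s t : ℝ} (h1 : rho s t ≤ 1) :
    (kk e p s t * s) ^ 2 + (kk e p s t * (t - 1)) ^ 2 ≤ 1 := by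
  have key : (kk e p s t * s) ^ 2 + (kk e p s t * (t - 1)) ^ 2
      = (kk e p s t * rho s t) ^ 2 := by
    rw [mul_pow, mul_pow, mul_pow, rho_sq]; ring
  rw [key]
  by_cases h0 : rho s t = 0
  · rw [h0]; norm_num
  · have hx : kk e p s t * rho s t = mu e p s t := by
      rw [kk, min_eq_left h1]; field_simp
    rw [hx]
    nlinarith [mu_nonneg e p s t, mu_le_one e p s t]

end Stmt3Aux

open Stmt3Aux

theorem statement3 {M : Type} [TopologicalSpace M] (P A : Set M) (hAP : A ⊆ P)
    (e : ↥P × ↥I → M × ↥I) (he : IsConcMap P A e) :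
    ∃ F : ↥P × ↥JJ × ↥I → M × ↥JJ × ↥I,
      -- the two clauses consistently define a map `σ(e) = F` (in particular, on `P × D₁` the
      -- value is independent of the chosen polar representation, and the clauses agree on
      -- `P × (D₁ ∩ D₂)`), which is
      IsSigmaOf P e F ∧
      -- continuous,
      Continuous F ∧
      -- maps `P × D₁` into `M × D₁` and `P × D₂` into `M × D₂`,
      (∀ (p : ↥P) (s : ↥JJ) (t : ↥I), ((s : ℝ), (t : ℝ)) ∈ D1 →
        (((F (p, s, t)).2.1 : ℝ), ((F (p, s, t)).2.2 : ℝ)) ∈ D1) ∧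
      (∀ (p : ↥P) (s : ↥JJ) (t : ↥I), ((s : ℝ), (t : ℝ)) ∈ D2 →
        (((F (p, s, t)).2.1 : ℝ), ((F (p, s, t)).2.2 : ℝ)) ∈ D2) ∧
      -- preserves the radial segments of `D₁`,
      (∀ (p : ↥P) (s : ↥JJ) (t : ↥I) (r : ↥I) (θ : ℝ), θ ∈ Set.Icc 0 Real.pi →
        ((s : ℝ), (t : ℝ)) = Lam ((r : ℝ), θ) →
        (((F (p, s, t)).2.1 : ℝ), ((F (p, s, t)).2.2 : ℝ))
          ∈ Lam '' (Set.Icc (0:ℝ) 1 ×ˢ {θ})) ∧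
      -- and is itself a continuous concordance map of `P × J` in `M × J` relative to
      -- `(A × J) ∪ (P × {−1,1})`.
      IsConcMapJ P A F := by
  obtain ⟨hec, heend, U₀, hU₀o, hU₀s, hU₀e⟩ := he
  -- the two defining clauses
  have hsig : IsSigmaOf P e (Fmap e) := by
    constructor
    · intro p s t r θ hθ hst
      rw [Lam] at hst
      have hs : (s : ℝ) = (1 - (r : ℝ)) * Real.cos (θ + Real.pi) := congrArg Prod.fst hst
      have ht : (t : ℝ) = (1 - (r : ℝ)) * Real.sin (θ + Real.pi) + 1 := congrArg Prod.snd hst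
      obtain ⟨ha, hb, hc⟩ := polar e heend p r θ hs ht
      refine ⟨?_, ?_⟩
      · rw [F1, ha]
      · rw [Lam]
        refine Prod.ext ?_ ?_ <;> dsimp only
        · rw [coe_F21]
          exact hs ▸ hb
        · rw [coe_F22, hc]
    · intro p s t hD2
      have hρ1 : 1 ≤ rho (s : ℝ) (t : ℝ) := by
        have h := hD2.2.2
        nlinarith [rho_sq (s : ℝ) (t : ℝ), rho_nonneg (s : ℝ) (t : ℝ)]
      apply F_id e heend
      rw [rhat_of_one_le hρ1]
      exact hU₀e ((p, s, t).1, 0) (hU₀s (Or.inl rfl))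
  have hcont : Continuous (Fmap e) := continuous_Fmap e heend hec
  refine ⟨Fmap e, hsig, hcont, ?_, ?_, ?_, ?_⟩
  · -- D1 into D1
    intro p s t hD1
    refine ⟨((Fmap e (p, s, t)).2.1).2, ((Fmap e (p, s, t)).2.2).2, ?_⟩
    show ((Fmap e (p, s, t)).2.1 : ℝ) ^ 2 + (((Fmap e (p, s, t)).2.2 : ℝ) - 1) ^ 2 ≤ 1
    rw [coe_F21, coe_F22]
    have h1 : rho (s : ℝ) (t : ℝ) ≤ 1 := by
      have h := hD1.2.2
      nlinarith [rho_sq (s : ℝ) (t : ℝ), rho_nonneg (s : ℝ) (t : ℝ)]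
    have hb := kk_sq e p (s := (s : ℝ)) (t := (t : ℝ)) h1
    ring_nf
    ring_nf at hb
    linarith
  · -- D2 into D2
    intro p s t hD2
    rw [hsig.2 p s t hD2]
    exact hD2
  · -- radial segments
    intro p s t r θ hθ hst
    obtain ⟨h1, h2⟩ := hsig.1 p s t r θ hθ hst
    rw [h2]
    exact ⟨(((e (p, r)).2 : ℝ), θ), ⟨(e (p, r)).2.2, rfl⟩, rfl⟩
  · -- concordance map
    refine ⟨hcont, fun x => ⟨F22_eq_zero_iff e heend x, F22_eq_one_iff e heend x⟩, ?_⟩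
    refine ⟨(fun x : ↥P × ↥JJ × ↥I => (x.1, rhat (x.2.1 : ℝ) (x.2.2 : ℝ))) ⁻¹' U₀, ?_, ?_, ?_⟩
    · apply hU₀o.preimage
      apply continuous_fst.prodMk
      unfold rhat rho
      exact continuous_projIcc.comp (by fun_prop)
    · rintro x (hx | hx)
      · have ht' : x.2.2 = 0 := hx
        have ht0 : (x.2.2 : ℝ) = 0 := by rw [ht']; rfl
        have hρ1 : 1 ≤ rho (x.2.1 : ℝ) (x.2.2 : ℝ) :=
          le_trans (by rw [ht0]; norm_num) (abs_snd_le_rho _ _)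
        show (x.1, rhat (x.2.1 : ℝ) (x.2.2 : ℝ)) ∈ U₀
        rw [rhat_of_one_le hρ1]
        exact hU₀s (Or.inl rfl)
      · rcases hx with hA | hs1 | hs1
        · exact hU₀s (Or.inr hA)
        · have hρ1 : 1 ≤ rho (x.2.1 : ℝ) (x.2.2 : ℝ) :=
            le_trans (by rw [hs1]; norm_num) (abs_fst_le_rho _ _)
          show (x.1, rhat (x.2.1 : ℝ) (x.2.2 : ℝ)) ∈ U₀
          rw [rhat_of_one_le hρ1]
          exact hU₀s (Or.inl rfl)
        · have hρ1 : 1 ≤ rho (x.2.1 : ℝ) (x.2.2 : ℝ) :=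
            le_trans (by rw [hs1]; norm_num) (abs_fst_le_rho _ _)
          show (x.1, rhat (x.2.1 : ℝ) (x.2.2 : ℝ)) ∈ U₀
          rw [rhat_of_one_le hρ1]
          exact hU₀s (Or.inl rfl)
    · intro x hx
      exact F_id e heend x (hU₀e _ hx)
end
end

section
/- (The stabilisation map sends concordance embeddings to concordance embeddings, Section 2.2.) If e is an injective continuous concordance map of P in M, then σ(e) : P×J×I → M×J×I is injective. In particular, if P is compact Hausdorff and M is Hausdorff, then σ carries topological concordance embeddings (injective continuous concordance maps, which are then closed topological embeddings) of P in M to topological concordance embeddings of P×J in M×J. -/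
/-!
STATEMENT 4: the stabilisation map sends concordance embeddings to concordance embeddings.
-/
open Set unitInterval Topology

noncomputable section

namespace Stab4

def rr (s t : ℝ) : ℝ := Real.sqrt (s ^ 2 + (1 - t) ^ 2)

lemma rr_nonneg (s t : ℝ) : 0 ≤ rr s t := Real.sqrt_nonneg _

lemma rr_sq (s t : ℝ) : rr s t ^ 2 = s ^ 2 + (1 - t) ^ 2 := Real.sq_sqrt (by positivity)

lemma abs_le_rr (s t : ℝ) : |s| ≤ rr s t := by
  rw [rr, ← Real.sqrt_sq_eq_abs]
  exact Real.sqrt_le_sqrt (by nlinarith [sq_nonneg (1 - t)])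

lemma sub_le_rr (s t : ℝ) : |1 - t| ≤ rr s t := by
  rw [rr, ← Real.sqrt_sq_eq_abs]
  exact Real.sqrt_le_sqrt (by nlinarith [sq_nonneg s])

lemma rr_eq_zero {s t : ℝ} (h : rr s t = 0) : s = 0 ∧ t = 1 := by
  have h2 := rr_sq s t
  rw [h] at h2
  constructor <;> nlinarith [sq_nonneg s, sq_nonneg (1 - t)]

variable {M : Type} [TopologicalSpace M] {P A : Set M} {e : ↥P × ↥I → M × ↥I}

lemma e_zero (he : IsConcMap P A e) (p : ↥P) : e (p, 0) = ((p : M), 0) := by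
  obtain ⟨-, -, U, -, hU, hid⟩ := he
  exact hid (p, 0) (hU (Or.inl rfl))

lemma e_one (he : IsConcMap P A e) (p : ↥P) (r : ↥I) (hr : (r : ℝ) = 1) :
    ((e (p, r)).2 : ℝ) = 1 := by
  have : r = 1 := Subtype.ext (by simpa using hr)
  have := (he.2.1 (p, r)).2.mpr (by simpa using this)
  simpa using congrArg (fun x : ↥I => (x : ℝ)) this

lemma specD2 {F : ↥P × ↥JJ × ↥I → M × ↥JJ × ↥I} (hF : IsSigmaOf P e F)
    (p : ↥P) (s : ↥JJ) (t : ↥I) (h : 1 ≤ rr (s : ℝ) (t : ℝ)) :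
    F (p, s, t) = ((p : M), s, t) := by
  refine hF.2 p s t ⟨s.2, t.2, ?_⟩
  have := rr_sq (s : ℝ) (t : ℝ)
  nlinarith [rr_nonneg (s : ℝ) (t : ℝ)]

lemma specD1 (he : IsConcMap P A e) {F : ↥P × ↥JJ × ↥I → M × ↥JJ × ↥I}
    (hF : IsSigmaOf P e F) (p : ↥P) (s : ↥JJ) (t : ↥I)
    (h1 : rr (s : ℝ) (t : ℝ) ≤ 1) :
    ∃ r : ↥I, (r : ℝ) = 1 - rr (s : ℝ) (t : ℝ) ∧
      (F (p, s, t)).1 = (e (p, r)).1 ∧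
      ((F (p, s, t)).2.1 : ℝ) = (1 - ((e (p, r)).2 : ℝ)) * ((s : ℝ) / rr (s : ℝ) (t : ℝ)) ∧
      ((F (p, s, t)).2.2 : ℝ)
        = 1 - (1 - ((e (p, r)).2 : ℝ)) * ((1 - (t : ℝ)) / rr (s : ℝ) (t : ℝ)) := by
  set ρ : ℝ := rr (s : ℝ) (t : ℝ) with hρ
  have hρ0 : 0 ≤ ρ := rr_nonneg _ _
  have hρsq : ρ ^ 2 = (s : ℝ) ^ 2 + (1 - (t : ℝ)) ^ 2 := rr_sq _ _
  refine ⟨⟨1 - ρ, by constructor <;> linarith⟩, rfl, ?_⟩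
  set r : ↥I := (⟨1 - ρ, by constructor <;> linarith⟩ : ↥I) with hr
  rcases eq_or_lt_of_le hρ0 with hz | hpos
  · -- ρ = 0 : centre point, s = 0, t = 1
    obtain ⟨hs0, ht1⟩ := rr_eq_zero (s := (s:ℝ)) (t := (t:ℝ)) hz.symm
    have heI : ((e (p, r)).2 : ℝ) = 1 := e_one he p r (by simp [hr, ← hz])
    have hlam : ((s : ℝ), (t : ℝ)) = Lam ((r : ℝ), 0) := by
      simp [Lam, hr, ← hz, hs0, ht1]
    obtain ⟨hA, hB⟩ := hF.1 p s t r 0 ⟨le_refl 0, Real.pi_pos.le⟩ hlam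
    rw [Lam, heI] at hB
    have hB1 := congrArg Prod.fst hB
    have hB2 := congrArg Prod.snd hB
    simp only at hB1 hB2
    refine ⟨hA, ?_, ?_⟩
    · rw [hB1, heI]; ring
    · rw [hB2, heI]; ring
  · -- ρ > 0
    have hρne : ρ ≠ 0 := ne_of_gt hpos
    have hs_le : |(s : ℝ)| ≤ ρ := abs_le_rr _ _
    have ht_nn : 0 ≤ 1 - (t : ℝ) := by have := t.2.2; linarith
    have ht_le : 1 - (t : ℝ) ≤ ρ := by
      have := sub_le_rr (s : ℝ) (t : ℝ); rwa [abs_of_nonneg ht_nn] at this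
    have habs : |(s : ℝ) / ρ| ≤ 1 := by
      rw [abs_div, abs_of_pos hpos, div_le_one hpos]; exact hs_le
    have hd1 : -(((s : ℝ)) / ρ) ∈ Set.Icc (-1 : ℝ) 1 := by
      have := abs_le.mp habs
      constructor <;> linarith [this.1, this.2]
    set θ : ℝ := Real.arccos (-((s : ℝ) / ρ)) with hθ
    have hcos : Real.cos θ = -((s : ℝ) / ρ) := Real.cos_arccos (by simpa using hd1.1) (by simpa using hd1.2)
    have hsin : Real.sin θ = (1 - (t : ℝ)) / ρ := by
      rw [hθ, Real.sin_arccos]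
      have : 1 - (-((s : ℝ) / ρ)) ^ 2 = ((1 - (t : ℝ)) / ρ) ^ 2 := by
        field_simp
        nlinarith
      rw [this, Real.sqrt_sq (by positivity)]
    have hθmem : θ ∈ Set.Icc 0 Real.pi := ⟨Real.arccos_nonneg _, Real.arccos_le_pi _⟩
    have hlam : ((s : ℝ), (t : ℝ)) = Lam ((r : ℝ), θ) := by
      rw [Lam]
      simp only [hr, Real.cos_add_pi, Real.sin_add_pi, hcos, hsin]
      have e1 : (1 - (1 - ρ)) * -(-((s:ℝ)/ρ)) = (s : ℝ) := by field_simp; ring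
      have e2 : (1 - (1 - ρ)) * -((1 - (t:ℝ))/ρ) + 1 = (t : ℝ) := by field_simp; ring
      rw [Prod.mk.injEq]
      exact ⟨e1.symm, e2.symm⟩
    obtain ⟨hA, hB⟩ := hF.1 p s t r θ hθmem hlam
    rw [Lam] at hB
    simp only [Real.cos_add_pi, Real.sin_add_pi, hcos, hsin] at hB
    have hB1 := congrArg Prod.fst hB
    have hB2 := congrArg Prod.snd hB
    simp only at hB1 hB2
    refine ⟨hA, ?_, ?_⟩
    · rw [hB1]; ring
    · rw [hB2]; ring

/-- The out-radius of `F` at a `D1`-point equals `1 - e_I`. -/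
lemma spec_out (he : IsConcMap P A e) {F : ↥P × ↥JJ × ↥I → M × ↥JJ × ↥I}
    (hF : IsSigmaOf P e F) (p : ↥P) (s : ↥JJ) (t : ↥I)
    (h1 : rr (s : ℝ) (t : ℝ) ≤ 1) :
    ∃ r : ↥I, (r : ℝ) = 1 - rr (s : ℝ) (t : ℝ) ∧
      (F (p, s, t)).1 = (e (p, r)).1 ∧
      ((F (p, s, t)).2.1 : ℝ) = (1 - ((e (p, r)).2 : ℝ)) * ((s : ℝ) / rr (s : ℝ) (t : ℝ)) ∧
      ((F (p, s, t)).2.2 : ℝ)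
        = 1 - (1 - ((e (p, r)).2 : ℝ)) * ((1 - (t : ℝ)) / rr (s : ℝ) (t : ℝ)) ∧
      ((F (p, s, t)).2.1 : ℝ) ^ 2 + (1 - ((F (p, s, t)).2.2 : ℝ)) ^ 2
        = (1 - ((e (p, r)).2 : ℝ)) ^ 2 := by
  obtain ⟨r, hr, hA, hB1, hB2⟩ := specD1 he hF p s t h1
  refine ⟨r, hr, hA, hB1, hB2, ?_⟩
  set ρ : ℝ := rr (s : ℝ) (t : ℝ) with hρ
  have hρsq : ρ ^ 2 = (s : ℝ) ^ 2 + (1 - (t : ℝ)) ^ 2 := rr_sq _ _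
  rcases eq_or_ne ρ 0 with hz | hne
  · obtain ⟨hs0, ht1⟩ := rr_eq_zero (s := (s:ℝ)) (t := (t:ℝ)) hz
    have heI : ((e (p, r)).2 : ℝ) = 1 := e_one he p r (by rw [hr, hz]; ring)
    rw [hB1, hB2, heI, hs0, ht1]
    ring
  · have key : ((1 - ((e (p, r)).2:ℝ)) * ((s:ℝ) / ρ)) ^ 2
        + (1 - (1 - (1 - ((e (p, r)).2:ℝ)) * ((1 - (t:ℝ)) / ρ))) ^ 2
        = (1 - ((e (p, r)).2:ℝ)) ^ 2 * (((s:ℝ) ^ 2 + (1 - (t:ℝ)) ^ 2) / ρ ^ 2) := by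
      ring
    rw [hB1, hB2, key, ← hρsq, div_self (pow_ne_zero 2 hne), mul_one]

set_option maxHeartbeats 1000000 in
lemma sigma_inj (he : IsConcMap P A e) (heInj : Function.Injective e)
    {F : ↥P × ↥JJ × ↥I → M × ↥JJ × ↥I} (hF : IsSigmaOf P e F) :
    Function.Injective F := by
  rintro ⟨p, s, t⟩ ⟨q, u, v⟩ hxy
  have hρ0 : 0 ≤ rr (s:ℝ) (t:ℝ) := rr_nonneg _ _
  have hρ'0 : 0 ≤ rr (u:ℝ) (v:ℝ) := rr_nonneg _ _
  have hρsq : rr (s:ℝ) (t:ℝ) ^ 2 = (s : ℝ) ^ 2 + (1 - (t : ℝ)) ^ 2 := rr_sq _ _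
  have hρ'sq : rr (u:ℝ) (v:ℝ) ^ 2 = (u : ℝ) ^ 2 + (1 - (v : ℝ)) ^ 2 := rr_sq _ _
  have hM : (F (p, s, t)).1 = (F (q, u, v)).1 := congrArg Prod.fst hxy
  have hS : ((F (p, s, t)).2.1 : ℝ) = ((F (q, u, v)).2.1 : ℝ) := by rw [hxy]
  have hT : ((F (p, s, t)).2.2 : ℝ) = ((F (q, u, v)).2.2 : ℝ) := by rw [hxy]
  by_cases h1 : rr (s:ℝ) (t:ℝ) ≤ 1 <;> by_cases h2 : rr (u:ℝ) (v:ℝ) ≤ 1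
  · -- both in D1
    obtain ⟨r, hr, hA, hB1, hB2, hO⟩ := spec_out he hF p s t h1
    obtain ⟨r', hr', hA', hB1', hB2', hO'⟩ := spec_out he hF q u v h2
    have hc01 : 0 ≤ ((e (p, r)).2 : ℝ) ∧ ((e (p, r)).2 : ℝ) ≤ 1 :=
      ⟨(e (p, r)).2.2.1, (e (p, r)).2.2.2⟩
    have hc01' : 0 ≤ ((e (q, r')).2 : ℝ) ∧ ((e (q, r')).2 : ℝ) ≤ 1 :=
      ⟨(e (q, r')).2.2.1, (e (q, r')).2.2.2⟩
    have hcc : ((e (p, r)).2 : ℝ) = ((e (q, r')).2 : ℝ) := by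
      have h := hO.symm.trans ((by rw [hS, hT] : ((F (p,s,t)).2.1 : ℝ) ^ 2 + (1 - ((F (p,s,t)).2.2 : ℝ)) ^ 2 = ((F (q,u,v)).2.1 : ℝ) ^ 2 + (1 - ((F (q,u,v)).2.2 : ℝ)) ^ 2).trans hO')
      nlinarith [hc01.1, hc01.2, hc01'.1, hc01'.2]
    have hee : e (p, r) = e (q, r') := by
      refine Prod.ext ?_ ?_
      · rw [← hA, ← hA', hM]
      · exact Subtype.ext hcc
    have hpr : (p, r) = (q, r') := heInj hee
    have hpq : p = q := congrArg Prod.fst hpr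
    have hrr : r = r' := congrArg Prod.snd hpr
    have hρρ : rr (s:ℝ) (t:ℝ) = rr (u:ℝ) (v:ℝ) := by
      have h : (r : ℝ) = (r' : ℝ) := by rw [hrr]
      rw [hr, hr'] at h; linarith
    have hstuv : (s : ℝ) = (u : ℝ) ∧ (t : ℝ) = (v : ℝ) := by
      rcases eq_or_ne (rr (s:ℝ) (t:ℝ)) 0 with hz | hne
      · obtain ⟨hs0, ht1⟩ := rr_eq_zero (s := (s:ℝ)) (t := (t:ℝ)) hz
        obtain ⟨hu0, hv1⟩ := rr_eq_zero (s := (u:ℝ)) (t := (v:ℝ)) (by rw [← hρρ, hz])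
        exact ⟨by rw [hs0, hu0], by rw [ht1, hv1]⟩
      · have hcne : ((e (p, r)).2 : ℝ) ≠ 1 := by
          intro hc1
          have hone : r = 1 := (he.2.1 (p, r)).2.mp (Subtype.ext (by simpa using hc1))
          have : (r : ℝ) = 1 := by rw [hone]; simp
          rw [hr] at this
          exact hne (by linarith)
        have hdpos : 0 < 1 - ((e (p, r)).2 : ℝ) :=
          lt_of_le_of_ne (by linarith [hc01.2]) (by intro h; exact hcne (by linarith))
        have hρpos : 0 < rr (s:ℝ) (t:ℝ) := lt_of_le_of_ne hρ0 (Ne.symm hne)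
        rw [hB1, hB1'] at hS
        rw [hB2, hB2'] at hT
        rw [← hcc, ← hρρ] at hS hT
        constructor
        · have h := mul_left_cancel₀ (ne_of_gt hdpos) hS
          field_simp [ne_of_gt hρpos] at h
          exact h
        · have h' : (1 - ((e (p, r)).2:ℝ)) * ((1 - (t:ℝ)) / rr (s:ℝ) (t:ℝ))
              = (1 - ((e (p, r)).2:ℝ)) * ((1 - (v:ℝ)) / rr (s:ℝ) (t:ℝ)) := by linarith
          have h := mul_left_cancel₀ (ne_of_gt hdpos) h'
          field_simp [ne_of_gt hρpos] at h
          linarith [h]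
    exact Prod.ext hpq (Prod.ext (Subtype.ext hstuv.1) (Subtype.ext hstuv.2))
  · -- ρ ≤ 1 < ρ' : impossible
    exfalso
    push_neg at h2
    obtain ⟨r, hr, hA, hB1, hB2, hO⟩ := spec_out he hF p s t h1
    have hFy : F (q, u, v) = ((q : M), u, v) := specD2 hF q u v h2.le
    have hc01 : 0 ≤ ((e (p, r)).2 : ℝ) ∧ ((e (p, r)).2 : ℝ) ≤ 1 :=
      ⟨(e (p, r)).2.2.1, (e (p, r)).2.2.2⟩
    have hout : ((F (q,u,v)).2.1 : ℝ) ^ 2 + (1 - ((F (q,u,v)).2.2 : ℝ)) ^ 2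
        = rr (u:ℝ) (v:ℝ) ^ 2 := by rw [hFy, hρ'sq]
    rw [← hS, ← hT, hO] at hout
    nlinarith [hc01.1, hc01.2]
  · -- ρ' ≤ 1 < ρ : impossible
    exfalso
    push_neg at h1
    obtain ⟨r, hr, hA, hB1, hB2, hO⟩ := spec_out he hF q u v h2
    have hFx : F (p, s, t) = ((p : M), s, t) := specD2 hF p s t h1.le
    have hc01 : 0 ≤ ((e (q, r)).2 : ℝ) ∧ ((e (q, r)).2 : ℝ) ≤ 1 :=
      ⟨(e (q, r)).2.2.1, (e (q, r)).2.2.2⟩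
    have hout : ((F (p,s,t)).2.1 : ℝ) ^ 2 + (1 - ((F (p,s,t)).2.2 : ℝ)) ^ 2
        = rr (s:ℝ) (t:ℝ) ^ 2 := by rw [hFx, hρsq]
    rw [hS, hT, hO] at hout
    nlinarith [hc01.1, hc01.2]
  · -- both in D2
    push_neg at h1 h2
    have hFx : F (p, s, t) = ((p : M), s, t) := specD2 hF p s t h1.le
    have hFy : F (q, u, v) = ((q : M), u, v) := specD2 hF q u v h2.le
    rw [hFx, hFy] at hxy
    have hpq : (p : M) = (q : M) := congrArg Prod.fst hxy
    have h2' : ((p:M), s, t).2 = ((q:M), u, v).2 := congrArg Prod.snd hxy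
    exact Prod.ext (Subtype.ext hpq) h2'

lemma div_abs_le₁ (s t : ℝ) : |s / rr s t| ≤ 1 := by
  rcases eq_or_lt_of_le (rr_nonneg s t) with h | h
  · rw [← h, div_zero, abs_zero]; norm_num
  · rw [abs_div, abs_of_pos h, div_le_one h]; exact abs_le_rr s t

lemma div_abs_le₂ (s t : ℝ) : |(1 - t) / rr s t| ≤ 1 := by
  rcases eq_or_lt_of_le (rr_nonneg s t) with h | h
  · rw [← h, div_zero, abs_zero]; norm_num
  · rw [abs_div, abs_of_pos h, div_le_one h]; exact sub_le_rr s t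

set_option maxHeartbeats 1000000 in
lemma sigma_cont (he : IsConcMap P A e) {F : ↥P × ↥JJ × ↥I → M × ↥JJ × ↥I}
    (hF : IsSigmaOf P e F) : Continuous F := by
  classical
  -- the radius function
  set ρf : ↥P × ↥JJ × ↥I → ℝ := fun x => rr (x.2.1 : ℝ) (x.2.2 : ℝ) with hρf
  have contρ : Continuous ρf := by
    apply Real.continuous_sqrt.comp
    fun_prop
  -- the clamped radial coordinate
  set rbar : ↥P × ↥JJ × ↥I → ↥I := fun x => Set.projIcc 0 1 zero_le_one (1 - ρf x) with hrbar
  have contrbar : Continuous rbar := continuous_projIcc.comp (continuous_const.sub contρ)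
  have conteb : Continuous fun x : ↥P × ↥JJ × ↥I => e (x.1, rbar x) :=
    he.1.comp (continuous_fst.prodMk contrbar)
  set cI : ↥P × ↥JJ × ↥I → ℝ := fun x => ((e (x.1, rbar x)).2 : ℝ) with hcI
  have contcI : Continuous cI := continuous_subtype_val.comp (continuous_snd.comp conteb)
  have hcI_le : ∀ x, cI x ≤ 1 := fun x => (e (x.1, rbar x)).2.2.2
  have hcI_nn : ∀ x, 0 ≤ cI x := fun x => (e (x.1, rbar x)).2.2.1
  -- coordinate functions of the subtypes
  have conts : Continuous fun x : ↥P × ↥JJ × ↥I => (x.2.1 : ℝ) := by fun_prop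
  have contt : Continuous fun x : ↥P × ↥JJ × ↥I => (x.2.2 : ℝ) := by fun_prop
  -- at radius 0 the factor 1 - cI vanishes
  have hcI_zero : ∀ x : ↥P × ↥JJ × ↥I, ρf x = 0 → cI x = 1 := by
    intro x hx
    apply e_one he x.1 (rbar x)
    rw [hrbar]
    simp only [Set.coe_projIcc, hx, sub_zero]
    norm_num
  -- the two scaled coordinates are continuous (squeeze at the centre)
  have contG2 : Continuous fun x : ↥P × ↥JJ × ↥I => (1 - cI x) * ((x.2.1 : ℝ) / ρf x) := by
    rw [continuous_iff_continuousAt]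
    intro x₀
    by_cases hz : ρf x₀ = 0
    · have hval : (1 - cI x₀) * ((x₀.2.1 : ℝ) / ρf x₀) = 0 := by
        rw [hcI_zero x₀ hz]; ring
      have htend : Filter.Tendsto (fun x : ↥P × ↥JJ × ↥I => (1 - cI x) * ((x.2.1 : ℝ) / ρf x))
          (𝓝 x₀) (𝓝 0) := by
        apply squeeze_zero_norm (a := fun x => 1 - cI x)
        · intro x
          rw [Real.norm_eq_abs, abs_mul, abs_of_nonneg (by linarith [hcI_le x])]
          calc (1 - cI x) * |(x.2.1 : ℝ) / ρf x| ≤ (1 - cI x) * 1 :=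
                mul_le_mul_of_nonneg_left (div_abs_le₁ _ _) (by linarith [hcI_le x])
            _ = 1 - cI x := mul_one _
        · have h0 : (1 : ℝ) - cI x₀ = 0 := by rw [hcI_zero x₀ hz]; ring
          rw [← h0]
          exact ((continuous_const.sub contcI).tendsto x₀)
      unfold ContinuousAt
      have hval' : (fun x : ↥P × ↥JJ × ↥I => (1 - cI x) * ((x.2.1 : ℝ) / ρf x)) x₀ = 0 := hval
      rw [hval']
      exact htend
    · exact ((continuous_const.sub contcI).continuousAt).mul
        ((conts.continuousAt).div (contρ.continuousAt) hz)
  have contG3 : Continuous fun x : ↥P × ↥JJ × ↥I =>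
      1 - (1 - cI x) * ((1 - (x.2.2 : ℝ)) / ρf x) := by
    apply continuous_const.sub
    rw [continuous_iff_continuousAt]
    intro x₀
    by_cases hz : ρf x₀ = 0
    · have hval : (1 - cI x₀) * ((1 - (x₀.2.2 : ℝ)) / ρf x₀) = 0 := by
        rw [hcI_zero x₀ hz]; ring
      have htend : Filter.Tendsto (fun x : ↥P × ↥JJ × ↥I => (1 - cI x) * ((1 - (x.2.2 : ℝ)) / ρf x))
          (𝓝 x₀) (𝓝 0) := by
        apply squeeze_zero_norm (a := fun x => 1 - cI x)
        · intro x
          rw [Real.norm_eq_abs, abs_mul, abs_of_nonneg (by linarith [hcI_le x])]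
          calc (1 - cI x) * |(1 - (x.2.2 : ℝ)) / ρf x| ≤ (1 - cI x) * 1 :=
                mul_le_mul_of_nonneg_left (div_abs_le₂ _ _) (by linarith [hcI_le x])
            _ = 1 - cI x := mul_one _
        · have h0 : (1 : ℝ) - cI x₀ = 0 := by rw [hcI_zero x₀ hz]; ring
          rw [← h0]
          exact ((continuous_const.sub contcI).tendsto x₀)
      unfold ContinuousAt
      have hval' : (fun x : ↥P × ↥JJ × ↥I => (1 - cI x) * ((1 - (x.2.2 : ℝ)) / ρf x)) x₀ = 0 := hval
      rw [hval']
      exact htend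
    · exact ((continuous_const.sub contcI).continuousAt).mul
        (((continuous_const.sub contt).continuousAt).div (contρ.continuousAt) hz)
  -- for points with radius ≤ 1, rbar matches the `r` of the spec
  have hrbar_spec : ∀ x : ↥P × ↥JJ × ↥I, ρf x ≤ 1 → ((rbar x : ℝ)) = 1 - ρf x := by
    intro x hx
    have h0 : 0 ≤ ρf x := rr_nonneg _ _
    rw [hrbar]
    simp only [Set.coe_projIcc]
    rw [min_eq_right (by linarith), max_eq_right (by linarith)]
  -- at radius 1, rbar is 0 and e is the inclusion
  have hbound : ∀ x : ↥P × ↥JJ × ↥I, ρf x = 1 → e (x.1, rbar x) = ((x.1 : M), 0) := by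
    intro x hx
    have : rbar x = 0 := Subtype.ext (by rw [hrbar_spec x hx.le, hx]; norm_num)
    rw [this]
    exact e_zero he x.1
  -- the three coordinate functions of F
  have key1 : (fun x : ↥P × ↥JJ × ↥I => (F x).1)
      = fun x => if ρf x ≤ 1 then (e (x.1, rbar x)).1 else (x.1 : M) := by
    funext x
    obtain ⟨p, s, t⟩ := x
    by_cases h : ρf (p, s, t) ≤ 1
    · rw [if_pos h]
      obtain ⟨r, hr, hA, -⟩ := specD1 he hF p s t h
      rw [hA]
      have hreq : rbar (p, s, t) = r := by
        apply Subtype.ext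
        have h1 := hrbar_spec (p, s, t) h
        rw [h1, hr]
      rw [hreq]
    · rw [if_neg h]
      push_neg at h
      rw [specD2 hF p s t h.le]
  have key2 : (fun x : ↥P × ↥JJ × ↥I => ((F x).2.1 : ℝ))
      = fun x => if ρf x ≤ 1 then (1 - cI x) * ((x.2.1 : ℝ) / ρf x) else (x.2.1 : ℝ) := by
    funext x
    obtain ⟨p, s, t⟩ := x
    by_cases h : ρf (p, s, t) ≤ 1
    · rw [if_pos h]
      obtain ⟨r, hr, -, hB1, -⟩ := specD1 he hF p s t h
      rw [hB1]
      have hreq : rbar (p, s, t) = r := by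
        apply Subtype.ext
        have h1 := hrbar_spec (p, s, t) h
        rw [h1, hr]
      have hc : cI (p, s, t) = ((e (p, r)).2 : ℝ) := by
        show ((e (p, rbar (p, s, t))).2 : ℝ) = _
        rw [hreq]
      rw [hc]
    · rw [if_neg h]
      push_neg at h
      rw [specD2 hF p s t h.le]
  have key3 : (fun x : ↥P × ↥JJ × ↥I => ((F x).2.2 : ℝ))
      = fun x => if ρf x ≤ 1 then 1 - (1 - cI x) * ((1 - (x.2.2 : ℝ)) / ρf x) else (x.2.2 : ℝ) := by
    funext x
    obtain ⟨p, s, t⟩ := x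
    by_cases h : ρf (p, s, t) ≤ 1
    · rw [if_pos h]
      obtain ⟨r, hr, -, -, hB2⟩ := specD1 he hF p s t h
      rw [hB2]
      have hreq : rbar (p, s, t) = r := by
        apply Subtype.ext
        have h1 := hrbar_spec (p, s, t) h
        rw [h1, hr]
      have hc : cI (p, s, t) = ((e (p, r)).2 : ℝ) := by
        show ((e (p, rbar (p, s, t))).2 : ℝ) = _
        rw [hreq]
      rw [hc]
    · rw [if_neg h]
      push_neg at h
      rw [specD2 hF p s t h.le]
  -- continuity of the coordinates via gluing along ρf = 1
  have c1 : Continuous fun x : ↥P × ↥JJ × ↥I => (F x).1 := by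
    rw [key1]
    refine Continuous.if_le (continuous_fst.comp conteb)
      (continuous_subtype_val.comp continuous_fst) contρ continuous_const ?_
    intro x hx
    rw [hbound x hx]
  have c2r : Continuous fun x : ↥P × ↥JJ × ↥I => ((F x).2.1 : ℝ) := by
    rw [key2]
    refine Continuous.if_le contG2 conts contρ continuous_const ?_
    intro x hx
    have h0 : cI x = 0 := by
      simp only [hcI]
      rw [hbound x hx]
      simp
    rw [h0, hx]
    norm_num
  have c3r : Continuous fun x : ↥P × ↥JJ × ↥I => ((F x).2.2 : ℝ) := by
    rw [key3]
    refine Continuous.if_le contG3 contt contρ continuous_const ?_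
    intro x hx
    have h0 : cI x = 0 := by
      simp only [hcI]
      rw [hbound x hx]
      simp
    rw [h0, hx]
    ring
  have c2 : Continuous fun x : ↥P × ↥JJ × ↥I => (F x).2.1 := continuous_induced_rng.2 c2r
  have c3 : Continuous fun x : ↥P × ↥JJ × ↥I => (F x).2.2 := continuous_induced_rng.2 c3r
  exact c1.prodMk (c2.prodMk c3)

end Stab4

theorem statement4 {M : Type} [TopologicalSpace M] (P A : Set M) (hAP : A ⊆ P)
    (e : ↥P × ↥I → M × ↥I) (he : IsConcMap P A e) (heInj : Function.Injective e)
    (F : ↥P × ↥JJ × ↥I → M × ↥JJ × ↥I) (hF : IsSigmaOf P e F) :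
    -- σ(e) = F is injective;
    Function.Injective F ∧
    -- in particular, if `P` is compact Hausdorff and `M` is Hausdorff, then both the injective
    -- continuous concordance map `e` and its stabilisation `σ(e) = F` are closed topological
    -- embeddings.
    (∀ (_ : T2Space M) (_ : IsCompact P) (_ : T2Space ↥P),
      IsClosedEmbedding e ∧ IsClosedEmbedding F) := by
  refine ⟨Stab4.sigma_inj he heInj hF, ?_⟩
  intro hT2 hPc hPT2
  haveI : T2Space M := hT2
  haveI : CompactSpace ↥P := isCompact_iff_compactSpace.mp hPc
  haveI : T2Space ↥P := hPT2
  exact ⟨he.1.isClosedEmbedding heInj,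
    (Stab4.sigma_cont he hF).isClosedEmbedding (Stab4.sigma_inj he heInj hF)⟩
end
end

section
/- (Characterisation of the stabilised map, Section 3.6.1 of 'Stability of concordance embeddings'.) Assume M is Hausdorff. For every continuous concordance map e of P in M, σ(e) is the unique continuous map F : P×J×I → M×J×I that agrees with the inclusion (p,s,t) ↦ (p,s,t) on P×D₂ and satisfies F(p, Λ(r,θ)) = (e_M(p,r), Λ(e_I(p,r),θ)) for all p ∈ P and all (r,θ) ∈ [0,1)×[0,π]; here the second condition determines F on P×(D₁ ∖ {(0,1)}) since Λ restricts to a homeomorphism [0,1)×[0,π] ≅ D₁ ∖ {(0,1)}. -/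
/-!
STATEMENT 5: characterisation of the stabilised map `σ(e)` as the unique continuous map that
is the inclusion on `P × D₂` and is given by the polar formula on `P × (D₁ ∖ {(0,1)})`.
-/
open Set unitInterval Topology

noncomputable section

namespace Stmt5Aux
set_option linter.unusedSectionVars false

lemma abs_div_le_one' {a b : ℝ} (h : |a| ≤ b) : |a / b| ≤ 1 := by
  rcases eq_or_lt_of_le ((abs_nonneg a).trans h) with hb | hb
  · have ha : a = 0 := abs_eq_zero.mp (le_antisymm (hb ▸ h) (abs_nonneg a))
    simp [ha]
  · rw [abs_div, abs_of_pos hb]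
    exact (div_le_one hb).mpr h

variable {M : Type} [TopologicalSpace M] {P A : Set M}

def sx (x : ↥P × ↥JJ × ↥I) : ℝ := (x.2.1 : ℝ)
def tx (x : ↥P × ↥JJ × ↥I) : ℝ := (x.2.2 : ℝ)
def rho (x : ↥P × ↥JJ × ↥I) : ℝ := Real.sqrt (sx x ^ 2 + (tx x - 1) ^ 2)

lemma rho_nonneg (x : ↥P × ↥JJ × ↥I) : 0 ≤ rho x := Real.sqrt_nonneg _

lemma sq_rho (x : ↥P × ↥JJ × ↥I) : rho x ^ 2 = sx x ^ 2 + (tx x - 1) ^ 2 :=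
  Real.sq_sqrt (by positivity)

lemma abs_sx_le_one (x : ↥P × ↥JJ × ↥I) : |sx x| ≤ 1 :=
  abs_le.mpr ⟨x.2.1.2.1, x.2.1.2.2⟩

lemma tx_mem (x : ↥P × ↥JJ × ↥I) : 0 ≤ tx x ∧ tx x ≤ 1 := ⟨x.2.2.2.1, x.2.2.2.2⟩

lemma abs_sx_le_rho (x : ↥P × ↥JJ × ↥I) : |sx x| ≤ rho x := by
  rw [rho, ← Real.sqrt_sq_eq_abs]
  exact Real.sqrt_le_sqrt (by nlinarith [sq_nonneg (tx x - 1)])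

lemma sub_tx_le_rho (x : ↥P × ↥JJ × ↥I) : 1 - tx x ≤ rho x := by
  have h := (tx_mem x).2
  calc 1 - tx x = |tx x - 1| := by rw [abs_sub_comm, abs_of_nonneg (by linarith)]
    _ ≤ rho x := by
        rw [rho, ← Real.sqrt_sq_eq_abs]
        exact Real.sqrt_le_sqrt (by nlinarith [sq_nonneg (sx x)])

def mm (x : ↥P × ↥JJ × ↥I) : ℝ := min 1 (rho x)

lemma mm_nonneg (x : ↥P × ↥JJ × ↥I) : 0 ≤ mm x := le_min zero_le_one (rho_nonneg x)

lemma abs_sx_le_mm (x : ↥P × ↥JJ × ↥I) : |sx x| ≤ mm x :=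
  le_min (abs_sx_le_one x) (abs_sx_le_rho x)

lemma sub_tx_le_mm (x : ↥P × ↥JJ × ↥I) : 1 - tx x ≤ mm x :=
  le_min (by linarith [(tx_mem x).1]) (sub_tx_le_rho x)

def rr (x : ↥P × ↥JJ × ↥I) : ↥I :=
  ⟨max 0 (1 - rho x), le_max_left _ _, max_le zero_le_one (by linarith [rho_nonneg x])⟩

variable (e : ↥P × ↥I → M × ↥I)

def uu (x : ↥P × ↥JJ × ↥I) : ℝ := 1 - ((e (x.1, rr x)).2 : ℝ)

lemma uu_mem (x : ↥P × ↥JJ × ↥I) : 0 ≤ uu e x ∧ uu e x ≤ 1 := by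
  have h1 : (0:ℝ) ≤ ((e (x.1, rr x)).2 : ℝ) := (e (x.1, rr x)).2.2.1
  have h2 : ((e (x.1, rr x)).2 : ℝ) ≤ 1 := (e (x.1, rr x)).2.2.2
  exact ⟨by simp [uu]; linarith, by simp [uu]; linarith⟩

def F2 (x : ↥P × ↥JJ × ↥I) : ℝ := uu e x * (sx x / mm x)
def F3 (x : ↥P × ↥JJ × ↥I) : ℝ := 1 - uu e x * ((1 - tx x) / mm x)

lemma F2_mem (x : ↥P × ↥JJ × ↥I) : F2 e x ∈ JJ := by
  have h1 : |sx x / mm x| ≤ 1 := abs_div_le_one' (abs_sx_le_mm x)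
  have h2 := uu_mem e x
  have : |F2 e x| ≤ 1 := by
    rw [F2, abs_mul, abs_of_nonneg h2.1]
    calc uu e x * |sx x / mm x| ≤ 1 * 1 := by
          apply mul_le_mul h2.2 h1 (abs_nonneg _) zero_le_one
      _ = 1 := one_mul 1
  exact abs_le.mp this

lemma q3_mem (x : ↥P × ↥JJ × ↥I) :
    0 ≤ (1 - tx x) / mm x ∧ (1 - tx x) / mm x ≤ 1 := by
  have h0 : 0 ≤ 1 - tx x := by linarith [(tx_mem x).2]
  refine ⟨div_nonneg h0 (mm_nonneg x), ?_⟩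
  have := abs_div_le_one' (b := mm x) (a := 1 - tx x) (by rw [abs_of_nonneg h0]; exact sub_tx_le_mm x)
  exact (abs_le.mp this).2

lemma F3_mem (x : ↥P × ↥JJ × ↥I) : F3 e x ∈ I := by
  have h1 := q3_mem x
  have h2 := uu_mem e x
  have hu : 0 ≤ uu e x * ((1 - tx x) / mm x) := mul_nonneg h2.1 h1.1
  have hu2 : uu e x * ((1 - tx x) / mm x) ≤ 1 := by
    calc uu e x * ((1 - tx x) / mm x) ≤ 1 * 1 := mul_le_mul h2.2 h1.2 h1.1 zero_le_one
      _ = 1 := one_mul 1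
  exact ⟨by simp [F3]; linarith, by simp [F3]; linarith⟩

def Fmap (x : ↥P × ↥JJ × ↥I) : M × ↥JJ × ↥I :=
  ((e (x.1, rr x)).1, ⟨F2 e x, F2_mem e x⟩, ⟨F3 e x, F3_mem e x⟩)

lemma Lam_eval (r θ : ℝ) :
    Lam (r, θ) = (-((1 - r) * Real.cos θ), 1 - (1 - r) * Real.sin θ) := by
  simp only [Lam, Real.cos_add_pi, Real.sin_add_pi]
  exact Prod.ext_iff.mpr ⟨by ring, by ring⟩

lemma e_zero (he : IsConcMap P A e) (p : ↥P) : e (p, 0) = ((p : M), 0) := by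
  obtain ⟨-, -, U, -, hsub, hU⟩ := he
  exact hU (p, 0) (hsub (Set.mem_union_left _ rfl))

lemma eI_one (he : IsConcMap P A e) (p : ↥P) : (e (p, 1)).2 = 1 :=
  (he.2.1 (p, 1)).2.mpr rfl

lemma sigma_clause2 (he : IsConcMap P A e) (p : ↥P) (s : ↥JJ) (t : ↥I)
    (h : ((s : ℝ), (t : ℝ)) ∈ D2) : Fmap e (p, s, t) = ((p : M), s, t) := by
  set x : ↥P × ↥JJ × ↥I := (p, s, t) with hx
  have hv : (1:ℝ) ≤ sx x ^ 2 + (tx x - 1) ^ 2 := h.2.2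
  have hρ : 1 ≤ rho x := by
    calc (1:ℝ) = Real.sqrt 1 := Real.sqrt_one.symm
      _ ≤ rho x := Real.sqrt_le_sqrt hv
  have hrr : rr x = 0 := Subtype.ext (by
    show max 0 (1 - rho x) = 0
    exact max_eq_left (by linarith))
  have he0 := e_zero e he p
  have hmm : mm x = 1 := min_eq_left hρ
  have huu : uu e x = 1 := by
    rw [uu, hrr]
    show 1 - ((e (p, 0)).2 : ℝ) = 1
    rw [he0]; norm_num
  refine Prod.ext_iff.mpr ⟨?_, Prod.ext_iff.mpr ⟨Subtype.ext ?_, Subtype.ext ?_⟩⟩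
  · show (e (x.1, rr x)).1 = (p : M)
    rw [hrr]; show (e (p, 0)).1 = (p : M); rw [he0]
  · show F2 e x = (s : ℝ)
    rw [F2, huu, hmm]; simp [sx, hx]
  · show F3 e x = (t : ℝ)
    rw [F3, huu, hmm]; simp [tx, hx]

lemma sigma_clause1 (he : IsConcMap P A e) (p : ↥P) (s : ↥JJ) (t : ↥I) (r : ↥I) (θ : ℝ)
    (hst : ((s : ℝ), (t : ℝ)) = Lam ((r : ℝ), θ)) :
    (Fmap e (p, s, t)).1 = (e (p, r)).1 ∧
    (((Fmap e (p, s, t)).2.1 : ℝ), ((Fmap e (p, s, t)).2.2 : ℝ)) =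
      Lam (((e (p, r)).2 : ℝ), θ) := by
  set x : ↥P × ↥JJ × ↥I := (p, s, t) with hx
  rw [Lam_eval] at hst
  have hs : sx x = -((1 - (r:ℝ)) * Real.cos θ) := congrArg Prod.fst hst
  have ht : tx x = 1 - (1 - (r:ℝ)) * Real.sin θ := congrArg Prod.snd hst
  have hr0 : (0:ℝ) ≤ (r:ℝ) := r.2.1
  have hr1 : (r:ℝ) ≤ 1 := r.2.2
  have htrig := Real.sin_sq_add_cos_sq θ
  have hρ : rho x = 1 - (r:ℝ) := by
    rw [rho, hs, ht]
    rw [show (-((1 - (r:ℝ)) * Real.cos θ)) ^ 2 + (1 - (1 - (r:ℝ)) * Real.sin θ - 1) ^ 2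
        = (1 - (r:ℝ)) ^ 2 by nlinarith]
    exact Real.sqrt_sq (by linarith)
  have hrr : rr x = r := Subtype.ext (by
    show max 0 (1 - rho x) = (r : ℝ)
    rw [hρ]
    rw [show 1 - (1 - (r:ℝ)) = (r:ℝ) by ring]
    exact max_eq_right hr0)
  have huu : uu e x = 1 - ((e (p, r)).2 : ℝ) := by rw [uu, hrr]
  refine ⟨by rw [show (Fmap e x).1 = (e (x.1, rr x)).1 from rfl, hrr], ?_⟩
  rw [Lam_eval]
  have hF2 : ((Fmap e x).2.1 : ℝ) = F2 e x := rfl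
  have hF3 : ((Fmap e x).2.2 : ℝ) = F3 e x := rfl
  rw [hF2, hF3]
  rcases eq_or_lt_of_le hr1 with hre | hrlt
  · -- r = 1
    have heI : ((e (p, r)).2 : ℝ) = 1 := by
      have : r = 1 := Subtype.ext (by rw [hre]; rfl)
      rw [this, eI_one e he p]; rfl
    have hu0 : uu e x = 0 := by rw [huu, heI]; ring
    refine Prod.ext_iff.mpr ⟨?_, ?_⟩ <;> simp [F2, F3, hu0, heI]
  · -- r < 1
    have hmm : mm x = 1 - (r:ℝ) := by
      rw [mm, hρ]; exact min_eq_right (by linarith)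
    have hne : (1:ℝ) - (r:ℝ) ≠ 0 := by linarith
    refine Prod.ext_iff.mpr ⟨?_, ?_⟩
    · show F2 e x = -((1 - ((e (p, r)).2 : ℝ)) * Real.cos θ)
      rw [F2, huu, hmm, hs]
      field_simp
      try ring
    · show F3 e x = 1 - (1 - ((e (p, r)).2 : ℝ)) * Real.sin θ
      rw [F3, huu, hmm, ht]
      field_simp
      try ring
lemma cont_sx : Continuous (sx (P := P)) :=
  continuous_subtype_val.comp (continuous_fst.comp continuous_snd)

lemma cont_tx : Continuous (tx (P := P)) :=
  continuous_subtype_val.comp (continuous_snd.comp continuous_snd)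

lemma cont_rho : Continuous (rho (P := P)) :=
  Real.continuous_sqrt.comp (((cont_sx.pow 2)).add ((cont_tx.sub continuous_const).pow 2))

lemma cont_mm : Continuous (mm (P := P)) := continuous_const.min cont_rho

lemma cont_rr : Continuous (rr (P := P)) :=
  Continuous.subtype_mk (continuous_const.max (continuous_const.sub cont_rho)) _

lemma cont_uu (hc : Continuous e) : Continuous (uu e) :=
  continuous_const.sub
    (continuous_subtype_val.comp ((hc.comp (continuous_fst.prodMk cont_rr)).snd))

lemma rho_eq_zero {x : ↥P × ↥JJ × ↥I} (h : rho x = 0) : sx x = 0 ∧ tx x = 1 := by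
  have hv : sx x ^ 2 + (tx x - 1) ^ 2 = 0 := by
    have := sq_rho x
    rw [h] at this
    linarith [this.symm]
  have h1 : sx x ^ 2 = 0 := by nlinarith [sq_nonneg (sx x), sq_nonneg (tx x - 1)]
  have h2 : (tx x - 1) ^ 2 = 0 := by nlinarith [sq_nonneg (sx x), sq_nonneg (tx x - 1)]
  constructor
  · exact pow_eq_zero_iff two_ne_zero |>.mp h1
  · have h3 := pow_eq_zero_iff (n := 2) two_ne_zero |>.mp h2
    linarith [sub_eq_zero.mp h3]

lemma cont_mul_div (hc : Continuous e) (h1 : ∀ p : ↥P, (e (p, 1)).2 = 1)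
    (w : ↥P × ↥JJ × ↥I → ℝ) (hw : Continuous w) (hb : ∀ x, |w x| ≤ mm x) :
    Continuous (fun x => uu e x * (w x / mm x)) := by
  have hcu : Continuous (uu e) := cont_uu e hc
  have hcm : Continuous (mm (P := P)) := cont_mm
  rw [continuous_iff_continuousAt]
  intro x₀
  by_cases h0 : rho x₀ = 0
  · have hrr1 : rr x₀ = 1 := Subtype.ext (by
      show max 0 (1 - rho x₀) = ((1 : ↥I) : ℝ)
      rw [h0]; norm_num)
    have hu0 : uu e x₀ = 0 := by
      rw [uu, hrr1]
      have := h1 x₀.1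
      rw [this]
      norm_num
    have hval : uu e x₀ * (w x₀ / mm x₀) = 0 := by rw [hu0]; ring
    have htend : Filter.Tendsto (fun x => uu e x * (w x / mm x)) (𝓝 x₀) (𝓝 0) := by
      apply squeeze_zero_norm (a := uu e)
      · intro x
        have hq : |w x / mm x| ≤ 1 := abs_div_le_one' (hb x)
        have hum := uu_mem e x
        calc ‖uu e x * (w x / mm x)‖ = |uu e x| * |w x / mm x| := abs_mul _ _
          _ ≤ uu e x * 1 := by
              rw [abs_of_nonneg hum.1]
              exact mul_le_mul_of_nonneg_left hq hum.1
          _ = uu e x := mul_one _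
      · rw [← hu0]; exact hcu.continuousAt
    simpa [ContinuousAt, hval] using htend
  · have hm : mm x₀ ≠ 0 := by
      have h2 : 0 < rho x₀ := lt_of_le_of_ne (rho_nonneg x₀) (Ne.symm h0)
      have h3 : 0 < mm x₀ := lt_min one_pos h2
      linarith
    exact hcu.continuousAt.mul (hw.continuousAt.div hcm.continuousAt hm)

lemma cont_Fmap (hc : Continuous e) (h1 : ∀ p : ↥P, (e (p, 1)).2 = 1) :
    Continuous (Fmap e) := by
  have c1 : Continuous fun x : ↥P × ↥JJ × ↥I => (e (x.1, rr x)).1 :=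
    (hc.comp (continuous_fst.prodMk cont_rr)).fst
  have c2 : Continuous (F2 e) := cont_mul_div e hc h1 sx cont_sx abs_sx_le_mm
  have c3' : Continuous fun x : ↥P × ↥JJ × ↥I => uu e x * ((1 - tx x) / mm x) :=
    cont_mul_div e hc h1 _ (continuous_const.sub cont_tx)
      (fun x => by
        rw [abs_of_nonneg (by linarith [(tx_mem x).2])]
        exact sub_tx_le_mm x)
  have c3 : Continuous (F3 e) := continuous_const.sub c3'
  exact c1.prodMk ((c2.subtype_mk _).prodMk (c3.subtype_mk _))

lemma dense_ne_one : Dense {x : ↥P × ↥JJ × ↥I | tx x ≠ 1} := by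
  intro x
  by_cases h : tx x = 1
  · have hseq : ∀ n : ℕ, (1 - 1 / ((n : ℝ) + 2)) ∈ I := by
      intro n
      have h2 : (0 : ℝ) < (n : ℝ) + 2 := by positivity
      have h3 : 1 / ((n : ℝ) + 2) ≤ 1 := by
        rw [div_le_one h2]
        linarith [Nat.cast_nonneg (α := ℝ) n]
      have h4 : (0 : ℝ) ≤ 1 / ((n : ℝ) + 2) := by positivity
      exact ⟨by linarith, by linarith⟩
    have htend : Filter.Tendsto
        (fun n : ℕ => ((x.1, x.2.1, ⟨1 - 1 / ((n : ℝ) + 2), hseq n⟩) : ↥P × ↥JJ × ↥I))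
        Filter.atTop (𝓝 x) := by
      refine Filter.Tendsto.prodMk_nhds tendsto_const_nhds
        (Filter.Tendsto.prodMk_nhds tendsto_const_nhds ?_)
      rw [tendsto_subtype_rng]
      have hx2 : ((x.2.2 : ℝ)) = 1 := h
      rw [hx2]
      have hz : Filter.Tendsto (fun n : ℕ => 1 / ((n : ℝ) + 2)) Filter.atTop (𝓝 0) := by
        simp only [one_div]
        exact tendsto_inv_atTop_zero.comp
          (Filter.tendsto_atTop_add_const_right _ 2 tendsto_natCast_atTop_atTop)
      have hone : Filter.Tendsto (fun n : ℕ => (1 : ℝ) - 1 / ((n : ℝ) + 2))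
          Filter.atTop (𝓝 (1 - 0)) := tendsto_const_nhds.sub hz
      simpa using hone
    refine mem_closure_of_tendsto htend (Filter.Eventually.of_forall fun n => ?_)
    have h2 : (0 : ℝ) < 1 / ((n : ℝ) + 2) := by positivity
    show (1 : ℝ) - 1 / ((n : ℝ) + 2) ≠ 1
    intro hcon
    linarith
  · exact subset_closure h
end Stmt5Aux

theorem statement5 {M : Type} [TopologicalSpace M] [T2Space M] (P A : Set M) (hAP : A ⊆ P)
    (e : ↥P × ↥I → M × ↥I) (he : IsConcMap P A e) :
    ∃ F : ↥P × ↥JJ × ↥I → M × ↥JJ × ↥I,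
      -- σ(e) = F satisfies the two defining clauses of the stabilisation map,
      IsSigmaOf P e F ∧
      -- it is continuous,
      Continuous F ∧
      -- and it is the unique continuous map `G` that agrees with the inclusion on `P × D₂`
      -- and satisfies `G(p, Λ(r,θ)) = (e_M(p,r), Λ(e_I(p,r),θ))` for all `p ∈ P` and all
      -- `(r,θ) ∈ [0,1) × [0,π]`.
      (∀ G : ↥P × ↥JJ × ↥I → M × ↥JJ × ↥I,
        Continuous G →
        (∀ (p : ↥P) (s : ↥JJ) (t : ↥I), ((s : ℝ), (t : ℝ)) ∈ D2 →
          G (p, s, t) = ((p : M), s, t)) →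
        (∀ (p : ↥P) (r : ↥I) (θ : ℝ), (r : ℝ) < 1 → θ ∈ Set.Icc 0 Real.pi →
          ∀ (s : ↥JJ) (t : ↥I), ((s : ℝ), (t : ℝ)) = Lam ((r : ℝ), θ) →
          (G (p, s, t)).1 = (e (p, r)).1 ∧
          (((G (p, s, t)).2.1 : ℝ), ((G (p, s, t)).2.2 : ℝ)) = Lam (((e (p, r)).2 : ℝ), θ)) →
        G = F) := by
  classical
  have h1 : ∀ p : ↥P, (e (p, 1)).2 = 1 := fun p => Stmt5Aux.eI_one e he p
  have hFc : Continuous (Stmt5Aux.Fmap e) := Stmt5Aux.cont_Fmap e he.1 h1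
  refine ⟨Stmt5Aux.Fmap e,
    ⟨fun p s t r θ _ hst => Stmt5Aux.sigma_clause1 e he p s t r θ hst,
     fun p s t h => Stmt5Aux.sigma_clause2 e he p s t h⟩, hFc, ?_⟩
  intro G hGc hG2 hG1
  apply Continuous.ext_on Stmt5Aux.dense_ne_one hGc hFc
  intro x hx
  have hxne : Stmt5Aux.tx x ≠ 1 := hx
  have hρpos : 0 < Stmt5Aux.rho x := by
    rw [Stmt5Aux.rho]
    apply Real.sqrt_pos.mpr
    have hne : Stmt5Aux.tx x - 1 ≠ 0 := sub_ne_zero.mpr hxne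
    have hsq : 0 < (Stmt5Aux.tx x - 1) ^ 2 := by positivity
    nlinarith [sq_nonneg (Stmt5Aux.sx x)]
  by_cases hge : 1 ≤ Stmt5Aux.rho x
  · have hmemD2 : (((x.2.1 : ℝ)), ((x.2.2 : ℝ))) ∈ D2 := by
      refine ⟨x.2.1.2, x.2.2.2, ?_⟩
      have hsq := Stmt5Aux.sq_rho x
      show (1 : ℝ) ≤ Stmt5Aux.sx x ^ 2 + (Stmt5Aux.tx x - 1) ^ 2
      nlinarith [Stmt5Aux.rho_nonneg x]
    calc G x = G (x.1, x.2.1, x.2.2) := rfl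
      _ = ((x.1 : M), x.2.1, x.2.2) := hG2 x.1 x.2.1 x.2.2 hmemD2
      _ = Stmt5Aux.Fmap e (x.1, x.2.1, x.2.2) :=
          (Stmt5Aux.sigma_clause2 e he x.1 x.2.1 x.2.2 hmemD2).symm
      _ = Stmt5Aux.Fmap e x := rfl
  · push_neg at hge
    have hrval : ((Stmt5Aux.rr x : ℝ)) = 1 - Stmt5Aux.rho x := by
      show max 0 (1 - Stmt5Aux.rho x) = 1 - Stmt5Aux.rho x
      exact max_eq_right (by linarith)
    have hrlt : ((Stmt5Aux.rr x : ℝ)) < 1 := by rw [hrval]; linarith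
    set θ := Real.arccos (-(Stmt5Aux.sx x) / Stmt5Aux.rho x) with hθdef
    have habs : |(-(Stmt5Aux.sx x)) / Stmt5Aux.rho x| ≤ 1 :=
      Stmt5Aux.abs_div_le_one' (by rw [abs_neg]; exact Stmt5Aux.abs_sx_le_rho x)
    have hbounds := abs_le.mp habs
    have hcos : Real.cos θ = -(Stmt5Aux.sx x) / Stmt5Aux.rho x :=
      Real.cos_arccos hbounds.1 hbounds.2
    have hsin : Real.sin θ = (1 - Stmt5Aux.tx x) / Stmt5Aux.rho x := by
      rw [hθdef, Real.sin_arccos]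
      rw [show 1 - (-(Stmt5Aux.sx x) / Stmt5Aux.rho x) ^ 2
          = ((1 - Stmt5Aux.tx x) / Stmt5Aux.rho x) ^ 2 by
        field_simp
        nlinarith [Stmt5Aux.sq_rho x]]
      exact Real.sqrt_sq
        (div_nonneg (by linarith [(Stmt5Aux.tx_mem x).2]) (le_of_lt hρpos))
    have hθmem : θ ∈ Set.Icc 0 Real.pi := ⟨Real.arccos_nonneg _, Real.arccos_le_pi _⟩
    have hLam : (((x.2.1 : ℝ)), ((x.2.2 : ℝ))) = Lam (((Stmt5Aux.rr x : ℝ)), θ) := by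
      rw [Stmt5Aux.Lam_eval]
      refine Prod.ext_iff.mpr ⟨?_, ?_⟩
      · show Stmt5Aux.sx x = -((1 - ((Stmt5Aux.rr x : ℝ))) * Real.cos θ)
        rw [hrval, hcos]
        field_simp
        ring
      · show Stmt5Aux.tx x = 1 - (1 - ((Stmt5Aux.rr x : ℝ))) * Real.sin θ
        rw [hrval, hsin]
        field_simp
        ring
    obtain ⟨hA, hB⟩ := hG1 x.1 (Stmt5Aux.rr x) θ hrlt hθmem x.2.1 x.2.2 hLam
    obtain ⟨hA', hB'⟩ :=
      Stmt5Aux.sigma_clause1 e he x.1 x.2.1 x.2.2 (Stmt5Aux.rr x) θ hLam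
    have h2 := hB.trans hB'.symm
    rw [Prod.ext_iff] at h2
    have hx1 : (G x).1 = (Stmt5Aux.Fmap e x).1 := hA.trans hA'.symm
    exact Prod.ext_iff.mpr ⟨hx1,
      Prod.ext_iff.mpr ⟨Subtype.ext h2.1, Subtype.ext h2.2⟩⟩
end
end

section
/- (Core of the proof of Lemma 3.6 of 'Stability of concordance embeddings'.) Let f be a continuous concordance map of the point ∗ in M. Then for every s ∈ J with s ≠ 0, the map I → M×J×I, t ↦ σ(f)(s,t), is injective; in particular, if M is Hausdorff, it is a topological embedding of the compact interval I. -/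
/-!
STATEMENT 6 (core of the proof of Lemma 3.6): for a continuous concordance map `f` of a point
`∗` in `M` and any `s ∈ J` with `s ≠ 0`, the slice `t ↦ σ(f)(s,t)` is injective; in
particular, if `M` is Hausdorff, it is a topological embedding of the compact interval `I`.
-/

open Set unitInterval Topology

noncomputable section

/-- `f : I → M × I` is a continuous concordance map of the point `∗` in `M`. -/
def IsPtConcMap {M : Type} [TopologicalSpace M] (star : M) (f : ↥I → M × ↥I) : Prop :=
  Continuous f ∧
  (∀ t : ↥I, ((f t).2 = 0 ↔ t = 0) ∧ ((f t).2 = 1 ↔ t = 1)) ∧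
  ∃ U ∈ nhds (0 : ↥I), ∀ t ∈ U, f t = (star, t)

/-- `F : J × I → M × J × I` satisfies the two clauses defining the stabilisation `σ(f)` of a
concordance map `f` of the point `∗` in `M`. -/
def IsSigmaPt {M : Type} [TopologicalSpace M] (star : M) (f : ↥I → M × ↥I)
    (F : ↥JJ × ↥I → M × ↥JJ × ↥I) : Prop :=
  (∀ (s : ↥JJ) (t : ↥I) (r : ↥I) (θ : ℝ), θ ∈ Set.Icc 0 Real.pi →
    ((s : ℝ), (t : ℝ)) = Lam ((r : ℝ), θ) →
    (F (s, t)).1 = (f r).1 ∧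
    (((F (s, t)).2.1 : ℝ), ((F (s, t)).2.2 : ℝ)) = Lam (((f r).2 : ℝ), θ)) ∧
  (∀ (s : ↥JJ) (t : ↥I), ((s : ℝ), (t : ℝ)) ∈ D2 → F (s, t) = (star, s, t))

/-! ### Auxiliary definitions for the proof -/

def dd6 (s0 t : ℝ) : ℝ := Real.sqrt (s0 ^ 2 + (t - 1) ^ 2)

def rr6 (s0 t : ℝ) : ↥I := Set.projIcc 0 1 zero_le_one (1 - dd6 s0 t)

def th6 (s0 t : ℝ) : ℝ := Real.arccos (-s0 / dd6 s0 t)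

def G6 {M : Type} [TopologicalSpace M] (star : M) (f : ↥I → M × ↥I) (s0 : ℝ) (t : ↥I) :
    M × ℝ × ℝ :=
  if s0 ^ 2 + ((t : ℝ) - 1) ^ 2 ≤ 1 then
    ((f (rr6 s0 t)).1, Lam (((f (rr6 s0 t)).2 : ℝ), th6 s0 t))
  else (star, s0, t)

lemma dd6_sq (s0 t : ℝ) : dd6 s0 t ^ 2 = s0 ^ 2 + (t - 1) ^ 2 :=
  Real.sq_sqrt (by positivity)

lemma dd6_pos (s0 t : ℝ) (hs0 : s0 ≠ 0) : 0 < dd6 s0 t :=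
  Real.sqrt_pos.mpr (by positivity)

lemma dd6_le_one (s0 t : ℝ) (h : s0 ^ 2 + (t - 1) ^ 2 ≤ 1) : dd6 s0 t ≤ 1 :=
  Real.sqrt_le_one.mpr h

lemma abs_le_dd6 (s0 t : ℝ) : |s0| ≤ dd6 s0 t := by
  rw [← Real.sqrt_sq_eq_abs]
  exact Real.sqrt_le_sqrt (by nlinarith [sq_nonneg (t - 1)])

lemma cos_th6 (s0 t : ℝ) (hs0 : s0 ≠ 0) : Real.cos (th6 s0 t) = -s0 / dd6 s0 t := by
  have hd := dd6_pos s0 t hs0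
  have habs := abs_le_dd6 s0 t
  apply Real.cos_arccos
  · rw [le_div_iff₀ hd]
    nlinarith [le_abs_self s0]
  · rw [div_le_one hd]
    nlinarith [neg_abs_le s0]

lemma sin_th6 (s0 t : ℝ) (hs0 : s0 ≠ 0) (ht : t ≤ 1) :
    Real.sin (th6 s0 t) = (1 - t) / dd6 s0 t := by
  have hd := dd6_pos s0 t hs0
  have hd2 := dd6_sq s0 t
  rw [th6, Real.sin_arccos]
  rw [show 1 - (-s0 / dd6 s0 t) ^ 2 = ((1 - t) / dd6 s0 t) ^ 2 by
    field_simp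
    nlinarith]
  exact Real.sqrt_sq (div_nonneg (by linarith) hd.le)

lemma rr6_coe (s0 t : ℝ) (hs0 : s0 ≠ 0) (h : s0 ^ 2 + (t - 1) ^ 2 ≤ 1) :
    ((rr6 s0 t : ↥I) : ℝ) = 1 - dd6 s0 t := by
  have hd := dd6_pos s0 t hs0
  have hd1 := dd6_le_one s0 t h
  rw [rr6, Set.projIcc_of_mem zero_le_one ⟨by linarith, by linarith⟩]

/-- Value of `Lam` at angle `th6 s0 t`. -/
lemma lam_th6 (s0 t ρ : ℝ) (hs0 : s0 ≠ 0) (ht : t ≤ 1) :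
    Lam (ρ, th6 s0 t) =
      ((1 - ρ) * (s0 / dd6 s0 t), 1 - (1 - ρ) * ((1 - t) / dd6 s0 t)) := by
  have hc := cos_th6 s0 t hs0
  have hs := sin_th6 s0 t hs0 ht
  simp only [Lam, Real.cos_add_pi, Real.sin_add_pi, hc, hs, Prod.mk.injEq]
  exact ⟨by ring, by ring⟩

lemma lam_rr6 (s0 t : ℝ) (hs0 : s0 ≠ 0) (ht : t ≤ 1) (h : s0 ^ 2 + (t - 1) ^ 2 ≤ 1) :
    Lam (((rr6 s0 t : ↥I) : ℝ), th6 s0 t) = (s0, t) := by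
  have hd := dd6_pos s0 t hs0
  rw [rr6_coe s0 t hs0 h, lam_th6 s0 t _ hs0 ht]
  have : (1 : ℝ) - (1 - dd6 s0 t) = dd6 s0 t := by ring
  rw [this]
  simp only [Prod.mk.injEq]
  constructor
  · field_simp
  · field_simp
    ring

lemma th6_mem (s0 t : ℝ) : th6 s0 t ∈ Set.Icc 0 Real.pi :=
  ⟨Real.arccos_nonneg _, Real.arccos_le_pi _⟩

section Main

variable {M : Type} [TopologicalSpace M] (star : M) (f : ↥I → M × ↥I)
  (F : ↥JJ × ↥I → M × ↥JJ × ↥I) (s : ↥JJ)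

/-- `F` restricted to the slice agrees with `G6`. -/
lemma G6_spec (hF : IsSigmaPt star f F) (hs0 : (s : ℝ) ≠ 0) (t : ↥I) :
    ((F (s, t)).1, (((F (s, t)).2.1 : ℝ), ((F (s, t)).2.2 : ℝ))) = G6 star f (s : ℝ) t := by
  set s0 := (s : ℝ)
  by_cases h : s0 ^ 2 + ((t : ℝ) - 1) ^ 2 ≤ 1
  · have h2 := (hF.1 s t (rr6 s0 t) (th6 s0 t) (th6_mem s0 t)
      (lam_rr6 s0 t hs0 t.2.2 h).symm)
    rw [G6, if_pos h]
    exact Prod.ext h2.1 h2.2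
  · have hmem : ((s : ℝ), (t : ℝ)) ∈ D2 := ⟨s.2, t.2, by push_neg at h; linarith⟩
    have := hF.2 s t hmem
    rw [G6, if_neg h, this]

lemma G6_cont (hf : Continuous f) (hf0 : f 0 = (star, 0)) (s0 : ℝ) (hs0 : s0 ≠ 0) :
    Continuous (G6 star f s0) := by
  have hdd : Continuous fun t : ↥I => dd6 s0 (t : ℝ) := by
    apply Real.continuous_sqrt.comp
    fun_prop
  have hdne : ∀ t : ↥I, dd6 s0 (t : ℝ) ≠ 0 := fun t => (dd6_pos s0 _ hs0).ne'
  have hrr : Continuous fun t : ↥I => rr6 s0 (t : ℝ) :=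
    continuous_projIcc.comp (by fun_prop)
  have hth : Continuous fun t : ↥I => th6 s0 (t : ℝ) :=
    Real.continuous_arccos.comp ((continuous_const.div hdd hdne))
  have hLam : Continuous Lam := by
    unfold Lam
    fun_prop
  have hthen : Continuous fun t : ↥I =>
      ((f (rr6 s0 t)).1, Lam (((f (rr6 s0 t)).2 : ℝ), th6 s0 t)) := by
    have hfr : Continuous fun t : ↥I => f (rr6 s0 (t : ℝ)) := hf.comp hrr
    exact (continuous_fst.comp hfr).prodMk
      (hLam.comp ((continuous_subtype_val.comp (continuous_snd.comp hfr)).prodMk hth))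
  have helse : Continuous fun t : ↥I => ((star, s0, (t : ℝ)) : M × ℝ × ℝ) := by fun_prop
  unfold G6
  apply Continuous.if_le hthen helse (by fun_prop) continuous_const
  -- boundary agreement
  intro t ht
  have hd1 : dd6 s0 (t : ℝ) = 1 := by
    rw [dd6, ht, Real.sqrt_one]
  have hr0 : rr6 s0 (t : ℝ) = 0 := by
    rw [rr6, hd1]
    simp [Set.projIcc_of_mem zero_le_one (by norm_num : (0:ℝ) ∈ Set.Icc (0:ℝ) 1)]
  rw [hr0, hf0]
  rw [lam_th6 s0 (t : ℝ) _ hs0 t.2.2, hd1]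
  simp only [Prod.mk.injEq]
  norm_num

/-- The second component of `G6` is injective in `t`. -/
lemma G6_inj (hf : IsPtConcMap star f) (s0 : ℝ) (hs0 : s0 ≠ 0)
    (hs1 : s0 ∈ JJ) : Function.Injective fun t : ↥I => (G6 star f s0 t).2 := by
  have hρmem : ∀ u : ↥I, ((f (rr6 s0 u)).2 : ℝ) ∈ Set.Icc (0:ℝ) 1 := fun u => (f (rr6 s0 u)).2.2
  -- norm computation for the D1 branch
  have hq : ∀ u : ↥I,
      (Lam (((f (rr6 s0 u)).2 : ℝ), th6 s0 u)).1 ^ 2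
        + ((Lam (((f (rr6 s0 u)).2 : ℝ), th6 s0 u)).2 - 1) ^ 2
      = (1 - ((f (rr6 s0 u)).2 : ℝ)) ^ 2 := by
    intro u
    have hd := dd6_pos s0 (u : ℝ) hs0
    have hd2 := dd6_sq s0 (u : ℝ)
    rw [lam_th6 s0 (u : ℝ) _ hs0 u.2.2]
    have e : s0 ^ 2 + (1 - (u:ℝ)) ^ 2 = dd6 s0 (u:ℝ) ^ 2 := by rw [hd2]; ring
    field_simp
    linear_combination (1 - ((f (rr6 s0 u)).2 : ℝ)) ^ 2 * e
  intro t t' hN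
  simp only [G6] at hN
  by_cases h : s0 ^ 2 + ((t : ℝ) - 1) ^ 2 ≤ 1 <;>
    by_cases h' : s0 ^ 2 + ((t' : ℝ) - 1) ^ 2 ≤ 1
  · -- both in D1
    rw [if_pos h, if_pos h'] at hN
    dsimp only at hN
    set a : ℝ := ((f (rr6 s0 t)).2 : ℝ) with ha
    set b : ℝ := ((f (rr6 s0 t')).2 : ℝ) with hb
    rw [lam_th6 s0 (t : ℝ) a hs0 t.2.2, lam_th6 s0 (t' : ℝ) b hs0 t'.2.2] at hN
    have hd := dd6_pos s0 (t : ℝ) hs0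
    have hd' := dd6_pos s0 (t' : ℝ) hs0
    rw [Prod.mk.injEq] at hN
    obtain ⟨h1, h2⟩ := hN
    have hc : (1 - a) / dd6 s0 t = (1 - b) / dd6 s0 t' := by
      have h1' : (1 - a) / dd6 s0 t * s0 = (1 - b) / dd6 s0 t' * s0 := by
        field_simp at h1 ⊢
        linarith [h1]
      exact mul_right_cancel₀ hs0 h1'
    by_cases hρ1 : a = 1
    · -- then rr6 s0 t = 1, contradiction
      exfalso
      have he1 : (f (rr6 s0 t)).2 = 1 := Subtype.ext hρ1
      have h1' : rr6 s0 (t : ℝ) = 1 := ((hf.2.1 _).2).mp he1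
      have hco := rr6_coe s0 (t : ℝ) hs0 h
      rw [h1'] at hco
      simp only [Set.Icc.coe_one] at hco
      linarith
    · have ha1 : a ≤ 1 := ((hρmem t)).2
      have hcpos : 0 < (1 - a) / dd6 s0 t :=
        div_pos (by cases lt_or_eq_of_le ha1 with
          | inl hlt => linarith
          | inr heq => exact absurd heq hρ1) hd
      have key : (1 - a) / dd6 s0 t * (1 - (t:ℝ)) = (1 - b) / dd6 s0 t' * (1 - (t':ℝ)) := by
        field_simp at h2 ⊢
        nlinarith [h2]
      rw [← hc] at key
      have : (1 - (t:ℝ)) = (1 - (t':ℝ)) := mul_left_cancel₀ hcpos.ne' key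
      exact Subtype.ext (by linarith)
  · -- t in D1, t' strictly outside : contradiction via norms
    exfalso
    push_neg at h'
    rw [if_pos h, if_neg (not_le.mpr h')] at hN
    dsimp only at hN
    have hqt := hq t
    rw [hN] at hqt
    dsimp only at hqt
    nlinarith [(hρmem t).1, (hρmem t).2]
  · exfalso
    push_neg at h
    rw [if_neg (not_le.mpr h), if_pos h'] at hN
    dsimp only at hN
    have hqt := hq t'
    rw [← hN] at hqt
    dsimp only at hqt
    nlinarith [(hρmem t').1, (hρmem t').2]
  · rw [if_neg h, if_neg h'] at hN
    dsimp only at hN; rw [Prod.mk.injEq] at hN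
    exact Subtype.ext hN.2

end Main

theorem statement6 {M : Type} [TopologicalSpace M] (star : M)
    (f : ↥I → M × ↥I) (hf : IsPtConcMap star f)
    (F : ↥JJ × ↥I → M × ↥JJ × ↥I) (hF : IsSigmaPt star f F) :
    ∀ s : ↥JJ, (s : ℝ) ≠ 0 →
      Function.Injective (fun t : ↥I => F (s, t)) ∧
      (∀ (_ : T2Space M), IsEmbedding (fun t : ↥I => F (s, t))) := by
  intro s hs0
  obtain ⟨U, hU, hUs⟩ := hf.2.2
  have hf0 : f 0 = (star, 0) := hUs 0 (mem_of_mem_nhds hU)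
  have hspec := G6_spec star f F s hF hs0
  have hGinj := G6_inj star f hf (s : ℝ) hs0 s.2
  have hinj : Function.Injective (fun t : ↥I => F (s, t)) := by
    intro t t' h
    simp only at h
    apply Subtype.ext
    have hG : G6 star f (s : ℝ) t = G6 star f (s : ℝ) t' := by
      rw [← hspec t, ← hspec t', h]
    have := hGinj (congrArg Prod.snd hG)
    exact congrArg Subtype.val this
  refine ⟨hinj, fun hT2 => ?_⟩
  have hGc := G6_cont star f hf.1 hf0 (s : ℝ) hs0
  have hc : Continuous (fun t : ↥I => F (s, t)) := by
    have h1 : Continuous fun t : ↥I => (F (s, t)).1 := by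
      have : (fun t : ↥I => (F (s, t)).1) = fun t => (G6 star f (s : ℝ) t).1 := by
        funext t; exact congrArg Prod.fst (hspec t)
      rw [this]; exact continuous_fst.comp hGc
    have h2 : Continuous fun t : ↥I => (F (s, t)).2.1 := by
      rw [continuous_induced_rng]
      have : (Subtype.val ∘ fun t : ↥I => (F (s, t)).2.1)
          = fun t => (G6 star f (s : ℝ) t).2.1 := by
        funext t
        exact congrArg (Prod.fst ∘ Prod.snd) (hspec t)
      rw [this]; exact (continuous_fst.comp (continuous_snd.comp hGc))
    have h3 : Continuous fun t : ↥I => (F (s, t)).2.2 := by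
      rw [continuous_induced_rng]
      have : (Subtype.val ∘ fun t : ↥I => (F (s, t)).2.2)
          = fun t => (G6 star f (s : ℝ) t).2.2 := by
        funext t
        exact congrArg (Prod.snd ∘ Prod.snd) (hspec t)
      rw [this]; exact (continuous_snd.comp (continuous_snd.comp hGc))
    exact h1.prodMk (h2.prodMk h3)
  exact (hc.isClosedEmbedding hinj).isEmbedding
end
end

section
/- (Key planar estimate in the proof of Lemma 3.8 of 'Stability of concordance embeddings'.) (i) Let s ∈ [−1,0) and set t₀ = 1 − √(1−s²); for t₀ ≤ t₁ < t₂ ≤ 1 write (s,t_i) = Λ(r_i,θ_i) with (r_i,θ_i) ∈ [0,1)×[0,π] (possible and unique since Λ restricts to a homeomorphism [0,1)×[0,π] ≅ D₁ ∖ {(0,1)}); then 0 ≤ θ₂ < θ₁ < π/2. (ii) For any angles 0 ≤ θ₂ < θ₁ ≤ π/2 and any radii ρ₁, ρ₂ ∈ [0,1]: if the second coordinates of Λ(ρ₁,θ₁) and Λ(ρ₂,θ₂) are equal, then the first coordinate of Λ(ρ₁,θ₁) is greater than or equal to the first coordinate of Λ(ρ₂,θ₂). -/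
/-!
STATEMENT 7: key planar estimates about the polar parametrisation `Λ` used in the proof of
Lemma 3.8.
-/

open Set Topology

noncomputable section

theorem statement7 :
    -- (i) for s ∈ [−1,0) and t₀ = 1 − √(1−s²) ≤ t₁ < t₂ ≤ 1, writing
    -- (s,tᵢ) = Λ(rᵢ,θᵢ) with (rᵢ,θᵢ) ∈ [0,1)×[0,π], one has 0 ≤ θ₂ < θ₁ < π/2.
    (∀ s t₁ t₂ r₁ θ₁ r₂ θ₂ : ℝ,
      s ∈ Set.Ico (-1:ℝ) 0 →
      1 - Real.sqrt (1 - s ^ 2) ≤ t₁ → t₁ < t₂ → t₂ ≤ 1 →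
      (r₁, θ₁) ∈ Set.Ico (0:ℝ) 1 ×ˢ Set.Icc (0:ℝ) Real.pi →
      (r₂, θ₂) ∈ Set.Ico (0:ℝ) 1 ×ˢ Set.Icc (0:ℝ) Real.pi →
      (s, t₁) = Lam (r₁, θ₁) → (s, t₂) = Lam (r₂, θ₂) →
      0 ≤ θ₂ ∧ θ₂ < θ₁ ∧ θ₁ < Real.pi / 2) ∧
    -- (ii) for angles 0 ≤ θ₂ < θ₁ ≤ π/2 and radii ρ₁, ρ₂ ∈ [0,1]: if the second coordinates
    -- of Λ(ρ₁,θ₁) and Λ(ρ₂,θ₂) agree, then the first coordinate of Λ(ρ₁,θ₁) is ≥ that of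
    -- Λ(ρ₂,θ₂).
    (∀ θ₁ θ₂ ρ₁ ρ₂ : ℝ,
      0 ≤ θ₂ → θ₂ < θ₁ → θ₁ ≤ Real.pi / 2 →
      ρ₁ ∈ Set.Icc (0:ℝ) 1 → ρ₂ ∈ Set.Icc (0:ℝ) 1 →
      (Lam (ρ₁, θ₁)).2 = (Lam (ρ₂, θ₂)).2 →
      (Lam (ρ₂, θ₂)).1 ≤ (Lam (ρ₁, θ₁)).1) := by

  constructor
  · intro s t₁ t₂ r₁ θ₁ r₂ θ₂ hs ht0 ht12 ht2 h1 h2 e1 e2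
    obtain ⟨⟨hr1, hr1'⟩, hθ1, hθ1'⟩ := h1
    obtain ⟨⟨hr2, hr2'⟩, hθ2, hθ2'⟩ := h2
    rw [Prod.ext_iff] at e1 e2
    simp only [Lam, Real.cos_add_pi, Real.sin_add_pi] at e1 e2
    obtain ⟨es1, et1⟩ := e1
    obtain ⟨es2, et2⟩ := e2
    have hsneg : s < 0 := hs.2
    have ha1 : (0:ℝ) < 1 - r₁ := by linarith
    have ha2 : (0:ℝ) < 1 - r₂ := by linarith
    have hc1 : 0 < Real.cos θ₁ := by
      by_contra h
      push_neg at h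
      nlinarith [mul_nonpos_of_nonneg_of_nonpos ha1.le h]
    have hc2 : 0 < Real.cos θ₂ := by
      by_contra h
      push_neg at h
      nlinarith [mul_nonpos_of_nonneg_of_nonpos ha2.le h]
    have hθ1lt : θ₁ < Real.pi / 2 := by
      by_contra h
      push_neg at h
      exact absurd (Real.cos_nonpos_of_pi_div_two_le_of_le h (by linarith [Real.pi_pos])) (not_le.mpr hc1)
    have hθ2lt : θ₂ < Real.pi / 2 := by
      by_contra h
      push_neg at h
      exact absurd (Real.cos_nonpos_of_pi_div_two_le_of_le h (by linarith [Real.pi_pos])) (not_le.mpr hc2)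
    refine ⟨hθ2, ?_, hθ1lt⟩
    -- key: (1-r₁) sin θ₁ > (1-r₂) sin θ₂ and (1-r₁) cos θ₁ = (1-r₂) cos θ₂ = -s > 0
    by_contra h
    push_neg at h
    -- θ₁ ≤ θ₂, so sin (θ₁ - θ₂) ≤ 0
    have hsin : Real.sin (θ₁ - θ₂) ≤ 0 :=
      Real.sin_nonpos_of_nonpos_of_neg_pi_le (by linarith) (by linarith)
    rw [Real.sin_sub] at hsin
    nlinarith [mul_pos ha1 hc1, mul_pos ha2 hc2,
      mul_le_mul_of_nonneg_left hsin (mul_nonneg ha1.le ha2.le)]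
  · intro θ₁ θ₂ ρ₁ ρ₂ hθ2 hθ21 hθ1 hρ1 hρ2 heq
    simp only [Lam, Real.cos_add_pi, Real.sin_add_pi] at heq ⊢
    have hb : (0:ℝ) ≤ 1 - ρ₂ := by linarith [hρ2.2]
    have hs1 : 0 < Real.sin θ₁ :=
      Real.sin_pos_of_pos_of_lt_pi (by linarith) (by linarith [Real.pi_pos])
    have hsin : 0 ≤ Real.sin (θ₁ - θ₂) :=
      Real.sin_nonneg_of_nonneg_of_le_pi (by linarith) (by linarith [Real.pi_pos])
    rw [Real.sin_sub] at hsin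
    have heq' : (1 - ρ₁) * Real.sin θ₁ = (1 - ρ₂) * Real.sin θ₂ := by linarith
    have h3 : (1 - ρ₁) * Real.sin θ₁ * Real.cos θ₁ = (1 - ρ₂) * Real.sin θ₂ * Real.cos θ₁ := by
      linear_combination heq' * Real.cos θ₁
    nlinarith [mul_nonneg hb hsin, hs1, h3]
end
end

section
/- (Lemma 3.8 of 'Stability of concordance embeddings', with the orientation conventions determined by the explicit formula for Λ.) Let f be a continuous concordance map of the point ∗ in M, and let 0 < t₁ < t₂ < 1. Then for every s ∈ [−1,0) the point σ(f)(s,t₁) is not directly to the left of σ(f)(s,t₂), and for every s ∈ (0,1] the point σ(f)(s,t₁) is not directly to the right of σ(f)(s,t₂). -/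
/-!
STATEMENT 8 (Lemma 3.8): for a continuous concordance map `f` of the point `∗` in `M` and
`0 < t₁ < t₂ < 1`: for `s ∈ [−1,0)` the point `σ(f)(s,t₁)` is not directly to the left of
`σ(f)(s,t₂)`, and for `s ∈ (0,1]` it is not directly to the right of `σ(f)(s,t₂)`.
-/

open Set unitInterval Topology

noncomputable section

/-- `p₁` is directly to the right of `p₂` in `M × J × I`. -/
def DirRight {M : Type} (p₁ p₂ : M × ↥JJ × ↥I) : Prop :=
  p₁.1 = p₂.1 ∧ p₁.2.2 = p₂.2.2 ∧ (p₂.2.1 : ℝ) < (p₁.2.1 : ℝ)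

/-- `p₁` is directly to the left of `p₂` in `M × J × I`. -/
def DirLeft {M : Type} (p₁ p₂ : M × ↥JJ × ↥I) : Prop :=
  p₁.1 = p₂.1 ∧ p₁.2.2 = p₂.2.2 ∧ (p₁.2.1 : ℝ) < (p₂.2.1 : ℝ)

lemma d1_eval {M : Type} [TopologicalSpace M] (star : M) (f : ↥I → M × ↥I)
    (F : ↥JJ × ↥I → M × ↥JJ × ↥I) (hF : IsSigmaPt star f F)
    (s : ↥JJ) (t : ↥I) (hd : (s:ℝ)^2 + ((t:ℝ)-1)^2 ≤ 1) (ht : (t:ℝ) < 1) :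
    ∃ a : ℝ, 0 ≤ a ∧ ((F (s,t)).2.1 : ℝ) = a * (s:ℝ) ∧
      ((F (s,t)).2.2 : ℝ) = 1 - a * (1 - (t:ℝ)) := by
  set R := Real.sqrt ((s:ℝ)^2 + (1-(t:ℝ))^2) with hRdef
  have ht1 : (0:ℝ) < 1 - t := by linarith
  have hR2 : R^2 = (s:ℝ)^2 + (1-(t:ℝ))^2 := Real.sq_sqrt (by positivity)
  have hRpos : 0 < R := Real.sqrt_pos.2 (by positivity)
  have hRle : R ≤ 1 := by nlinarith [hR2, hRpos, hd]
  set x : ℝ := -(s:ℝ)/R with hxdef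
  have hs2 : (s:ℝ)^2 ≤ R^2 := by nlinarith
  have hx1 : -1 ≤ x := by
    rw [hxdef, le_div_iff₀ hRpos]; nlinarith [sq_nonneg ((s:ℝ) - R)]
  have hx2 : x ≤ 1 := by
    rw [hxdef, div_le_iff₀ hRpos]; nlinarith [sq_nonneg ((s:ℝ) + R)]
  set θ := Real.arccos x with hθdef
  have hcos : Real.cos θ = x := Real.cos_arccos hx1 hx2
  have hsin : Real.sin θ = (1-(t:ℝ))/R := by
    rw [hθdef, Real.sin_arccos]
    have h1x : 1 - x^2 = ((1-(t:ℝ))/R)^2 := by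
      rw [hxdef]; field_simp [hxdef]
      nlinarith [hR2]
    rw [h1x, Real.sqrt_sq (by positivity)]
  have hθmem : θ ∈ Set.Icc 0 Real.pi := ⟨Real.arccos_nonneg x, Real.arccos_le_pi x⟩
  have hr : (1 - R) ∈ I := ⟨by linarith, by linarith⟩
  have hRne : R ≠ 0 := ne_of_gt hRpos
  have heq : ((s:ℝ), (t:ℝ)) = Lam (((⟨1-R, hr⟩ : ↥I) : ℝ), θ) := by
    simp only [Lam, Real.cos_add_pi, Real.sin_add_pi]
    rw [Prod.mk.injEq]
    constructor
    · rw [hcos, hxdef]; field_simp; ring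
    · rw [hsin]; field_simp; ring
  obtain ⟨-, h2⟩ := hF.1 s t ⟨1-R, hr⟩ θ hθmem heq
  set ρ : ℝ := ((f ⟨1-R, hr⟩).2 : ℝ) with hρdef
  have hρmem : ρ ∈ I := (f ⟨1-R, hr⟩).2.2
  have hρ1 : ρ ≤ 1 := hρmem.2
  rw [Lam, Real.cos_add_pi, Real.sin_add_pi, Prod.mk.injEq] at h2
  refine ⟨(1-ρ)/R, div_nonneg (by linarith) hRpos.le, ?_, ?_⟩
  · rw [h2.1, hcos, hxdef]; field_simp; try ring
  · rw [h2.2, hsin]; field_simp; try ring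

theorem statement8 {M : Type} [TopologicalSpace M] (star : M)
    (f : ↥I → M × ↥I) (hf : IsPtConcMap star f)
    (F : ↥JJ × ↥I → M × ↥JJ × ↥I) (hF : IsSigmaPt star f F)
    (t₁ t₂ : ↥I) (h0 : (0:ℝ) < (t₁ : ℝ)) (h12 : (t₁ : ℝ) < (t₂ : ℝ)) (h1 : (t₂ : ℝ) < 1) :
    (∀ s : ↥JJ, (s : ℝ) < 0 → ¬ DirLeft (F (s, t₁)) (F (s, t₂))) ∧
    (∀ s : ↥JJ, 0 < (s : ℝ) → ¬ DirRight (F (s, t₁)) (F (s, t₂))) := by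
  have ht1lt : (t₁ : ℝ) < 1 := lt_trans h12 h1
  have key : ∀ s : ↥JJ, (s : ℝ) ≠ 0 →
      (F (s, t₁)).2.2 = (F (s, t₂)).2.2 →
      ∃ b c : ℝ, 1 ≤ b ∧ 0 ≤ c ∧ ((F (s, t₁)).2.1 : ℝ) = c * (s:ℝ) ∧
        ((F (s, t₂)).2.1 : ℝ) = b * c * (s:ℝ) := by
    intro s hs hI
    have hIr : ((F (s, t₁)).2.2 : ℝ) = ((F (s, t₂)).2.2 : ℝ) := by rw [hI]
    by_cases h2d : (s:ℝ)^2 + ((t₂:ℝ)-1)^2 < 1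
    · -- (s,t₂) ∈ D1
      obtain ⟨a₂, ha₂0, ha₂s, ha₂t⟩ := d1_eval star f F hF s t₂ (le_of_lt h2d) h1
      by_cases h1d : (s:ℝ)^2 + ((t₁:ℝ)-1)^2 ≤ 1
      · -- both in D1
        obtain ⟨a₁, ha₁0, ha₁s, ha₁t⟩ := d1_eval star f F hF s t₁ h1d ht1lt
        rw [ha₁t, ha₂t] at hIr
        have hle : a₁ ≤ a₂ := by nlinarith
        by_cases ha₁ : a₁ = 0
        · refine ⟨1, 0, le_refl 1, le_refl 0, ?_, ?_⟩
          · rw [ha₁s, ha₁]; try ring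
          · have : a₂ = 0 := by nlinarith
            rw [ha₂s, this]; try ring
        · have ha₁pos : 0 < a₁ := lt_of_le_of_ne ha₁0 (Ne.symm ha₁)
          refine ⟨a₂ / a₁, a₁, ?_, ha₁0, ha₁s, ?_⟩
          · rw [le_div_iff₀ ha₁pos]; linarith
          · rw [ha₂s]; field_simp; try ring
      · -- (s,t₁) ∈ D2
        push_neg at h1d
        have hmem : ((s:ℝ), (t₁:ℝ)) ∈ D2 := ⟨s.2, t₁.2, le_of_lt h1d⟩
        have hv := hF.2 s t₁ hmem
        rw [hv] at hIr
        simp only at hIr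
        rw [ha₂t] at hIr
        have hb : 1 < a₂ := by nlinarith
        rw [hv]
        exact ⟨a₂, 1, le_of_lt hb, zero_le_one, by simp, by rw [ha₂s]; ring⟩
    · -- both in D2
      push_neg at h2d
      have h1d : 1 ≤ (s:ℝ)^2 + ((t₁:ℝ)-1)^2 := by nlinarith
      have hv1 := hF.2 s t₁ ⟨s.2, t₁.2, h1d⟩
      have hv2 := hF.2 s t₂ ⟨s.2, t₂.2, h2d⟩
      rw [hv1, hv2] at hIr
      simp only at hIr
      exact absurd hIr (ne_of_lt h12)
  constructor
  · intro s hs ⟨_, hI, hS⟩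
    obtain ⟨b, c, hb1, hc0, he1, he2⟩ := key s (ne_of_lt hs) hI
    rw [he1, he2] at hS
    nlinarith [mul_nonneg (sub_nonneg.2 hb1) hc0]
  · intro s hs ⟨_, hI, hS⟩
    obtain ⟨b, c, hb1, hc0, he1, he2⟩ := key s (ne_of_gt hs) hI
    rw [he1, he2] at hS
    nlinarith [mul_nonneg (sub_nonneg.2 hb1) hc0]
end
end

section
/- (Contractibility of C₊ and C₋, Step 4 in Section 3.1 of 'Stability of concordance embeddings', continuous analogue.) Let ∗ ∈ M and 0 < t₁ < t₂ < 1. Let E denote the space of continuous maps f : I → M×J×I, with the compact-open topology, such that f⁻¹(M×J×{i}) = {i} for i = 0,1, f(t) = (∗,0,t) for all t in some neighbourhood of 0, and f(t₁) ≠ f(t₂). Let C₊ ⊆ E be the subspace of those f for which f(t₁) is not directly to the right of f(t₂), and C₋ ⊆ E the subspace of those f for which f(t₁) is not directly to the left of f(t₂). Then C₊ and C₋ are contractible. -/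
/-!
STATEMENT 9: contractibility of the subspaces `C₊` and `C₋` (continuous analogue of Step 4 in
Section 3.1).
-/

open Set unitInterval Topology

noncomputable section

def jzero : ↥JJ := ⟨0, by norm_num⟩

/-- The defining conditions of the space `E`: `f : I → M × J × I` is continuous (it is a
`ContinuousMap`), `f⁻¹(M×J×{i}) = {i}` for `i = 0,1`, `f(t) = (∗,0,t)` for `t` in some
neighbourhood of `0`, and `f(t₁) ≠ f(t₂)`. -/
def ECond {M : Type} [TopologicalSpace M] (star : M) (t₁ t₂ : ↥I)
    (f : C(↥I, M × ↥JJ × ↥I)) : Prop :=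
  (∀ t : ↥I, ((f t).2.2 = 0 ↔ t = 0) ∧ ((f t).2.2 = 1 ↔ t = 1)) ∧
  (∃ U ∈ nhds (0 : ↥I), ∀ t ∈ U, f t = (star, jzero, t)) ∧
  f t₁ ≠ f t₂

namespace S9
def aa (s : ℝ) : ℝ := min (3 * s) 1
def bb (s : ℝ) : ℝ := min (max (3 * s - 1) 0) 1
def cc (s : ℝ) : ℝ := max (3 * s - 2) 0
lemma aa_nonneg {s : ℝ} (hs : 0 ≤ s) : 0 ≤ aa s := le_min (by linarith) one_pos.le
lemma aa_le_one (s : ℝ) : aa s ≤ 1 := min_le_right _ _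
lemma bb_nonneg (s : ℝ) : 0 ≤ bb s := le_min (le_max_right _ _) one_pos.le
lemma bb_le_one (s : ℝ) : bb s ≤ 1 := min_le_right _ _
lemma cc_nonneg (s : ℝ) : 0 ≤ cc s := le_max_right _ _
lemma cc_le_one {s : ℝ} (hs : s ≤ 1) : cc s ≤ 1 := max_le (by linarith) one_pos.le
lemma continuous_aa : Continuous aa := (continuous_const.mul continuous_id).min continuous_const
lemma continuous_bb : Continuous bb :=
  ((((continuous_const.mul continuous_id).sub continuous_const).max continuous_const).min
    continuous_const)
lemma continuous_cc : Continuous cc :=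
  ((continuous_const.mul continuous_id).sub continuous_const).max continuous_const
def bump (d c x : ℝ) : ℝ := max 0 (1 - |x - c| / d)
lemma bump_nonneg (d c x : ℝ) : 0 ≤ bump d c x := le_max_left _ _
lemma bump_le_one {d : ℝ} (hd : 0 ≤ d) (c x : ℝ) : bump d c x ≤ 1 :=
  max_le zero_le_one (by
    have : 0 ≤ |x - c| / d := div_nonneg (abs_nonneg _) hd
    linarith)
lemma bump_self {d : ℝ} (_hd : 0 < d) (c : ℝ) : bump d c c = 1 := by simp [bump]
lemma bump_eq_zero {d c x : ℝ} (hd : 0 < d) (h : d ≤ |x - c|) : bump d c x = 0 := by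
  rw [bump, max_eq_left]
  have : 1 ≤ |x - c| / d := (one_le_div hd).mpr h
  linarith
lemma continuous_bump (d c : ℝ) : Continuous fun x => bump d c x :=
  continuous_const.max (continuous_const.sub
    (((continuous_id.sub continuous_const).abs).div_const d))
lemma bump_disj {d : ℝ} (hd : 0 < d) {c₁ c₂ : ℝ} (h : 2 * d ≤ c₂ - c₁) (x : ℝ) :
    bump d c₁ x = 0 ∨ bump d c₂ x = 0 := by
  rcases le_or_gt d |x - c₁| with h1 | h1
  · exact Or.inl (bump_eq_zero hd h1)
  · rw [abs_sub_lt_iff] at h1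
    exact Or.inr (bump_eq_zero hd (le_abs.mpr (Or.inr (by linarith))))

variable {M : Type} [TopologicalSpace M]

def wpt (s t : ↥I) : ↥I := Set.projIcc 0 1 zero_le_one ((1 - cc s) * t)

lemma wpt_mem (s t : ↥I) : (1 - cc (s : ℝ)) * (t : ℝ) ∈ Set.Icc (0:ℝ) 1 := by
  have h1 := cc_nonneg (s : ℝ)
  have h2 := cc_le_one s.2.2
  constructor
  · exact mul_nonneg (by linarith) t.2.1
  · nlinarith [t.2.1, t.2.2]

lemma wpt_coe (s t : ↥I) : ((wpt s t : ↥I) : ℝ) = (1 - cc s) * t := by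
  rw [wpt, Set.projIcc_of_mem _ (wpt_mem s t)]

def jval (f : C(↥I, M × ↥JJ × ↥I)) (s t : ↥I) : ℝ := ((f (wpt s t)).2.1 : ℝ)

def jraw (ε d : ℝ) (t₁ t₂ : ↥I) (f : C(↥I, M × ↥JJ × ↥I)) (s t : ↥I) : ℝ :=
  jval f s t + aa s * bump d t₂ (wpt s t) * (ε - jval f s t)
    + aa s * bump d t₁ (wpt s t) * (-ε - jval f s t)

def trw (f : C(↥I, M × ↥JJ × ↥I)) (s t : ↥I) : ℝ :=
  (1 - bb s) * ((f t).2.2 : ℝ) + bb s * t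

def hmap (ε d : ℝ) (t₁ t₂ : ↥I) (f : C(↥I, M × ↥JJ × ↥I)) (s t : ↥I) : M × ↥JJ × ↥I :=
  ((f (wpt s t)).1,
   Set.projIcc (-1) 1 (by norm_num) (jraw ε d t₁ t₂ f s t),
   Set.projIcc 0 1 zero_le_one (trw f s t))

lemma alg1 {a b j e : ℝ} (ha : 0 ≤ a) (ha1 : a ≤ 1) (hb : 0 ≤ b) (hb1 : b ≤ 1)
    (hj : -1 ≤ j) (hj1 : j ≤ 1) (he : e = 1 ∨ e = -1) :
    j + a * b * (e - j) ∈ Set.Icc (-1:ℝ) 1 := by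
  have hab0 : 0 ≤ a * b := mul_nonneg ha hb
  have hab1 : a * b ≤ 1 := by nlinarith
  constructor <;> rcases he with rfl | rfl <;>
    nlinarith [mul_nonneg (by linarith : (0:ℝ) ≤ 1 + j) (by linarith : (0:ℝ) ≤ 1 - a * b),
      mul_nonneg (by linarith : (0:ℝ) ≤ 1 - j) (by linarith : (0:ℝ) ≤ 1 - a * b),
      mul_nonneg hab0 (by linarith : (0:ℝ) ≤ 1 + j),
      mul_nonneg hab0 (by linarith : (0:ℝ) ≤ 1 - j)]

lemma jval_mem (f : C(↥I, M × ↥JJ × ↥I)) (s t : ↥I) : jval f s t ∈ Set.Icc (-1:ℝ) 1 :=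
  ((f (wpt s t)).2.1).2

lemma jraw_mem {ε d : ℝ} (hε : ε = 1 ∨ ε = -1) (hd : 0 < d) {t₁ t₂ : ↥I}
    (h12d : 2 * d ≤ (t₂ : ℝ) - (t₁ : ℝ)) (f : C(↥I, M × ↥JJ × ↥I)) (s t : ↥I) :
    jraw ε d t₁ t₂ f s t ∈ Set.Icc (-1:ℝ) 1 := by
  have hj := jval_mem f s t
  have ha0 := aa_nonneg s.2.1
  have ha1 := aa_le_one (s : ℝ)
  rcases bump_disj hd h12d ((wpt s t : ↥I) : ℝ) with h | h
  · rw [jraw, h, mul_zero, zero_mul, add_zero]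
    exact alg1 ha0 ha1 (bump_nonneg _ _ _) (bump_le_one hd.le _ _) hj.1 hj.2 hε
  · rw [jraw, h, mul_zero, zero_mul, add_zero]
    have he' : -ε = 1 ∨ -ε = -1 := by rcases hε with rfl | rfl <;> norm_num
    exact alg1 ha0 ha1 (bump_nonneg _ _ _) (bump_le_one hd.le _ _) hj.1 hj.2 he'

lemma trw_mem (f : C(↥I, M × ↥JJ × ↥I)) (s t : ↥I) : trw f s t ∈ Set.Icc (0:ℝ) 1 := by
  have hb0 := bb_nonneg (s : ℝ)
  have hb1 := bb_le_one (s : ℝ)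
  have hr := ((f t).2.2).2
  constructor
  · have := mul_nonneg (by linarith : (0:ℝ) ≤ 1 - bb s) hr.1
    have := mul_nonneg hb0 t.2.1
    rw [trw]; linarith
  · rw [trw]; nlinarith [hr.2, t.2.2, t.2.1, hr.1]

lemma hmap_fst (ε d : ℝ) (t₁ t₂ : ↥I) (f : C(↥I, M × ↥JJ × ↥I)) (s t : ↥I) :
    (hmap ε d t₁ t₂ f s t).1 = (f (wpt s t)).1 := rfl

lemma hmap_j_coe {ε d : ℝ} (hε : ε = 1 ∨ ε = -1) (hd : 0 < d) {t₁ t₂ : ↥I}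
    (h12d : 2 * d ≤ (t₂ : ℝ) - (t₁ : ℝ)) (f : C(↥I, M × ↥JJ × ↥I)) (s t : ↥I) :
    (((hmap ε d t₁ t₂ f s t).2.1 : ↥JJ) : ℝ) = jraw ε d t₁ t₂ f s t := by
  rw [hmap, Set.projIcc_of_mem _ (jraw_mem hε hd h12d f s t)]

lemma hmap_t_coe (ε d : ℝ) (t₁ t₂ : ↥I) (f : C(↥I, M × ↥JJ × ↥I)) (s t : ↥I) :
    (((hmap ε d t₁ t₂ f s t).2.2 : ↥I) : ℝ) = trw f s t := by
  rw [hmap, Set.projIcc_of_mem _ (trw_mem f s t)]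

lemma aa_zero : aa 0 = 0 := by simp [aa]
lemma bb_zero : bb 0 = 0 := by norm_num [bb]
lemma cc_zero : cc 0 = 0 := by norm_num [cc]
lemma aa_one : aa 1 = 1 := by norm_num [aa]
lemma bb_one : bb 1 = 1 := by norm_num [bb]
lemma cc_one : cc 1 = 1 := by norm_num [cc]
lemma coeI_zero : (((0 : ↥I)) : ℝ) = 0 := rfl
lemma coeI_one : (((1 : ↥I)) : ℝ) = 1 := rfl

lemma wpt_zero (t : ↥I) : wpt 0 t = t := by
  rw [wpt]
  have : (1 - cc ((0 : ↥I) : ℝ)) * (t : ℝ) = (t : ℝ) := by rw [coeI_zero, cc_zero]; ring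
  rw [this, Set.projIcc_of_mem _ t.2]

lemma wpt_one (t : ↥I) : wpt 1 t = 0 := by
  rw [wpt]
  have : (1 - cc ((1 : ↥I) : ℝ)) * (t : ℝ) = 0 := by rw [coeI_one, cc_one]; ring
  rw [this, Set.projIcc_of_mem _ (by norm_num : (0:ℝ) ∈ Set.Icc (0:ℝ) 1)]
  rfl

lemma hmap_zero (ε d : ℝ) (t₁ t₂ : ↥I) (f : C(↥I, M × ↥JJ × ↥I)) (t : ↥I) :
    hmap ε d t₁ t₂ f 0 t = f t := by
  have hw := wpt_zero t
  have hj : jraw ε d t₁ t₂ f 0 t = ((f t).2.1 : ℝ) := by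
    rw [jraw, coeI_zero, aa_zero, jval, hw]; ring
  have ht : trw f 0 t = ((f t).2.2 : ℝ) := by
    rw [trw, coeI_zero, bb_zero]; ring
  rw [hmap, hj, ht, hw, Set.projIcc_of_mem _ ((f t).2.1).2, Set.projIcc_of_mem _ ((f t).2.2).2]

lemma hmap_one {ε d : ℝ} {t₁ t₂ : ↥I} (hd : 0 < d) (hdt : d < (t₁ : ℝ))
    (h12 : (t₁ : ℝ) < (t₂ : ℝ)) {star : M}
    (f : C(↥I, M × ↥JJ × ↥I)) (hstd : f 0 = (star, jzero, 0)) (t : ↥I) :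
    hmap ε d t₁ t₂ f 1 t = (star, jzero, t) := by
  have hw := wpt_one t
  have h01 : (0:ℝ) < (t₁ : ℝ) := lt_trans hd hdt
  have hb1 : bump d (t₁ : ℝ) ((wpt 1 t : ↥I) : ℝ) = 0 := by
    rw [hw, coeI_zero]
    exact bump_eq_zero hd (le_abs.mpr (Or.inr (by linarith)))
  have hb2 : bump d (t₂ : ℝ) ((wpt 1 t : ↥I) : ℝ) = 0 := by
    rw [hw, coeI_zero]
    exact bump_eq_zero hd (le_abs.mpr (Or.inr (by linarith)))
  have hjv : jval f 1 t = 0 := by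
    rw [jval, hw, hstd]; rfl
  have hj : jraw ε d t₁ t₂ f 1 t = 0 := by
    rw [jraw, hjv, hb1, hb2]; ring
  have ht : trw f 1 t = (t : ℝ) := by rw [trw, coeI_one, bb_one]; ring
  rw [hmap, hj, ht, hw, hstd]
  refine Prod.ext rfl (Prod.ext ?_ ?_)
  · exact Subtype.ext (by rw [Set.projIcc_of_mem _ (by norm_num : (0:ℝ) ∈ JJ)]; rfl)
  · exact Subtype.ext (by rw [Set.projIcc_of_mem _ t.2])

lemma hmap_cont (ε d : ℝ) (t₁ t₂ : ↥I) {Z : Type*} [TopologicalSpace Z]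
    (F : Z → C(↥I, M × ↥JJ × ↥I)) (hF : Continuous F) (S : Z → ↥I) (hS : Continuous S) :
    Continuous fun q : Z × ↥I => hmap ε d t₁ t₂ (F q.1) (S q.1) q.2 := by
  have hsc : Continuous fun q : Z × ↥I => ((S q.1 : ↥I) : ℝ) :=
    continuous_subtype_val.comp (hS.comp continuous_fst)
  have htc : Continuous fun q : Z × ↥I => ((q.2 : ↥I) : ℝ) :=
    continuous_subtype_val.comp continuous_snd
  have hwc : Continuous fun q : Z × ↥I => wpt (S q.1) q.2 :=
    continuous_projIcc.comp
      (((continuous_const.sub (continuous_cc.comp hsc)).mul htc))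
  have hev : Continuous fun q : Z × ↥I => (F q.1) (wpt (S q.1) q.2) :=
    (hF.comp continuous_fst).eval hwc
  have hev2 : Continuous fun q : Z × ↥I => (F q.1) q.2 :=
    (hF.comp continuous_fst).eval continuous_snd
  have hjv : Continuous fun q : Z × ↥I => jval (F q.1) (S q.1) q.2 :=
    continuous_subtype_val.comp hev.snd.fst
  have ha : Continuous fun q : Z × ↥I => aa ((S q.1 : ↥I) : ℝ) := continuous_aa.comp hsc
  have hwcoe : Continuous fun q : Z × ↥I => ((wpt (S q.1) q.2 : ↥I) : ℝ) :=
    continuous_subtype_val.comp hwc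
  have hb1 : Continuous fun q : Z × ↥I => bump d (t₁ : ℝ) ((wpt (S q.1) q.2 : ↥I) : ℝ) :=
    (continuous_bump d (t₁ : ℝ)).comp hwcoe
  have hb2 : Continuous fun q : Z × ↥I => bump d (t₂ : ℝ) ((wpt (S q.1) q.2 : ↥I) : ℝ) :=
    (continuous_bump d (t₂ : ℝ)).comp hwcoe
  have hjraw : Continuous fun q : Z × ↥I => jraw ε d t₁ t₂ (F q.1) (S q.1) q.2 :=
    (hjv.add (((ha.mul hb2).mul (continuous_const.sub hjv)))).add
      ((ha.mul hb1).mul (continuous_const.sub hjv))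
  have hbc : Continuous fun q : Z × ↥I => bb ((S q.1 : ↥I) : ℝ) := continuous_bb.comp hsc
  have hrc : Continuous fun q : Z × ↥I => (((F q.1) q.2).2.2 : ℝ) :=
    continuous_subtype_val.comp hev2.snd.snd
  have htrw : Continuous fun q : Z × ↥I => trw (F q.1) (S q.1) q.2 :=
    ((continuous_const.sub hbc).mul hrc).add (hbc.mul htc)
  exact hev.fst.prodMk
    ((continuous_projIcc.comp hjraw).prodMk (continuous_projIcc.comp htrw))

lemma aa_of_gt {s : ℝ} (hs : 1 < 3 * s) : aa s = 1 := min_eq_right hs.le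
lemma bb_of_le {s : ℝ} (hs : 3 * s ≤ 1) : bb s = 0 := by
  rw [bb, max_eq_right (by linarith), min_eq_left zero_le_one]
lemma bb_of_cc_pos {s : ℝ} (hs : 0 < cc s) : bb s = 1 := by
  have h : 2 < 3 * s := by
    by_contra h
    rw [cc, max_eq_right (by linarith : 3 * s - 2 ≤ 0)] at hs
    exact lt_irrefl _ hs
  rw [bb, max_eq_left (by linarith), min_eq_right (by linarith)]

/-- generalized "directly to one side" relation. -/
def Dir {M : Type} (ε : ℝ) (p₁ p₂ : M × ↥JJ × ↥I) : Prop :=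
  p₁.1 = p₂.1 ∧ p₁.2.2 = p₂.2.2 ∧ 0 < ε * ((p₁.2.1 : ℝ) - (p₂.2.1 : ℝ))

lemma alg2 {a j₁ j₂ : ℝ} (ha0 : 0 ≤ a) (ha1 : a ≤ 1) (hj1 : -1 ≤ j₁) (hj1' : j₁ ≤ 1)
    (hj2 : -1 ≤ j₂) (hj2' : j₂ ≤ 1) (hX : j₁ < j₂) :
    0 < 1 * ((j₂ + a * (1 - j₂)) - (j₁ + a * (-1 - j₁))) := by
  nlinarith [mul_nonneg ha0 (by linarith : (0:ℝ) ≤ 2 + j₁ - j₂)]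

lemma alg2' {a j₁ j₂ : ℝ} (ha0 : 0 ≤ a) (ha1 : a ≤ 1) (hj1 : -1 ≤ j₁) (hj1' : j₁ ≤ 1)
    (hj2 : -1 ≤ j₂) (hj2' : j₂ ≤ 1) (hX : j₂ < j₁) :
    0 < (-1) * ((j₂ + a * (-1 - j₂)) - (j₁ + a * (- -1 - j₁))) := by
  nlinarith [mul_nonneg ha0 (by linarith : (0:ℝ) ≤ 2 + j₂ - j₁)]

lemma alg3 {j₁ j₂ e : ℝ} (he : e = 1 ∨ e = -1) :
    0 < e * ((j₂ + 1 * (e - j₂)) - (j₁ + 1 * (-e - j₁))) := by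
  rcases he with rfl | rfl <;> nlinarith

theorem hmap_mem {star : M} {t₁ t₂ : ↥I}
    (h0 : (0:ℝ) < (t₁ : ℝ)) (h12 : (t₁ : ℝ) < (t₂ : ℝ)) (h1 : (t₂ : ℝ) < 1)
    {ε d : ℝ} (hε : ε = 1 ∨ ε = -1) (hd : 0 < d) (hdt : d < (t₁ : ℝ))
    (h12d : 2 * d ≤ (t₂ : ℝ) - (t₁ : ℝ))
    {f : C(↥I, M × ↥JJ × ↥I)} (hf : ECond star t₁ t₂ f ∧ ¬ Dir ε (f t₁) (f t₂))
    (s : ↥I) (g : C(↥I, M × ↥JJ × ↥I)) (hg : ∀ t, g t = hmap ε d t₁ t₂ f s t) :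
    ECond star t₁ t₂ g ∧ ¬ Dir ε (g t₁) (g t₂) := by
  obtain ⟨⟨hbd, ⟨U, hU, hstd⟩, hne⟩, hdir⟩ := hf
  have hb0 := bb_nonneg (s : ℝ)
  have hb1 := bb_le_one (s : ℝ)
  have hθ : ∀ t : ↥I, ((g t).2.2 : ℝ) = trw f s t := fun t => by
    rw [hg t]; exact hmap_t_coe ε d t₁ t₂ f s t
  have hJ : ∀ t : ↥I, ((g t).2.1 : ℝ) = jraw ε d t₁ t₂ f s t := fun t => by
    rw [hg t]; exact hmap_j_coe hε hd h12d f s t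
  have hm : ∀ t : ↥I, (g t).1 = (f (wpt s t)).1 := fun t => by rw [hg t]; rfl
  -- boundary conditions
  have bcond : ∀ t : ↥I, ((g t).2.2 = 0 ↔ t = 0) ∧ ((g t).2.2 = 1 ↔ t = 1) := by
    intro t
    have hrt := ((f t).2.2).2
    constructor
    · constructor
      · intro h
        have hc : trw f s t = 0 := by rw [← hθ t, h]; rfl
        rw [trw] at hc
        by_contra hne0
        have ht0 : 0 < (t : ℝ) := t.2.1.lt_of_ne (fun hh => hne0 (Subtype.ext hh.symm))
        rcases hb0.eq_or_lt with hb | hb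
        · have hr0 : ((f t).2.2 : ℝ) = 0 := by rw [← hb] at hc; linarith
          exact hne0 ((hbd t).1.mp (Subtype.ext (by rw [hr0]; rfl)))
        · have h4 := mul_nonneg (by linarith : (0:ℝ) ≤ 1 - bb ↑s) hrt.1
          have h5 := mul_pos hb ht0
          linarith
      · rintro rfl
        have hf0 : ((f 0).2.2 : ℝ) = 0 := by rw [(hbd 0).1.mpr rfl]; rfl
        apply Subtype.ext
        rw [hθ 0, trw, hf0, coeI_zero]
        ring
    · constructor
      · intro h
        have hc : trw f s t = 1 := by rw [← hθ t, h]; rfl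
        rw [trw] at hc
        by_contra hne1
        have ht1 : (t : ℝ) < 1 := t.2.2.lt_of_ne (fun hh => hne1 (Subtype.ext hh))
        rcases hb0.eq_or_lt with hb | hb
        · have hr1 : ((f t).2.2 : ℝ) = 1 := by rw [← hb] at hc; linarith
          exact hne1 ((hbd t).2.mp (Subtype.ext (by rw [hr1]; rfl)))
        · have h2 : bb ↑s * (t : ℝ) < bb ↑s * 1 := mul_lt_mul_of_pos_left ht1 hb
          have h3 : (1 - bb ↑s) * ((f t).2.2 : ℝ) ≤ (1 - bb ↑s) * 1 :=
            mul_le_mul_of_nonneg_left hrt.2 (by linarith)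
          linarith
      · rintro rfl
        have hf1 : ((f 1).2.2 : ℝ) = 1 := by rw [(hbd 1).2.mpr rfl]; rfl
        apply Subtype.ext
        rw [hθ 1, trw, hf1, coeI_one]
        ring
  -- germ condition
  have germ : ∃ V ∈ nhds (0 : ↥I), ∀ t ∈ V, g t = (star, jzero, t) := by
    obtain ⟨r, hr, hball⟩ := Metric.mem_nhds_iff.mp hU
    have hinU : ∀ t : ↥I, (t : ℝ) < r → t ∈ U := by
      intro t ht
      apply hball
      rw [Metric.mem_ball, Subtype.dist_eq, Real.dist_eq, coeI_zero, sub_zero,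
        abs_of_nonneg t.2.1]
      exact ht
    refine ⟨{t : ↥I | (t : ℝ) < min r ((t₁ : ℝ) - d)}, ?_, ?_⟩
    · exact (isOpen_Iio.preimage continuous_subtype_val).mem_nhds
        (show ((0 : ↥I) : ℝ) < min r ((t₁ : ℝ) - d) from by
          rw [coeI_zero]; exact lt_min hr (by linarith))
    · intro t ht
      simp only [Set.mem_setOf_eq] at ht
      have htU : t ∈ U := hinU t (lt_of_lt_of_le ht (min_le_left _ _))
      have hwle : ((wpt s t : ↥I) : ℝ) ≤ (t : ℝ) := by
        rw [wpt_coe]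
        nlinarith [mul_nonneg (cc_nonneg (s : ℝ)) t.2.1]
      have hwU : wpt s t ∈ U :=
        hinU _ (lt_of_le_of_lt hwle (lt_of_lt_of_le ht (min_le_left _ _)))
      have hfw := hstd _ hwU
      have hft := hstd _ htU
      have hwt1 : ((wpt s t : ↥I) : ℝ) < (t₁ : ℝ) - d :=
        lt_of_le_of_lt hwle (lt_of_lt_of_le ht (min_le_right _ _))
      have hb1' : bump d (t₁ : ℝ) ((wpt s t : ↥I) : ℝ) = 0 :=
        bump_eq_zero hd (le_abs.mpr (Or.inr (by linarith)))
      have hb2' : bump d (t₂ : ℝ) ((wpt s t : ↥I) : ℝ) = 0 :=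
        bump_eq_zero hd (le_abs.mpr (Or.inr (by linarith)))
      have hjv : jval f s t = 0 := by rw [jval, hfw]; rfl
      have hj0 : jraw ε d t₁ t₂ f s t = 0 := by rw [jraw, hjv, hb1', hb2']; ring
      have htr : trw f s t = (t : ℝ) := by
        rw [trw, hft]
        show (1 - bb ↑s) * (t : ℝ) + bb ↑s * (t : ℝ) = (t : ℝ)
        ring
      rw [hg t, hmap, hj0, htr, hfw]
      refine Prod.ext rfl (Prod.ext ?_ ?_)
      · exact Subtype.ext (by rw [Set.projIcc_of_mem _ (by norm_num : (0:ℝ) ∈ JJ)]; rfl)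
      · exact Subtype.ext (by rw [Set.projIcc_of_mem _ t.2])
  -- the key positivity estimate
  have key : (g t₁).1 = (g t₂).1 → (g t₁).2.2 = (g t₂).2.2 →
      0 < ε * (((g t₂).2.1 : ℝ) - ((g t₁).2.1 : ℝ)) := by
    intro hmeq hteq
    have hθeq : trw f s t₁ = trw f s t₂ := by
      rw [← hθ t₁, ← hθ t₂, hteq]
    rcases (cc_nonneg (s : ℝ)).eq_or_lt with hcz | hcpos
    · -- cc s = 0 : the reparametrisation has not begun
      have hw1 : wpt s t₁ = t₁ := Subtype.ext (by rw [wpt_coe, ← hcz]; ring)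
      have hw2 : wpt s t₂ = t₂ := Subtype.ext (by rw [wpt_coe, ← hcz]; ring)
      have hj1m := ((f t₁).2.1).2
      have hj2m := ((f t₂).2.1).2
      have hbs11 : bump d (t₁ : ℝ) (t₁ : ℝ) = 1 := bump_self hd _
      have hbs22 : bump d (t₂ : ℝ) (t₂ : ℝ) = 1 := bump_self hd _
      have hbs21 : bump d (t₂ : ℝ) (t₁ : ℝ) = 0 :=
        bump_eq_zero hd (le_abs.mpr (Or.inr (by linarith)))
      have hbs12 : bump d (t₁ : ℝ) (t₂ : ℝ) = 0 :=
        bump_eq_zero hd (le_abs.mpr (Or.inl (by linarith)))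
      have hJ1 : ((g t₁).2.1 : ℝ) = ((f t₁).2.1 : ℝ) + aa s * (-ε - ((f t₁).2.1 : ℝ)) := by
        rw [hJ t₁, jraw, jval, hw1, hbs21, hbs11]; ring
      have hJ2 : ((g t₂).2.1 : ℝ) = ((f t₂).2.1 : ℝ) + aa s * (ε - ((f t₂).2.1 : ℝ)) := by
        rw [hJ t₂, jraw, jval, hw2, hbs12, hbs22]; ring
      have ha0 : 0 ≤ aa (s : ℝ) := aa_nonneg s.2.1
      have ha1 := aa_le_one (s : ℝ)
      rw [hJ1, hJ2]
      rcases le_or_gt (3 * (s : ℝ)) 1 with h3s | h3s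
      · -- first third of the homotopy : bb s = 0
        have hbs0 := bb_of_le h3s
        rw [trw, trw, hbs0] at hθeq
        have hreq : ((f t₁).2.2 : ℝ) = ((f t₂).2.2 : ℝ) := by linarith
        have hreq' : (f t₁).2.2 = (f t₂).2.2 := Subtype.ext hreq
        have hmeq' : (f t₁).1 = (f t₂).1 := by
          have h' := hmeq
          rw [hm t₁, hm t₂, hw1, hw2] at h'
          exact h'
        have hjne : ((f t₁).2.1 : ℝ) ≠ ((f t₂).2.1 : ℝ) := by
          intro hh
          exact hne (Prod.ext hmeq' (Prod.ext (Subtype.ext hh) hreq'))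
        have hnd : ¬ (0 < ε * (((f t₁).2.1 : ℝ) - ((f t₂).2.1 : ℝ))) :=
          fun hh => hdir ⟨hmeq', hreq', hh⟩
        rcases hε with rfl | rfl
        · have hX : ((f t₁).2.1 : ℝ) < ((f t₂).2.1 : ℝ) := by
            rcases lt_or_gt_of_ne hjne with h' | h'
            · exact h'
            · exact absurd (by linarith : (0:ℝ) < 1 * (((f t₁).2.1 : ℝ) - ((f t₂).2.1 : ℝ))) hnd
          exact alg2 ha0 ha1 hj1m.1 hj1m.2 hj2m.1 hj2m.2 hX
        · have hX : ((f t₂).2.1 : ℝ) < ((f t₁).2.1 : ℝ) := by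
            rcases lt_or_gt_of_ne hjne with h' | h'
            · exact absurd (by linarith : (0:ℝ) < (-1) * (((f t₁).2.1 : ℝ) - ((f t₂).2.1 : ℝ))) hnd
            · exact h'
          exact alg2' ha0 ha1 hj1m.1 hj1m.2 hj2m.1 hj2m.2 hX
      · -- middle third or later : aa s = 1
        rw [aa_of_gt h3s]
        exact alg3 hε
    · -- last third : bb s = 1, so the time coordinates differ
      exfalso
      rw [trw, trw, bb_of_cc_pos hcpos] at hθeq
      have : (t₁ : ℝ) = (t₂ : ℝ) := by linarith
      exact absurd this (ne_of_lt h12)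
  have hgne : g t₁ ≠ g t₂ := by
    intro h
    have h1 := congrArg Prod.fst h
    have h2 := congrArg (fun p : M × ↥JJ × ↥I => p.2.2) h
    have h3 := congrArg (fun p : M × ↥JJ × ↥I => ((p.2.1 : ↥JJ) : ℝ)) h
    have hk := key h1 h2
    rw [h3, sub_self, mul_zero] at hk
    exact lt_irrefl 0 hk
  have hgdir : ¬ Dir ε (g t₁) (g t₂) := by
    rintro ⟨hm', ht', hlt⟩
    have hk := key hm' ht'
    linarith [hk, hlt]
  exact ⟨⟨bcond, germ, hgne⟩, hgdir⟩

theorem aux {M : Type} [TopologicalSpace M] (star : M) (t₁ t₂ : ↥I)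
    (h0 : (0:ℝ) < (t₁ : ℝ)) (h12 : (t₁ : ℝ) < (t₂ : ℝ)) (h1 : (t₂ : ℝ) < 1)
    {ε : ℝ} (hε : ε = 1 ∨ ε = -1) :
    ContractibleSpace
      {f : C(↥I, M × ↥JJ × ↥I) // ECond star t₁ t₂ f ∧ ¬ Dir ε (f t₁) (f t₂)} := by
  set d : ℝ := min (t₁ : ℝ) ((t₂ : ℝ) - (t₁ : ℝ)) / 2 with hdd
  have hd : 0 < d := div_pos (lt_min h0 (by linarith)) two_pos
  have hdt : d < (t₁ : ℝ) := by
    have h' := min_le_left (t₁ : ℝ) ((t₂ : ℝ) - (t₁ : ℝ))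
    rw [hdd]; linarith
  have h12d : 2 * d ≤ (t₂ : ℝ) - (t₁ : ℝ) := by
    have h' := min_le_right (t₁ : ℝ) ((t₂ : ℝ) - (t₁ : ℝ))
    rw [hdd]; linarith
  let f₀ : C(↥I, M × ↥JJ × ↥I) :=
    ⟨fun t => (star, jzero, t),
     continuous_const.prodMk (continuous_const.prodMk continuous_id)⟩
  have hf₀ : ECond star t₁ t₂ f₀ ∧ ¬ Dir ε (f₀ t₁) (f₀ t₂) := by
    have ht12 : t₁ ≠ t₂ := fun h => absurd (congrArg Subtype.val h) (ne_of_lt h12)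
    refine ⟨⟨fun t => ⟨Iff.rfl, Iff.rfl⟩, ⟨Set.univ, Filter.univ_mem, fun t _ => rfl⟩, ?_⟩, ?_⟩
    · intro h
      exact ht12 (congrArg (fun p : M × ↥JJ × ↥I => p.2.2) h)
    · rintro ⟨-, h2, -⟩
      exact ht12 h2
  let X := {f : C(↥I, M × ↥JJ × ↥I) // ECond star t₁ t₂ f ∧ ¬ Dir ε (f t₁) (f t₂)}
  let G0 : C((↥I × X) × ↥I, M × ↥JJ × ↥I) :=
    ⟨fun q => hmap ε d t₁ t₂ (q.1.2 : C(↥I, M × ↥JJ × ↥I)) q.1.1 q.2,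
     hmap_cont ε d t₁ t₂ (fun p : ↥I × X => (p.2 : C(↥I, M × ↥JJ × ↥I)))
       (continuous_subtype_val.comp continuous_snd) Prod.fst continuous_fst⟩
  have hmem : ∀ p : ↥I × X, ECond star t₁ t₂ (G0.curry p) ∧
      ¬ Dir ε ((G0.curry p) t₁) ((G0.curry p) t₂) :=
    fun p => hmap_mem h0 h12 h1 hε hd hdt h12d p.2.2 p.1 (G0.curry p) (fun t => rfl)
  rw [contractible_iff_id_nullhomotopic]
  refine ⟨⟨f₀, hf₀⟩, ⟨?_⟩⟩
  exact
  { toFun := fun p => ⟨G0.curry p, hmem p⟩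
    continuous_toFun := (map_continuous G0.curry).subtype_mk _
    map_zero_left := fun x => by
      apply Subtype.ext
      apply ContinuousMap.ext
      intro t
      exact hmap_zero ε d t₁ t₂ (x : C(↥I, M × ↥JJ × ↥I)) t
    map_one_left := fun x => by
      apply Subtype.ext
      apply ContinuousMap.ext
      intro t
      have hstd0 : (x : C(↥I, M × ↥JJ × ↥I)) 0 = (star, jzero, 0) := by
        obtain ⟨U, hU, hstd⟩ := x.2.1.2.1
        exact hstd 0 (mem_of_mem_nhds hU)
      exact hmap_one hd hdt h12 _ hstd0 t }

end S9

theorem statement9 {M : Type} [TopologicalSpace M] (star : M) (t₁ t₂ : ↥I)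
    (h0 : (0:ℝ) < (t₁ : ℝ)) (h12 : (t₁ : ℝ) < (t₂ : ℝ)) (h1 : (t₂ : ℝ) < 1) :
    ContractibleSpace
      {f : C(↥I, M × ↥JJ × ↥I) // ECond star t₁ t₂ f ∧ ¬ DirRight (f t₁) (f t₂)} ∧
    ContractibleSpace
      {f : C(↥I, M × ↥JJ × ↥I) // ECond star t₁ t₂ f ∧ ¬ DirLeft (f t₁) (f t₂)} := by
  have hDR : (DirRight : M × ↥JJ × ↥I → M × ↥JJ × ↥I → Prop) = S9.Dir 1 := by
    funext p q
    apply propext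
    constructor
    · rintro ⟨a, b, c⟩; exact ⟨a, b, by rw [one_mul]; linarith⟩
    · rintro ⟨a, b, c⟩; rw [one_mul] at c; exact ⟨a, b, by linarith⟩
  have hDL : (DirLeft : M × ↥JJ × ↥I → M × ↥JJ × ↥I → Prop) = S9.Dir (-1) := by
    funext p q
    apply propext
    constructor
    · rintro ⟨a, b, c⟩; exact ⟨a, b, by linarith⟩
    · rintro ⟨a, b, c⟩; exact ⟨a, b, by linarith⟩
  constructor
  · rw [hDR]
    exact S9.aux star t₁ t₂ h0 h12 h1 (Or.inl rfl)
  · rw [hDL]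
    exact S9.aux star t₁ t₂ h0 h12 h1 (Or.inr rfl)
end
end

section
/- (Continuity of the stabilisation map, Section 2.2 of 'Stability of concordance embeddings', continuous analogue.) If P is compact Hausdorff, then the assignment e ↦ σ(e) defines a continuous map σ : CF(P,M) → CF(P×J, M×J), where CF(P×J, M×J) is the space of continuous concordance maps of P×J in M×J relative to (A×J) ∪ (P×{−1,1}), both mapping spaces carrying the compact-open topology; moreover σ restricts to a map between the subspaces of injective concordance maps. -/
/-!
STATEMENT 13: continuity of the stabilisation map
`σ : CF(P,M) → CF(P×J, M×J)` (compact-open topologies), for `P` compact Hausdorff; moreover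
`σ` restricts to a map between the subspaces of injective concordance maps.
-/
open Set unitInterval Topology

noncomputable section

namespace Stab13
-- [rho/rr part assumed: inline it]
def rho (s t : ℝ) : ℝ := Real.sqrt (s ^ 2 + (1 - t) ^ 2)
lemma rho_nonneg (s t : ℝ) : 0 ≤ rho s t := Real.sqrt_nonneg _
lemma sq_rho (s t : ℝ) : rho s t ^ 2 = s ^ 2 + (1 - t) ^ 2 := Real.sq_sqrt (by positivity)
lemma abs_le_rho (s t : ℝ) : |s| ≤ rho s t := by
  rw [rho, ← Real.sqrt_sq_eq_abs]
  exact Real.sqrt_le_sqrt (by nlinarith [sq_nonneg (1 - t)])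
lemma abs_le_rho' (s t : ℝ) : |1 - t| ≤ rho s t := by
  rw [rho, ← Real.sqrt_sq_eq_abs]
  exact Real.sqrt_le_sqrt (by nlinarith [sq_nonneg s])
lemma rho_eq_zero (s t : ℝ) : rho s t = 0 ↔ s = 0 ∧ t = 1 := by
  rw [rho, Real.sqrt_eq_zero (by positivity)]
  constructor
  · intro h; constructor <;> nlinarith [sq_nonneg s, sq_nonneg (1 - t)]
  · rintro ⟨h1, h2⟩; simp [h1, h2]
lemma continuous_rho : Continuous fun z : ℝ × ℝ => rho z.1 z.2 :=
  Real.continuous_sqrt.comp (by continuity)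
def rr (s t : ℝ) : ℝ := max 0 (1 - rho s t)
lemma rr_mem (s t : ℝ) : rr s t ∈ I :=
  ⟨le_max_left _ _, max_le zero_le_one (by linarith [rho_nonneg s t])⟩
lemma continuous_rr : Continuous fun z : ℝ × ℝ => rr z.1 z.2 :=
  continuous_const.max (continuous_const.sub continuous_rho)
lemma rr_eq_zero (s t : ℝ) : rr s t = 0 ↔ 1 ≤ rho s t := by
  rw [rr, max_eq_left_iff]; constructor <;> intro h <;> linarith
lemma rr_eq_one (s t : ℝ) : rr s t = 1 ↔ rho s t = 0 := by
  constructor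
  · intro h
    rcases max_choice 0 (1 - rho s t) with h' | h' <;> rw [rr] at h <;> rw [h'] at h <;> linarith
  · intro h; rw [rr, h]; simp
lemma rr_of_le_one (s t : ℝ) (h : rho s t ≤ 1) : rr s t = 1 - rho s t :=
  max_eq_right (by linarith)
lemma abs_div_rho_le (s t num : ℝ) (h : |num| ≤ rho s t) : |num / rho s t| ≤ 1 := by
  rcases eq_or_lt_of_le (rho_nonneg s t) with h0 | h0
  · simp [← h0]
  · rw [abs_div, abs_of_pos h0, div_le_one h0]; exact h
lemma div_rho_nonneg_le (s t num : ℝ) (h0 : 0 ≤ num) (h : num ≤ rho s t) :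
    num / rho s t ∈ Icc (0:ℝ) 1 := by
  rcases eq_or_lt_of_le (rho_nonneg s t) with hr | hr
  · simp [← hr]
  · exact ⟨div_nonneg h0 (le_of_lt hr), (div_le_one hr).mpr h⟩

theorem continuous_mul_of_bound {Z : Type*} [TopologicalSpace Z] {f g : Z → ℝ}
    (hf : Continuous f) (hb : ∀ z, |g z| ≤ 1)
    (hg : ∀ z, f z ≠ 0 → ContinuousAt g z) :
    Continuous fun z => f z * g z := by
  rw [continuous_iff_continuousAt]; intro z₀
  by_cases h : f z₀ = 0
  · have ht : Filter.Tendsto (fun z => f z * g z) (nhds z₀) (nhds 0) := by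
      apply squeeze_zero_norm (a := fun z => |f z|)
      · intro z
        rw [Real.norm_eq_abs, abs_mul]
        calc |f z| * |g z| ≤ |f z| * 1 := mul_le_mul_of_nonneg_left (hb z) (abs_nonneg _)
          _ = |f z| := mul_one _
      · have h2 : Filter.Tendsto (fun z => |f z|) (nhds z₀) (nhds |f z₀|) := (hf.abs.tendsto z₀)
        simpa [h] using h2
    unfold ContinuousAt
    simpa [h] using ht
  · exact (hf.continuousAt).mul (hg z₀ h)

variable {M : Type} [TopologicalSpace M] {P A : Set M}

def qmap (x : ↥P × ↥JJ × ↥I) : ↥P × ↥I :=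
  (x.1, ⟨rr (x.2.1 : ℝ) (x.2.2 : ℝ), rr_mem _ _⟩)

lemma continuous_coe_s : Continuous (fun x : ↥P × ↥JJ × ↥I => (x.2.1 : ℝ)) :=
  continuous_subtype_val.comp (continuous_fst.comp continuous_snd)
lemma continuous_coe_t : Continuous (fun x : ↥P × ↥JJ × ↥I => (x.2.2 : ℝ)) :=
  continuous_subtype_val.comp (continuous_snd.comp continuous_snd)
lemma continuous_rho' : Continuous (fun x : ↥P × ↥JJ × ↥I => rho (x.2.1 : ℝ) (x.2.2 : ℝ)) := by
  unfold rho; fun_prop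
lemma continuous_rr' : Continuous (fun x : ↥P × ↥JJ × ↥I => rr (x.2.1 : ℝ) (x.2.2 : ℝ)) := by
  unfold rr rho; fun_prop
lemma continuous_qmap : Continuous (qmap (P := P)) := by
  unfold qmap
  exact continuous_fst.prodMk (continuous_rr'.subtype_mk _)

variable (φ : C(↥P × ↥I, M × ↥I))

def uF (x : ↥P × ↥JJ × ↥I) : ℝ := ((φ (qmap x)).2 : ℝ)

def aF (x : ↥P × ↥JJ × ↥I) : ℝ :=
  if rho (x.2.1 : ℝ) (x.2.2 : ℝ) ≤ 1 then
    (1 - uF φ x) * ((x.2.1 : ℝ) / rho (x.2.1 : ℝ) (x.2.2 : ℝ))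
  else (x.2.1 : ℝ)

def bF (x : ↥P × ↥JJ × ↥I) : ℝ :=
  if rho (x.2.1 : ℝ) (x.2.2 : ℝ) ≤ 1 then
    1 - (1 - uF φ x) * ((1 - (x.2.2 : ℝ)) / rho (x.2.1 : ℝ) (x.2.2 : ℝ))
  else (x.2.2 : ℝ)

lemma uF_mem (x : ↥P × ↥JJ × ↥I) : uF φ x ∈ I := (φ (qmap x)).2.2

lemma aF_mem (x : ↥P × ↥JJ × ↥I) : aF φ x ∈ JJ := by
  rw [aF]; split
  · obtain ⟨hu0, hu1⟩ := Set.mem_Icc.mp (uF_mem φ x)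
    obtain ⟨hc1, hc2⟩ := abs_le.mp (abs_div_rho_le (x.2.1 : ℝ) (x.2.2 : ℝ) (x.2.1 : ℝ) (abs_le_rho _ _))
    constructor
    · nlinarith
    · nlinarith
  · exact x.2.1.2

lemma bF_mem (x : ↥P × ↥JJ × ↥I) : bF φ x ∈ I := by
  rw [bF]; split
  · obtain ⟨hu0, hu1⟩ := Set.mem_Icc.mp (uF_mem φ x)
    have ht1 : (x.2.2 : ℝ) ≤ 1 := x.2.2.2.2
    have habs : |1 - (x.2.2:ℝ)| = 1 - (x.2.2:ℝ) := abs_of_nonneg (by linarith)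
    obtain ⟨hd0, hd1⟩ := div_rho_nonneg_le (x.2.1 : ℝ) (x.2.2 : ℝ) (1 - (x.2.2 : ℝ))
      (by linarith) (habs ▸ abs_le_rho' (x.2.1:ℝ) (x.2.2:ℝ))
    constructor
    · nlinarith
    · nlinarith
  · exact x.2.2.2

def FF (x : ↥P × ↥JJ × ↥I) : M × ↥JJ × ↥I :=
  ((φ (qmap x)).1, ⟨aF φ x, aF_mem φ x⟩, ⟨bF φ x, bF_mem φ x⟩)

-- pointwise facts from IsConcMap
variable {φ}

lemma phi_zero (hφ : IsConcMap P A ⇑φ) (p : ↥P) : φ (p, 0) = ((p : M), 0) := by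
  obtain ⟨U, hUo, hUs, hUid⟩ := hφ.2.2
  exact hUid _ (hUs (Or.inl rfl))

lemma qmap_of_rho_ge (x : ↥P × ↥JJ × ↥I) (h : 1 ≤ rho (x.2.1:ℝ) (x.2.2:ℝ)) :
    qmap x = (x.1, 0) := by
  refine Prod.ext rfl (Subtype.ext ?_)
  show rr _ _ = ((0 : ↥I) : ℝ)
  simpa using (rr_eq_zero _ _).mpr h

lemma qmap_of_rho_zero (x : ↥P × ↥JJ × ↥I) (h : rho (x.2.1:ℝ) (x.2.2:ℝ) = 0) :
    qmap x = (x.1, 1) := by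
  refine Prod.ext rfl (Subtype.ext ?_)
  show rr _ _ = ((1 : ↥I) : ℝ)
  simpa using (rr_eq_one _ _).mpr h

lemma uF_of_rho_ge (hφ : IsConcMap P A ⇑φ) (x : ↥P × ↥JJ × ↥I)
    (h : 1 ≤ rho (x.2.1:ℝ) (x.2.2:ℝ)) : uF φ x = 0 ∧ (φ (qmap x)).1 = (x.1 : M) := by
  rw [uF, qmap_of_rho_ge x h, phi_zero hφ x.1]
  exact ⟨by simp, rfl⟩

lemma uF_of_rho_zero (hφ : IsConcMap P A ⇑φ) (x : ↥P × ↥JJ × ↥I)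
    (h : rho (x.2.1:ℝ) (x.2.2:ℝ) = 0) : uF φ x = 1 := by
  rw [uF, qmap_of_rho_zero x h]
  have := ((hφ.2.1 (x.1, 1)).2).mpr rfl
  rw [this]; simp

lemma uF_zero_iff (hφ : IsConcMap P A ⇑φ) (x : ↥P × ↥JJ × ↥I) :
    uF φ x = 0 ↔ rr (x.2.1:ℝ) (x.2.2:ℝ) = 0 := by
  have h1 := (hφ.2.1 (qmap x)).1
  rw [Subtype.ext_iff, Subtype.ext_iff] at h1
  simpa [uF, qmap] using h1

lemma uF_one_iff (hφ : IsConcMap P A ⇑φ) (x : ↥P × ↥JJ × ↥I) :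
    uF φ x = 1 ↔ rr (x.2.1:ℝ) (x.2.2:ℝ) = 1 := by
  have h1 := (hφ.2.1 (qmap x)).2
  rw [Subtype.ext_iff, Subtype.ext_iff] at h1
  simpa [uF, qmap] using h1


variable (φ)
lemma sum_sq_of_le (hφ : IsConcMap P A ⇑φ) (x : ↥P × ↥JJ × ↥I)
    (h : rho (x.2.1:ℝ) (x.2.2:ℝ) ≤ 1) :
    (aF φ x) ^ 2 + (1 - bF φ x) ^ 2 = (1 - uF φ x) ^ 2 := by
  rw [aF, bF, if_pos h, if_pos h]
  rcases eq_or_ne (rho (x.2.1:ℝ) (x.2.2:ℝ)) 0 with h0 | h0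
  · rw [uF_of_rho_zero hφ x h0]
    obtain ⟨hs0, ht1⟩ := (rho_eq_zero _ _).mp h0
    simp [hs0, ht1]
  · have hkey : ((x.2.1:ℝ) / rho (x.2.1:ℝ) (x.2.2:ℝ)) ^ 2
        + ((1 - (x.2.2:ℝ)) / rho (x.2.1:ℝ) (x.2.2:ℝ)) ^ 2 = 1 := by
      rw [div_pow, div_pow, ← add_div, div_eq_one_iff_eq (by positivity)]
      exact (sq_rho _ _).symm
    linear_combination (1 - uF φ x) ^ 2 * hkey

lemma sum_sq_of_gt (x : ↥P × ↥JJ × ↥I) (h : ¬ rho (x.2.1:ℝ) (x.2.2:ℝ) ≤ 1) :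
    (aF φ x) ^ 2 + (1 - bF φ x) ^ 2 = rho (x.2.1:ℝ) (x.2.2:ℝ) ^ 2 := by
  rw [aF, bF, if_neg h, if_neg h, sq_rho]

variable {φ}

variable (P A) in
theorem continuous_bigF [LocallyCompactSpace (↥P × ↥I)] :
    Continuous (fun z : {ψ : C(↥P × ↥I, M × ↥I) // IsConcMap P A ⇑ψ} × (↥P × ↥JJ × ↥I) =>
      FF z.1.1 z.2) := by
  have hev : Continuous (fun z : {ψ : C(↥P × ↥I, M × ↥I) // IsConcMap P A ⇑ψ} ×
      (↥P × ↥JJ × ↥I) => z.1.1 (qmap z.2)) := by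
    have h1 : Continuous (fun z : {ψ : C(↥P × ↥I, M × ↥I) // IsConcMap P A ⇑ψ} ×
        (↥P × ↥JJ × ↥I) => ((z.1.1 : C(↥P × ↥I, M × ↥I)), qmap z.2)) :=
      (continuous_subtype_val.comp continuous_fst).prodMk (continuous_qmap.comp continuous_snd)
    exact ContinuousEval.continuous_eval.comp h1
  have hu : Continuous (fun z : {ψ : C(↥P × ↥I, M × ↥I) // IsConcMap P A ⇑ψ} ×
      (↥P × ↥JJ × ↥I) => uF z.1.1 z.2) := by
    unfold uF
    exact continuous_subtype_val.comp (continuous_snd.comp hev)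
  have hρ : Continuous (fun z : {ψ : C(↥P × ↥I, M × ↥I) // IsConcMap P A ⇑ψ} ×
      (↥P × ↥JJ × ↥I) => rho ((z.2.2.1 : ℝ)) ((z.2.2.2 : ℝ))) :=
    continuous_rho'.comp continuous_snd
  have hs : Continuous (fun z : {ψ : C(↥P × ↥I, M × ↥I) // IsConcMap P A ⇑ψ} ×
      (↥P × ↥JJ × ↥I) => (z.2.2.1 : ℝ)) := continuous_coe_s.comp continuous_snd
  have ht : Continuous (fun z : {ψ : C(↥P × ↥I, M × ↥I) // IsConcMap P A ⇑ψ} ×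
      (↥P × ↥JJ × ↥I) => (z.2.2.2 : ℝ)) := continuous_coe_t.comp continuous_snd
  have hρnz : ∀ z : {ψ : C(↥P × ↥I, M × ↥I) // IsConcMap P A ⇑ψ} × (↥P × ↥JJ × ↥I),
      (1 - uF z.1.1 z.2) ≠ 0 → rho ((z.2.2.1 : ℝ)) ((z.2.2.2 : ℝ)) ≠ 0 := by
    intro z hne h0
    exact hne (by rw [uF_of_rho_zero z.1.2 z.2 h0]; ring)
  have ha : Continuous (fun z : {ψ : C(↥P × ↥I, M × ↥I) // IsConcMap P A ⇑ψ} ×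
      (↥P × ↥JJ × ↥I) => aF z.1.1 z.2) := by
    unfold aF
    apply Continuous.if_le ?thenb hs hρ continuous_const ?froneq
    case thenb =>
      exact continuous_mul_of_bound (continuous_const.sub hu)
        (fun z => abs_div_rho_le _ _ _ (abs_le_rho _ _))
        (fun z hne => (hs.continuousAt).div (hρ.continuousAt) (hρnz z hne))
    case froneq =>
      intro z h1
      obtain ⟨hu0, -⟩ := uF_of_rho_ge z.1.2 z.2 (le_of_eq h1.symm)
      rw [hu0, h1]
      norm_num
  have hb : Continuous (fun z : {ψ : C(↥P × ↥I, M × ↥I) // IsConcMap P A ⇑ψ} ×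
      (↥P × ↥JJ × ↥I) => bF z.1.1 z.2) := by
    unfold bF
    apply Continuous.if_le ?thenb ht hρ continuous_const ?froneq
    case thenb =>
      apply continuous_const.sub
      refine continuous_mul_of_bound (continuous_const.sub hu) ?_
        (fun z hne => ((continuous_const.sub ht).continuousAt).div (hρ.continuousAt) (hρnz z hne))
      intro z
      apply abs_div_rho_le
      exact abs_le_rho' _ _
    case froneq =>
      intro z h1
      obtain ⟨hu0, -⟩ := uF_of_rho_ge z.1.2 z.2 (le_of_eq h1.symm)
      rw [hu0, h1]
      norm_num
  unfold FF
  exact (continuous_fst.comp hev).prodMk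
    ((ha.subtype_mk _).prodMk (hb.subtype_mk _))


lemma bF_zero_iff (hφ : IsConcMap P A ⇑φ) (x : ↥P × ↥JJ × ↥I) :
    bF φ x = 0 ↔ (x.2.2 : ℝ) = 0 := by
  have hρ0 := rho_nonneg (x.2.1:ℝ) (x.2.2:ℝ)
  have hsq := sq_rho (x.2.1:ℝ) (x.2.2:ℝ)
  have ht1 : (x.2.2 : ℝ) ≤ 1 := x.2.2.2.2
  have ht0 : (0:ℝ) ≤ (x.2.2 : ℝ) := x.2.2.2.1
  obtain ⟨hu0, hu1⟩ := Set.mem_Icc.mp (uF_mem φ x)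
  rw [bF]; split
  case isTrue h =>
    have habs : |1 - (x.2.2:ℝ)| = 1 - (x.2.2:ℝ) := abs_of_nonneg (by linarith)
    obtain ⟨hd0, hd1⟩ := div_rho_nonneg_le (x.2.1 : ℝ) (x.2.2 : ℝ) (1 - (x.2.2 : ℝ))
      (by linarith) (habs ▸ abs_le_rho' (x.2.1:ℝ) (x.2.2:ℝ))
    constructor
    · intro h0
      have hprod : (1 - uF φ x) * ((1 - (x.2.2:ℝ)) / rho (x.2.1:ℝ) (x.2.2:ℝ)) = 1 := by
        linarith
      have huz : uF φ x = 0 := by nlinarith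
      have hdd : (1 - (x.2.2:ℝ)) / rho (x.2.1:ℝ) (x.2.2:ℝ) = 1 := by
        rw [huz] at hprod; linarith
      have hρ1 : rho (x.2.1:ℝ) (x.2.2:ℝ) = 1 := by
        have := (rr_eq_zero (x.2.1:ℝ) (x.2.2:ℝ)).mp ((uF_zero_iff hφ x).mp huz)
        linarith
      rw [hρ1, div_one] at hdd
      linarith
    · intro ht
      have hρ1 : rho (x.2.1:ℝ) (x.2.2:ℝ) = 1 := by nlinarith [sq_nonneg ((x.2.1:ℝ))]
      have huz : uF φ x = 0 :=
        (uF_zero_iff hφ x).mpr ((rr_eq_zero _ _).mpr (le_of_eq hρ1.symm))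
      rw [huz, hρ1, ht]
      norm_num
  case isFalse h =>
    exact Iff.rfl

lemma bF_one_iff (hφ : IsConcMap P A ⇑φ) (x : ↥P × ↥JJ × ↥I) :
    bF φ x = 1 ↔ (x.2.2 : ℝ) = 1 := by
  rw [bF]; split
  case isTrue h =>
    constructor
    · intro h0
      have hprod : (1 - uF φ x) * ((1 - (x.2.2:ℝ)) / rho (x.2.1:ℝ) (x.2.2:ℝ)) = 0 := by
        linarith
      rcases mul_eq_zero.mp hprod with hc | hc
      · have hu1 : uF φ x = 1 := by linarith
        have := (rr_eq_one (x.2.1:ℝ) (x.2.2:ℝ)).mp ((uF_one_iff hφ x).mp hu1)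
        exact ((rho_eq_zero _ _).mp this).2
      · rcases div_eq_zero_iff.mp hc with hc' | hc'
        · linarith
        · exact ((rho_eq_zero _ _).mp hc').2
    · intro ht
      rw [ht]
      norm_num
  case isFalse h =>
    exact Iff.rfl

theorem isConcMapJ_FF (hφ : IsConcMap P A ⇑φ) (hc : Continuous (FF φ)) :
    IsConcMapJ P A (FF φ) := by
  refine ⟨hc, ?_, ?_⟩
  · intro x
    constructor
    · rw [show (FF φ x).2.2 = ⟨bF φ x, bF_mem φ x⟩ from rfl, Subtype.ext_iff, Subtype.ext_iff]
      simpa using bF_zero_iff hφ x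
    · rw [show (FF φ x).2.2 = ⟨bF φ x, bF_mem φ x⟩ from rfl, Subtype.ext_iff, Subtype.ext_iff]
      simpa using bF_one_iff hφ x
  · obtain ⟨V, hVo, hVs, hVid⟩ := hφ.2.2
    refine ⟨qmap ⁻¹' V, hVo.preimage continuous_qmap, ?_, ?_⟩
    · rintro x (hx | hx)
      · have ht0 : (x.2.2 : ℝ) = 0 := by
          rw [show x.2.2 = 0 from hx]; simp
        have hge : 1 ≤ rho (x.2.1:ℝ) (x.2.2:ℝ) := by
          nlinarith [sq_rho (x.2.1:ℝ) (x.2.2:ℝ), rho_nonneg (x.2.1:ℝ) (x.2.2:ℝ),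
            sq_nonneg ((x.2.1:ℝ))]
        have hq := qmap_of_rho_ge x hge
        show qmap x ∈ V
        rw [hq]
        exact hVs (Or.inl rfl)
      · rcases hx with hA | hs1 | hs1
        · exact hVs (Or.inr hA)
        · have hge : 1 ≤ rho (x.2.1:ℝ) (x.2.2:ℝ) := by
            nlinarith [sq_rho (x.2.1:ℝ) (x.2.2:ℝ), rho_nonneg (x.2.1:ℝ) (x.2.2:ℝ),
              sq_nonneg (1 - (x.2.2:ℝ))]
          have hq := qmap_of_rho_ge x hge
          show qmap x ∈ V
          rw [hq]
          exact hVs (Or.inl rfl)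
        · have hge : 1 ≤ rho (x.2.1:ℝ) (x.2.2:ℝ) := by
            nlinarith [sq_rho (x.2.1:ℝ) (x.2.2:ℝ), rho_nonneg (x.2.1:ℝ) (x.2.2:ℝ),
              sq_nonneg (1 - (x.2.2:ℝ))]
          have hq := qmap_of_rho_ge x hge
          show qmap x ∈ V
          rw [hq]
          exact hVs (Or.inl rfl)
    · intro x hx
      have hφq : φ (qmap x) = ((x.1 : M), (qmap x).2) := hVid _ hx
      have hu : uF φ x = rr (x.2.1:ℝ) (x.2.2:ℝ) := by
        rw [uF, hφq]; rfl
      refine Prod.ext ?_ (Prod.ext (Subtype.ext ?_) (Subtype.ext ?_))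
      · show (φ (qmap x)).1 = (x.1 : M)
        rw [hφq]
      · show aF φ x = (x.2.1 : ℝ)
        rw [aF]; split
        case isTrue h =>
          rw [hu, rr_of_le_one _ _ h]
          rcases eq_or_ne (rho (x.2.1:ℝ) (x.2.2:ℝ)) 0 with h0 | h0
          · obtain ⟨hs0, -⟩ := (rho_eq_zero _ _).mp h0
            rw [h0, hs0]
            norm_num
          · field_simp
            ring
        case isFalse h => rfl
      · show bF φ x = (x.2.2 : ℝ)
        rw [bF]; split
        case isTrue h =>
          rw [hu, rr_of_le_one _ _ h]
          rcases eq_or_ne (rho (x.2.1:ℝ) (x.2.2:ℝ)) 0 with h0 | h0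
          · obtain ⟨-, ht1⟩ := (rho_eq_zero _ _).mp h0
            rw [h0, ht1]
            norm_num
          · field_simp
            ring
        case isFalse h => rfl


theorem isSigmaOf_FF (hφ : IsConcMap P A ⇑φ) : IsSigmaOf P ⇑φ (FF φ) := by
  constructor
  · rintro p s t r θ hθ hst
    have hcos : (s : ℝ) = (1 - (r:ℝ)) * Real.cos (θ + Real.pi) := congrArg Prod.fst hst
    have hsin : (t : ℝ) = (1 - (r:ℝ)) * Real.sin (θ + Real.pi) + 1 := congrArg Prod.snd hst
    have hr1 : (r:ℝ) ≤ 1 := r.2.2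
    have hr0 : (0:ℝ) ≤ (r:ℝ) := r.2.1
    have hρ : rho (s:ℝ) (t:ℝ) = 1 - (r:ℝ) := by
      rw [rho, hcos, hsin]
      have hpy := Real.sin_sq_add_cos_sq (θ + Real.pi)
      have hx : ((1-(r:ℝ)) * Real.cos (θ+Real.pi))^2
          + (1 - ((1-(r:ℝ)) * Real.sin (θ+Real.pi) + 1))^2 = (1-(r:ℝ))^2 := by
        nlinarith [hpy]
      rw [hx]
      exact Real.sqrt_sq (by linarith)
    have hrr : rr (s:ℝ) (t:ℝ) = (r:ℝ) := by
      rw [rr, hρ]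
      simp [max_eq_right hr0]
    have hq : qmap (p, s, t) = (p, r) := Prod.ext rfl (Subtype.ext hrr)
    have hu : uF φ (p, s, t) = ((φ (p, r)).2 : ℝ) := by rw [uF, hq]
    have hρle : rho (s:ℝ) (t:ℝ) ≤ 1 := by rw [hρ]; linarith
    obtain ⟨hu0, hu1⟩ := Set.mem_Icc.mp (uF_mem φ (p, s, t))
    constructor
    · show (φ (qmap (p, s, t))).1 = _
      rw [hq]
    · show (aF φ (p, s, t), bF φ (p, s, t)) = Lam (((φ (p, r)).2 : ℝ), θ)
      rcases eq_or_lt_of_le hr1 with hre | hrlt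
      · -- r = 1 : centre
        have hρ0 : rho (s:ℝ) (t:ℝ) = 0 := by rw [hρ, ← hre]; ring
        have huv : uF φ (p, s, t) = 1 := uF_of_rho_zero hφ (p, s, t) hρ0
        have huv' : ((φ (p, r)).2 : ℝ) = 1 := by rw [← hu]; exact huv
        rw [aF, bF, if_pos hρle, if_pos hρle, huv, huv']
        simp [Lam]
      · -- r < 1
        have hρne : rho (s:ℝ) (t:ℝ) ≠ 0 := by rw [hρ]; intro h; linarith
        rw [aF, bF, if_pos hρle, if_pos hρle, hu]
        have hrne : (1:ℝ) - (r:ℝ) ≠ 0 := by linarith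
        have h1 : (s:ℝ) / rho (s:ℝ) (t:ℝ) = Real.cos (θ + Real.pi) := by
          rw [hρ, hcos]
          field_simp
        have h2 : (1 - (t:ℝ)) / rho (s:ℝ) (t:ℝ) = - Real.sin (θ + Real.pi) := by
          rw [hρ, hsin]
          field_simp
          ring
        rw [h1, h2, Lam]
        refine Prod.ext rfl ?_
        show 1 - (1 - ((φ (p, r)).2:ℝ)) * -Real.sin (θ + Real.pi)
            = (1 - ((φ (p, r)).2:ℝ)) * Real.sin (θ + Real.pi) + 1
        ring
  · rintro p s t hD2
    obtain ⟨-, -, hge⟩ := hD2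
    have hρ : 1 ≤ rho (s:ℝ) (t:ℝ) := by
      nlinarith [sq_rho (s:ℝ) (t:ℝ), rho_nonneg (s:ℝ) (t:ℝ)]
    obtain ⟨hu0, hm⟩ := uF_of_rho_ge hφ (p, s, t) hρ
    refine Prod.ext hm (Prod.ext (Subtype.ext ?_) (Subtype.ext ?_))
    · show aF φ (p, s, t) = (s : ℝ)
      rw [aF]; split
      case isTrue h =>
        have hρ1 : rho (s:ℝ) (t:ℝ) = 1 := le_antisymm h hρ
        rw [hu0, hρ1]
        norm_num
      case isFalse h => rfl
    · show bF φ (p, s, t) = (t : ℝ)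
      rw [bF]; split
      case isTrue h =>
        have hρ1 : rho (s:ℝ) (t:ℝ) = 1 := le_antisymm h hρ
        rw [hu0, hρ1]
        norm_num
      case isFalse h => rfl

theorem injective_FF (hφ : IsConcMap P A ⇑φ) (hinj : Function.Injective ⇑φ) :
    Function.Injective (FF φ) := by
  intro x x' h
  have hm : (φ (qmap x)).1 = (φ (qmap x')).1 := congrArg (fun y : M × ↥JJ × ↥I => y.1) h
  have hA : aF φ x = aF φ x' := congrArg (fun y : M × ↥JJ × ↥I => (y.2.1 : ℝ)) h
  have hB : bF φ x = bF φ x' := congrArg (fun y : M × ↥JJ × ↥I => (y.2.2 : ℝ)) h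
  obtain ⟨hu0, hu1⟩ := Set.mem_Icc.mp (uF_mem φ x)
  obtain ⟨hu0', hu1'⟩ := Set.mem_Icc.mp (uF_mem φ x')
  have hρ0 := rho_nonneg (x.2.1:ℝ) (x.2.2:ℝ)
  have hρ0' := rho_nonneg (x'.2.1:ℝ) (x'.2.2:ℝ)
  by_cases h1 : rho (x.2.1:ℝ) (x.2.2:ℝ) ≤ 1 <;> by_cases h2 : rho (x'.2.1:ℝ) (x'.2.2:ℝ) ≤ 1
  · -- both in the disc
    have hsum : (1 - uF φ x) ^ 2 = (1 - uF φ x') ^ 2 := by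
      rw [← sum_sq_of_le φ hφ x h1, ← sum_sq_of_le φ hφ x' h2, hA, hB]
    have huu : uF φ x = uF φ x' := by
      have e1 : (1 : ℝ) - uF φ x = 1 - uF φ x' := by
        rw [← Real.sqrt_sq (by linarith : (0:ℝ) ≤ 1 - uF φ x), hsum,
          Real.sqrt_sq (by linarith : (0:ℝ) ≤ 1 - uF φ x')]
      linarith
    have hq : φ (qmap x) = φ (qmap x') := Prod.ext hm (Subtype.ext huu)
    have hqq := hinj hq
    have hp : x.1 = x'.1 := congrArg (fun y : ↥P × ↥I => y.1) hqq
    have hrr : rr (x.2.1:ℝ) (x.2.2:ℝ) = rr (x'.2.1:ℝ) (x'.2.2:ℝ) :=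
      congrArg (fun y : ↥P × ↥I => (y.2 : ℝ)) hqq
    have hρρ : rho (x.2.1:ℝ) (x.2.2:ℝ) = rho (x'.2.1:ℝ) (x'.2.2:ℝ) := by
      rw [rr_of_le_one _ _ h1, rr_of_le_one _ _ h2] at hrr
      linarith
    rcases eq_or_ne (rho (x.2.1:ℝ) (x.2.2:ℝ)) 0 with hz | hz
    · obtain ⟨hs0, ht1⟩ := (rho_eq_zero _ _).mp hz
      obtain ⟨hs0', ht1'⟩ := (rho_eq_zero _ _).mp (hρρ ▸ hz)
      exact Prod.ext hp (Prod.ext (Subtype.ext (hs0.trans hs0'.symm))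
        (Subtype.ext (ht1.trans ht1'.symm)))
    · have hune : (1 : ℝ) - uF φ x ≠ 0 := by
        intro hc
        have hu1' : uF φ x = 1 := by linarith
        exact hz ((rr_eq_one _ _).mp ((uF_one_iff hφ x).mp hu1'))
      rw [aF, aF, if_pos h1, if_pos h2, ← huu, ← hρρ] at hA
      rw [bF, bF, if_pos h1, if_pos h2, ← huu, ← hρρ] at hB
      have hss : (x.2.1 : ℝ) = (x'.2.1 : ℝ) := by
        have := mul_left_cancel₀ hune hA
        field_simp at this
        exact this
      have htt : (x.2.2 : ℝ) = (x'.2.2 : ℝ) := by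
        have hB' : (1 - uF φ x) * ((1 - (x.2.2:ℝ)) / rho (x.2.1:ℝ) (x.2.2:ℝ))
            = (1 - uF φ x) * ((1 - (x'.2.2:ℝ)) / rho (x.2.1:ℝ) (x.2.2:ℝ)) := by linarith
        have := mul_left_cancel₀ hune hB'
        field_simp at this
        linarith
      exact Prod.ext hp (Prod.ext (Subtype.ext hss) (Subtype.ext htt))
  · -- disc vs outside : impossible
    exfalso
    have e1 := sum_sq_of_le φ hφ x h1
    have e2 := sum_sq_of_gt φ x' h2
    rw [hA, hB, e2] at e1
    nlinarith
  · exfalso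
    have e1 := sum_sq_of_gt φ x h1
    have e2 := sum_sq_of_le φ hφ x' h2
    rw [hA, hB, e2] at e1
    nlinarith
  · -- both outside : identity
    obtain ⟨hz0, hm1⟩ := uF_of_rho_ge hφ x (le_of_not_ge h1)
    obtain ⟨hz0', hm1'⟩ := uF_of_rho_ge hφ x' (le_of_not_ge h2)
    have hp : x.1 = x'.1 := by
      have := hm
      rw [hm1, hm1'] at this
      exact Subtype.ext this
    rw [aF, aF, if_neg h1, if_neg h2] at hA
    rw [bF, bF, if_neg h1, if_neg h2] at hB
    exact Prod.ext hp (Prod.ext (Subtype.ext hA) (Subtype.ext hB))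

end Stab13

theorem statement13 {M : Type} [TopologicalSpace M] (P A : Set M) (hAP : A ⊆ P)
    (hPcompact : IsCompact P) (hPt2 : T2Space ↥P) :
    -- there is a map S = σ from CF(P,M) to CF(P×J, M×J) (the latter relative to
    -- (A×J) ∪ (P×{−1,1})), whose values are given by the two defining clauses of the
    -- stabilisation map, such that
    ∃ S : {φ : C(↥P × ↥I, M × ↥I) // IsConcMap P A ⇑φ} →
          {F : C(↥P × ↥JJ × ↥I, M × ↥JJ × ↥I) // IsConcMapJ P A ⇑F},
      (∀ φ : {φ : C(↥P × ↥I, M × ↥I) // IsConcMap P A ⇑φ},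
        IsSigmaOf P ⇑φ.1 ⇑(S φ).1) ∧
      -- S is continuous, and
      Continuous S ∧
      -- S restricts to a map between the subspaces of injective concordance maps
      (∀ φ : {φ : C(↥P × ↥I, M × ↥I) // IsConcMap P A ⇑φ},
        Function.Injective ⇑φ.1 → Function.Injective ⇑(S φ).1) := by
  haveI := hPt2
  haveI : CompactSpace ↥P := isCompact_iff_compactSpace.mp hPcompact
  haveI : LocallyCompactSpace (↥P × ↥I) := inferInstance
  let Hc : C({φ : C(↥P × ↥I, M × ↥I) // IsConcMap P A ⇑φ} × (↥P × ↥JJ × ↥I),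
      M × ↥JJ × ↥I) := ⟨fun z => Stab13.FF z.1.1 z.2, Stab13.continuous_bigF P A⟩
  let K := ContinuousMap.curry Hc
  have hKcoe : ∀ φ : {φ : C(↥P × ↥I, M × ↥I) // IsConcMap P A ⇑φ},
      ⇑(K φ) = Stab13.FF φ.1 := fun φ => rfl
  refine ⟨fun φ => ⟨K φ, by
      rw [hKcoe]
      exact Stab13.isConcMapJ_FF φ.2 ((hKcoe φ) ▸ (K φ).continuous)⟩, ?_, ?_, ?_⟩
  · intro φ
    show IsSigmaOf P ⇑φ.1 ⇑(K φ)
    rw [hKcoe]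
    exact Stab13.isSigmaOf_FF φ.2
  · exact Continuous.subtype_mk K.continuous _
  · intro φ hinjφ
    show Function.Injective ⇑(K φ)
    rw [hKcoe]
    exact Stab13.injective_FF φ.2 hinjφ
end
end
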